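/- arXiv:1503.02278 — 9 statements merged into one kernel-verified Lean document; each statement's English description precedes it below -/
import Mathlib

section
/- For all real numbers c₂ ∈ (0,1), q ∈ (0,1), l₀₀ ∈ [0,1), f ∈ [0,1] with l₀₀ ≤ f, and t ∈ [0,1], setting c₁ = (1−c₂)/(1 − l₀₀(1 − c₂ q)), one has c₁·c₂·q²·f + c₁·q·(1−f) + c₂·q·t ≤ q. -/
open Set

/-- The algebraic inequality underlying the error control proofs: with
`c₁ = (1 − c₂)/(1 − l₀₀(1 − c₂q))`, for any `f ∈ [0,1]` with `l₀₀ ≤ f` and any `t ∈ [0,1]`,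
`c₁c₂q²f + c₁q(1−f) + c₂qt ≤ q`. -/
theorem stmt0 (c₂ q l₀₀ f t : ℝ)
    (hc₂ : c₂ ∈ Ioo (0:ℝ) 1) (hq : q ∈ Ioo (0:ℝ) 1) (hl : l₀₀ ∈ Ico (0:ℝ) 1)
    (hf : f ∈ Icc (0:ℝ) 1) (hlf : l₀₀ ≤ f) (ht : t ∈ Icc (0:ℝ) 1)
    (c₁ : ℝ) (hc₁ : c₁ = (1 - c₂) / (1 - l₀₀ * (1 - c₂ * q))) :
    c₁ * c₂ * q ^ 2 * f + c₁ * q * (1 - f) + c₂ * q * t ≤ q := by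
  obtain ⟨hc0, hc1⟩ := hc₂
  obtain ⟨hq0, hq1⟩ := hq
  obtain ⟨hl0, hl1⟩ := hl
  obtain ⟨hf0, hf1⟩ := hf
  obtain ⟨ht0, ht1⟩ := ht
  have hcq : 0 < c₂ * q := mul_pos hc0 hq0
  have hcq1 : c₂ * q < 1 := by nlinarith
  have hD : 0 < 1 - l₀₀ * (1 - c₂ * q) := by nlinarith [mul_nonneg hl0 hcq.le]
  have key : c₁ * (1 - f * (1 - c₂ * q)) ≤ 1 - c₂ := by
    rw [hc₁, div_mul_eq_mul_div, div_le_iff₀ hD]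
    nlinarith [mul_nonneg (mul_nonneg (sub_nonneg.2 hlf) (by linarith : (0:ℝ) ≤ 1 - c₂ * q)) (by linarith : (0:ℝ) ≤ 1 - c₂)]
  nlinarith [mul_le_mul_of_nonneg_right key hq0.le,
    mul_nonneg hcq.le (by linarith : (0:ℝ) ≤ 1 - t)]
end

section
/- Fix integers m ≥ 1 and R₁ with 1 ≤ R₁ ≤ m, parameters l₀₀ ∈ [0,1) and c₂ ∈ (0,1), and p₁, p₂ ∈ [0,1] with max(p₁,p₂) > 0. Define c₁(x) = (1−c₂)/(1 − l₀₀(1 − c₂ x)) for x ∈ (0,1), e(x) = max( p₁/c₁(x), R₁·p₂/(m·c₂) ), and f(x) = m·e(x). Then f is continuous on (0,1), the function x ↦ f(x)/x is strictly decreasing on (0,1), and the equation f(x) = x has at most one solution x ∈ (0,1). -/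
open Set

private lemma stmt1_aux_anti (m : ℝ) (hm : 0 < m) (l₀₀ c₂ p₁ B : ℝ)
    (hl0 : 0 ≤ l₀₀) (hl1 : l₀₀ < 1) (hc0 : 0 < c₂) (hc1 : c₂ < 1)
    (hp1 : 0 ≤ p₁) (hB0 : 0 ≤ B) (hor : 0 < p₁ ∨ 0 < B) :
    StrictAntiOn (fun x => m * max (p₁ * (1 - l₀₀ * (1 - c₂ * x)) / (1 - c₂)) B / x)
      (Ioo (0:ℝ) 1) := by
  have hc2 : (0:ℝ) < 1 - c₂ := by linarith
  intro x hx y hy hxy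
  have hx0 := hx.1
  have hy0 := hy.1
  simp only []
  have hsplit : ∀ z : ℝ, 0 < z → ∀ u v : ℝ,
      m * max u v / z = max (m * u / z) (m * v / z) := by
    intro z hz u v
    rw [mul_max_of_nonneg _ _ hm.le, ← max_div_div_right hz.le]
  rw [hsplit x hx0, hsplit y hy0]
  have hDx : 0 < 1 - l₀₀ * (1 - c₂ * x) := by
    have h1 : l₀₀ * (1 - c₂ * x) ≤ l₀₀ * 1 := by
      apply mul_le_mul_of_nonneg_left _ hl0
      have := mul_pos hc0 hx0
      linarith
    linarith
  have hDy : 0 < 1 - l₀₀ * (1 - c₂ * y) := by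
    have h1 : l₀₀ * (1 - c₂ * y) ≤ l₀₀ * 1 := by
      apply mul_le_mul_of_nonneg_left _ hl0
      have := mul_pos hc0 hy0
      linarith
    linarith
  rcases eq_or_lt_of_le hp1 with hp | hp
  · -- p₁ = 0
    have hBpos : 0 < B := by
      rcases hor with h | h
      · rw [← hp] at h; exact absurd h (lt_irrefl 0)
      · exact h
    have hBy : 0 < m * B / y := by positivity
    have hBx : 0 < m * B / x := by positivity
    rw [← hp]
    simp only [zero_mul, zero_div, mul_zero]
    rw [max_eq_right hBy.le, max_eq_right hBx.le]
    exact div_lt_div_of_pos_left (by positivity) hx0 hxy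
  · -- p₁ > 0
    have hU : m * (p₁ * (1 - l₀₀ * (1 - c₂ * y)) / (1 - c₂)) / y <
        m * (p₁ * (1 - l₀₀ * (1 - c₂ * x)) / (1 - c₂)) / x := by
      rw [div_lt_div_iff₀ hy0 hx0]
      have h1 : (1 - l₀₀) * x < (1 - l₀₀) * y :=
        mul_lt_mul_of_pos_left hxy (by linarith)
      have key : (1 - l₀₀ * (1 - c₂ * y)) * x < (1 - l₀₀ * (1 - c₂ * x)) * y := by
        nlinarith [h1]
      calc m * (p₁ * (1 - l₀₀ * (1 - c₂ * y)) / (1 - c₂)) * x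
          = (m * p₁ / (1 - c₂)) * ((1 - l₀₀ * (1 - c₂ * y)) * x) := by ring
        _ < (m * p₁ / (1 - c₂)) * ((1 - l₀₀ * (1 - c₂ * x)) * y) := by
            apply mul_lt_mul_of_pos_left key (by positivity)
        _ = m * (p₁ * (1 - l₀₀ * (1 - c₂ * x)) / (1 - c₂)) * y := by ring
    rcases eq_or_lt_of_le hB0 with hq | hq
    · -- B = 0
      rw [← hq]
      simp only [mul_zero, zero_div]
      have h1 : 0 < m * (p₁ * (1 - l₀₀ * (1 - c₂ * y)) / (1 - c₂)) / y := by positivity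
      have h2 : 0 < m * (p₁ * (1 - l₀₀ * (1 - c₂ * x)) / (1 - c₂)) / x := by positivity
      rw [max_eq_left h1.le, max_eq_left h2.le]
      exact hU
    · -- B > 0
      have hV : m * B / y < m * B / x :=
        div_lt_div_of_pos_left (by positivity) hx0 hxy
      exact max_lt_max hU hV

/-- The Bonferroni r-value function `f(x) = m·max(p₁/c₁(x), R₁p₂/(mc₂))` is continuous
on `(0,1)`, `x ↦ f(x)/x` is strictly decreasing on `(0,1)`, and `f(x) = x` has at most
one solution in `(0,1)`. -/
theorem stmt1 (m R₁ : ℕ) (hm : 1 ≤ m) (hR₁ : 1 ≤ R₁) (hR₁m : R₁ ≤ m)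
    (l₀₀ c₂ : ℝ) (hl : l₀₀ ∈ Ico (0:ℝ) 1) (hc : c₂ ∈ Ioo (0:ℝ) 1)
    (p₁ p₂ : ℝ) (hp₁ : p₁ ∈ Icc (0:ℝ) 1) (hp₂ : p₂ ∈ Icc (0:ℝ) 1)
    (hpos : 0 < max p₁ p₂)
    (c₁ : ℝ → ℝ) (hc₁ : ∀ x, c₁ x = (1 - c₂) / (1 - l₀₀ * (1 - c₂ * x)))
    (e : ℝ → ℝ) (he : ∀ x, e x = max (p₁ / c₁ x) ((R₁ : ℝ) * p₂ / ((m : ℝ) * c₂)))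
    (f : ℝ → ℝ) (hf : ∀ x, f x = (m : ℝ) * e x) :
    ContinuousOn f (Ioo (0:ℝ) 1) ∧
    StrictAntiOn (fun x => f x / x) (Ioo (0:ℝ) 1) ∧
    (∀ x ∈ Ioo (0:ℝ) 1, ∀ y ∈ Ioo (0:ℝ) 1, f x = x → f y = y → x = y) := by
  obtain ⟨hl0, hl1⟩ := hl
  obtain ⟨hc0, hc1⟩ := hc
  have hc2 : (0:ℝ) < 1 - c₂ := by linarith
  have hm' : (0:ℝ) < m := by exact_mod_cast hm
  have hR' : (0:ℝ) < R₁ := by exact_mod_cast hR₁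
  have hfeq : ∀ x, f x = (m:ℝ) *
      max (p₁ * (1 - l₀₀ * (1 - c₂ * x)) / (1 - c₂)) ((R₁ : ℝ) * p₂ / ((m : ℝ) * c₂)) := by
    intro x
    rw [hf, he, hc₁, div_div_eq_mul_div]
  have hcont : ContinuousOn f (Ioo (0:ℝ) 1) := by
    have : Continuous fun x => (m:ℝ) *
        max (p₁ * (1 - l₀₀ * (1 - c₂ * x)) / (1 - c₂)) ((R₁ : ℝ) * p₂ / ((m : ℝ) * c₂)) := by
      apply Continuous.mul continuous_const
      apply Continuous.max _ continuous_const
      apply Continuous.div_const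
      exact continuous_const.mul (continuous_const.sub
        (continuous_const.mul (continuous_const.sub (continuous_const.mul continuous_id))))
    exact this.continuousOn.congr (fun x _ => hfeq x)
  have hBnn : 0 ≤ (R₁ : ℝ) * p₂ / ((m : ℝ) * c₂) :=
    div_nonneg (mul_nonneg hR'.le hp₂.1) (by positivity)
  have hor : 0 < p₁ ∨ 0 < (R₁ : ℝ) * p₂ / ((m : ℝ) * c₂) := by
    rcases lt_max_iff.mp hpos with h | h
    · exact Or.inl h
    · exact Or.inr (by positivity)
  have hanti : StrictAntiOn (fun x => f x / x) (Ioo (0:ℝ) 1) := by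
    intro x hx y hy hxy
    simp only []
    rw [hfeq x, hfeq y]
    exact stmt1_aux_anti (m:ℝ) hm' l₀₀ c₂ p₁ _ hl0 hl1 hc0 hc1 hp₁.1 hBnn hor hx hy hxy
  refine ⟨hcont, hanti, ?_⟩
  intro x hx y hy hfx hfy
  by_contra hne
  rcases lt_or_gt_of_ne hne with h | h
  · have := hanti hx hy h
    simp only [hfx, hfy, div_self (ne_of_gt hx.1), div_self (ne_of_gt hy.1)] at this
    exact lt_irrefl _ this
  · have := hanti hy hx h
    simp only [hfx, hfy, div_self (ne_of_gt hx.1), div_self (ne_of_gt hy.1)] at this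
    exact lt_irrefl _ this
end

section
/- Let g : (0,1) → ℝ be continuous, suppose x ↦ g(x)/x is strictly decreasing on (0,1), and suppose there exists c > 0 with g(x) ≥ c for all x ∈ (0,1). Define r = the unique solution in (0,1) of g(x) = x if one exists, and r = 1 otherwise. Then for every α ∈ (0,1): r ≤ α if and only if g(α) ≤ α. -/
open Set

/-- Equivalence of the two forms of the thresholding procedure: if `g` is continuous on
`(0,1)`, `x ↦ g(x)/x` is strictly decreasing on `(0,1)`, and `g` is bounded below by a
positive constant, then with `r` the unique fixed point of `g` in `(0,1)` if one exists
and `r = 1` otherwise, for every `α ∈ (0,1)` we have `r ≤ α ↔ g(α) ≤ α`. -/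
theorem stmt3 (g : ℝ → ℝ) (hcont : ContinuousOn g (Ioo (0:ℝ) 1))
    (hanti : StrictAntiOn (fun x => g x / x) (Ioo (0:ℝ) 1))
    (c : ℝ) (hc : 0 < c) (hg : ∀ x ∈ Ioo (0:ℝ) 1, c ≤ g x)
    (r : ℝ)
    (hr : (r ∈ Ioo (0:ℝ) 1 ∧ g r = r) ∨ ((¬ ∃ x ∈ Ioo (0:ℝ) 1, g x = x) ∧ r = 1)) :
    ∀ α ∈ Ioo (0:ℝ) 1, (r ≤ α ↔ g α ≤ α) := by
  intro α hα
  obtain ⟨hα0, hα1⟩ := hα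
  rcases hr with ⟨⟨hr0, hr1⟩, hfix⟩ | ⟨hnofix, hr1⟩
  · constructor
    · intro hle
      rcases eq_or_lt_of_le hle with h | h
      · simp [← h, hfix]
      · have := hanti ⟨hr0, hr1⟩ ⟨hα0, hα1⟩ h
        simp only [hfix] at this
        rw [div_self (ne_of_gt hr0)] at this
        have : g α / α < 1 := this
        have : g α < α := by
          calc g α = (g α / α) * α := by field_simp
            _ < 1 * α := by exact mul_lt_mul_of_pos_right this hα0
            _ = α := one_mul α
        linarith
    · intro hga
      by_contra hlt
      push_neg at hlt
      have := hanti ⟨hα0, hα1⟩ ⟨hr0, hr1⟩ hlt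
      simp only [hfix, div_self (ne_of_gt hr0)] at this
      have h1 : 1 < g α / α := this
      have : α < g α := by
        calc α = 1 * α := (one_mul α).symm
          _ < (g α / α) * α := mul_lt_mul_of_pos_right h1 hα0
          _ = g α := by field_simp
      linarith
  · subst hr1
    constructor
    · intro h; linarith
    · intro hga
      exfalso
      apply hnofix
      rcases eq_or_lt_of_le hga with h | h
      · exact ⟨α, ⟨hα0, hα1⟩, h⟩
      · set x₀ := min c α / 2 with hx₀
        have hx₀pos : 0 < x₀ := by positivity
        have hx₀lt : x₀ < α := by
          have : min c α ≤ α := min_le_right _ _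
          linarith
        have hsub : Icc x₀ α ⊆ Ioo (0:ℝ) 1 := fun y hy =>
          ⟨lt_of_lt_of_le hx₀pos hy.1, lt_of_le_of_lt hy.2 hα1⟩
        have hcont' : ContinuousOn (fun x => g x - x) (Icc x₀ α) :=
          ((hcont.mono hsub).sub continuousOn_id)
        have h0 : (0:ℝ) ∈ Icc ((fun x => g x - x) α) ((fun x => g x - x) x₀) := by
          constructor
          · simp only; linarith
          · simp only
            have hcx : c ≤ g x₀ := hg x₀ (hsub ⟨le_refl _, le_of_lt hx₀lt⟩)
            have : x₀ < c := by
              have : min c α ≤ c := min_le_left _ _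
              linarith
            linarith
        obtain ⟨x, hx, hx0⟩ := intermediate_value_Icc' (le_of_lt hx₀lt) hcont' h0
        have hx0' : g x - x = 0 := hx0
        exact ⟨x, hsub hx, by linarith⟩
end

section
/- Fix an integer m ≥ 1, a nonempty set R₁ ⊆ {1,…,m}, values p₁ⱼ ∈ (0,1] and p₂ⱼ ∈ (0,1] for j ∈ R₁, parameters l₀₀ ∈ [0,1), c₂ ∈ (0,1), and a level q ∈ (0,1). Define c₁(x) = (1−c₂)/(1 − l₀₀(1 − c₂x)); for j ∈ R₁ let eⱼ(x) = max( p₁ⱼ/c₁(x), |R₁|·p₂ⱼ/(m·c₂) ); let rank[eⱼ(x)] be the rank of eⱼ(x) among {eᵢ(x) : i ∈ R₁} (with maximum rank for ties); let fᵢ(x) = min over {j ∈ R₁ : eⱼ(x) ≥ eᵢ(x)} of eⱼ(x)·m / rank[eⱼ(x)]; and let rᵢ = the solution in (0,1) of fᵢ(r) = r if one exists, and rᵢ = 1 otherwise. Let R₂ = max{ r ∈ {1,…,m} : #{ j ∈ R₁ : p₁ⱼ ≤ r·c₁(q)·q/m and p₂ⱼ ≤ r·c₂·q/|R₁| } = r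 }, with R₂ = 0 if no such r exists. Then { i ∈ R₁ : rᵢ ≤ q } = { j ∈ R₁ : p₁ⱼ ≤ R₂·c₁(q)·q/m and p₂ⱼ ≤ R₂·c₂·q/|R₁| }. -/
open Set
set_option linter.unusedSectionVars false
set_option linter.unusedVariables false
set_option maxHeartbeats 1000000

namespace FDR

/-- The affine form of `e j x`. -/
noncomputable def Ef {m : ℕ} (R₁ : Finset (Fin m)) (p₁ p₂ : Fin m → ℝ) (l₀₀ c₂ : ℝ)
    (j : Fin m) (x : ℝ) : ℝ :=
  max (p₁ j * (1 - l₀₀ * (1 - c₂ * x)) / (1 - c₂))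
    ((R₁.card : ℝ) * p₂ j / ((m : ℝ) * c₂))

/-- The step-up witness predicate at level `k`. -/
def Qk {m : ℕ} (R₁ : Finset (Fin m)) (e : Fin m → ℝ → ℝ) (i : Fin m) (k : ℕ)
    (x : ℝ) : Prop :=
  e i x ≤ (k:ℝ) * x / (m:ℝ) ∧
    k ≤ (R₁.filter fun j => e j x ≤ (k:ℝ) * x / (m:ℝ)).card

/-- `i` is selected by the step-up procedure at level `x`. -/
def Pv {m : ℕ} (R₁ : Finset (Fin m)) (e : Fin m → ℝ → ℝ) (i : Fin m) (x : ℝ) : Prop :=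
  ∃ k : ℕ, 1 ≤ k ∧ k ≤ m ∧ Qk R₁ e i k x

variable {m : ℕ} {R₁ : Finset (Fin m)} {p₁ p₂ : Fin m → ℝ} {l₀₀ c₂ q : ℝ}
  {c₁ : ℝ → ℝ} {e : Fin m → ℝ → ℝ} {rank : Fin m → ℝ → ℕ} {f : Fin m → ℝ → ℝ}

lemma card_le_m' : R₁.card ≤ m := by
  simpa using Finset.card_le_card R₁.subset_univ

lemma e_eq_Ef (hc₁ : ∀ x, c₁ x = (1 - c₂) / (1 - l₀₀ * (1 - c₂ * x)))
    (he : ∀ j x, e j x = max (p₁ j / c₁ x) ((R₁.card : ℝ) * p₂ j / ((m : ℝ) * c₂)))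
    (j : Fin m) (x : ℝ) : e j x = Ef R₁ p₁ p₂ l₀₀ c₂ j x := by
  rw [he, hc₁, Ef, div_div_eq_mul_div]

lemma Ef_cont (j : Fin m) : Continuous (fun x => Ef R₁ p₁ p₂ l₀₀ c₂ j x) := by
  unfold Ef; fun_prop

lemma cross_le {ex ey x y t : ℝ} (hx : 0 < x) (hy : 0 < y)
    (hcr : ey * x ≤ ex * y) (h : ex ≤ t * x) : ey ≤ t * y := by
  nlinarith [mul_le_mul_of_nonneg_right h hy.le]

lemma cross_lt {ex ey x y t : ℝ} (hx : 0 < x) (hy : 0 < y)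
    (hcr : ey * x < ex * y) (h : ex ≤ t * x) : ey < t * y := by
  nlinarith [mul_le_mul_of_nonneg_right h hy.le]

lemma Ef_cross {p l c A x y : ℝ} (hp : 0 < p) (hl1 : l < 1)
    (hc1 : c < 1) (hA : 0 < A) (hx : 0 < x) (hxy : x ≤ y) :
    (max (p * (1 - l * (1 - c * y)) / (1 - c)) A) * x ≤
      (max (p * (1 - l * (1 - c * x)) / (1 - c)) A) * y := by
  have hy : 0 < y := lt_of_lt_of_le hx hxy
  rw [max_mul_of_nonneg _ _ hx.le, max_mul_of_nonneg _ _ hy.le]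
  apply max_le_max
  · have h1 : p * (1 - l * (1 - c * y)) * x ≤ p * (1 - l * (1 - c * x)) * y := by
      nlinarith [mul_nonneg (mul_nonneg hp.le (sub_nonneg.2 hl1.le)) (sub_nonneg.2 hxy)]
    calc p * (1 - l * (1 - c * y)) / (1 - c) * x
        = p * (1 - l * (1 - c * y)) * x / (1 - c) := by ring
      _ ≤ p * (1 - l * (1 - c * x)) * y / (1 - c) := by
          apply div_le_div_of_nonneg_right h1; linarith
      _ = p * (1 - l * (1 - c * x)) / (1 - c) * y := by ring
  · exact mul_le_mul_of_nonneg_left hxy hA.le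

lemma Ef_cross_lt {p l c A x y : ℝ} (hp : 0 < p) (hl1 : l < 1)
    (hc1 : c < 1) (hA : 0 < A) (hx : 0 < x) (hxy : x < y) :
    (max (p * (1 - l * (1 - c * y)) / (1 - c)) A) * x <
      (max (p * (1 - l * (1 - c * x)) / (1 - c)) A) * y := by
  have hy : 0 < y := lt_trans hx hxy
  rw [max_mul_of_nonneg _ _ hx.le, max_mul_of_nonneg _ _ hy.le]
  apply max_lt_max
  · have h1 : p * (1 - l * (1 - c * y)) * x < p * (1 - l * (1 - c * x)) * y := by
      nlinarith [mul_pos (mul_pos hp (sub_pos.2 hl1)) (sub_pos.2 hxy)]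
    calc p * (1 - l * (1 - c * y)) / (1 - c) * x
        = p * (1 - l * (1 - c * y)) * x / (1 - c) := by ring
      _ < p * (1 - l * (1 - c * x)) * y / (1 - c) := by
          apply div_lt_div_of_pos_right h1; linarith
      _ = p * (1 - l * (1 - c * x)) / (1 - c) * y := by ring
  · exact mul_lt_mul_of_pos_left hxy hA

/-- Step-up construction. -/
lemma stepup (hm : 1 ≤ m)
    (hmono : ∀ (j : Fin m), j ∈ R₁ → ∀ (s s' : ℕ), s ≤ s' →
      e j q ≤ (s:ℝ) * q / (m:ℝ) → e j q ≤ (s':ℝ) * q / (m:ℝ))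
    {k : ℕ} (hk1 : 1 ≤ k) (hkm : k ≤ m)
    (hkN : k ≤ (R₁.filter fun j => e j q ≤ (k:ℝ) * q / (m:ℝ)).card) :
    ∃ K, 1 ≤ K ∧ K ≤ m ∧ k ≤ K ∧
      (R₁.filter fun j => e j q ≤ (K:ℝ) * q / (m:ℝ)).card = K := by
  classical
  set N : ℕ → ℕ := fun s => (R₁.filter fun j => e j q ≤ (s:ℝ) * q / (m:ℝ)).card with hN
  have hNmono : ∀ s s', s ≤ s' → N s ≤ N s' := by
    intro s s' hss
    apply Finset.card_le_card
    intro j hj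
    have hj' := Finset.mem_filter.1 hj
    exact Finset.mem_filter.2 ⟨hj'.1, hmono j hj'.1 s s' hss hj'.2⟩
  have hNled : ∀ s, N s ≤ m := fun s =>
    le_trans (Finset.card_le_card (Finset.filter_subset _ _)) card_le_m'
  set F : Finset ℕ := (Finset.Icc 1 m).filter (fun s => s ≤ N s) with hF
  have hkF : k ∈ F := Finset.mem_filter.2 ⟨Finset.mem_Icc.2 ⟨hk1, hkm⟩, hkN⟩
  have hFne : F.Nonempty := ⟨k, hkF⟩
  set K := F.max' hFne with hK
  have hKF : K ∈ F := F.max'_mem hFne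
  have hKIcc := Finset.mem_Icc.1 (Finset.mem_filter.1 hKF).1
  have hKN : K ≤ N K := (Finset.mem_filter.1 hKF).2
  refine ⟨K, hKIcc.1, hKIcc.2, F.le_max' k hkF, ?_⟩
  by_contra hne
  have hlt : K < N K := lt_of_le_of_ne hKN (fun h => hne h.symm)
  have hK1F : K + 1 ∈ F := by
    refine Finset.mem_filter.2 ⟨Finset.mem_Icc.2 ⟨by omega, ?_⟩, ?_⟩
    · exact le_trans hlt (hNled K)
    · exact le_trans hlt (hNmono K (K+1) (by omega))
  have := F.le_max' _ hK1F
  omega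

section Main

variable (hm : 1 ≤ m) (hR₁ : R₁.Nonempty)
  (hp₁ : ∀ j ∈ R₁, p₁ j ∈ Ioc (0:ℝ) 1) (hp₂ : ∀ j ∈ R₁, p₂ j ∈ Ioc (0:ℝ) 1)
  (hl : l₀₀ ∈ Ico (0:ℝ) 1) (hc : c₂ ∈ Ioo (0:ℝ) 1)
  (hc₁ : ∀ x, c₁ x = (1 - c₂) / (1 - l₀₀ * (1 - c₂ * x)))
  (he : ∀ j x, e j x = max (p₁ j / c₁ x) ((R₁.card : ℝ) * p₂ j / ((m : ℝ) * c₂)))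
  (hrank : ∀ j x, rank j x = (R₁.filter (fun i => e i x ≤ e j x)).card)
  (hf : ∀ i ∈ R₁, ∀ x : ℝ,
      IsLeast ((R₁.filter (fun j => e i x ≤ e j x)).image
        (fun j => e j x * (m : ℝ) / (rank j x : ℝ)) : Set ℝ) (f i x))

include hm hR₁ hp₁ hp₂ hl hc hc₁ he hrank hf

lemma mpos' : (0:ℝ) < (m:ℝ) := by exact_mod_cast hm

lemma Apos {j : Fin m} (hj : j ∈ R₁) :
    0 < (R₁.card : ℝ) * p₂ j / ((m : ℝ) * c₂) := by
  have h1 : (0:ℝ) < R₁.card := by exact_mod_cast hR₁.card_pos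
  have h2 : (0:ℝ) < (m:ℝ) := by exact_mod_cast hm
  exact div_pos (mul_pos h1 (hp₂ j hj).1) (mul_pos h2 hc.1)

lemma epos {j : Fin m} (hj : j ∈ R₁) (x : ℝ) : 0 < e j x := by
  rw [he]
  exact lt_of_lt_of_le (Apos hm hR₁ hp₁ hp₂ hl hc hc₁ he hrank hf hj) (le_max_right _ _)

lemma A_le_e {j : Fin m} (x : ℝ) :
    (R₁.card : ℝ) * p₂ j / ((m : ℝ) * c₂) ≤ e j x := by
  rw [he]; exact le_max_right _ _

lemma thresh_mono {j : Fin m} (hj : j ∈ R₁) {x y t : ℝ} (hx : 0 < x) (hxy : x ≤ y)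
    (h : e j x ≤ t * x) : e j y ≤ t * y := by
  apply cross_le hx (lt_of_lt_of_le hx hxy) _ h
  rw [e_eq_Ef hc₁ he, e_eq_Ef hc₁ he]
  exact Ef_cross (hp₁ j hj).1 hl.2 hc.2
    (Apos hm hR₁ hp₁ hp₂ hl hc hc₁ he hrank hf hj) hx hxy

lemma thresh_mono_lt {j : Fin m} (hj : j ∈ R₁) {x y t : ℝ} (hx : 0 < x) (hxy : x < y)
    (h : e j x ≤ t * x) : e j y < t * y := by
  apply cross_lt hx (lt_trans hx hxy) _ h
  rw [e_eq_Ef hc₁ he, e_eq_Ef hc₁ he]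
  exact Ef_cross_lt (hp₁ j hj).1 hl.2 hc.2
    (Apos hm hR₁ hp₁ hp₂ hl hc hc₁ he hrank hf hj) hx hxy

lemma thresh_mono' {j : Fin m} (hj : j ∈ R₁) {x y : ℝ} {k : ℕ} (hx : 0 < x)
    (hxy : x ≤ y) (h : e j x ≤ (k:ℝ) * x / (m:ℝ)) :
    e j y ≤ (k:ℝ) * y / (m:ℝ) := by
  have h' : e j x ≤ ((k:ℝ)/(m:ℝ)) * x := by rw [div_mul_eq_mul_div]; exact h
  have := thresh_mono hm hR₁ hp₁ hp₂ hl hc hc₁ he hrank hf hj hx hxy h'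
  rw [div_mul_eq_mul_div] at this; exact this

lemma thresh_mono_lt' {j : Fin m} (hj : j ∈ R₁) {x y : ℝ} {k : ℕ} (hx : 0 < x)
    (hxy : x < y) (h : e j x ≤ (k:ℝ) * x / (m:ℝ)) :
    e j y < (k:ℝ) * y / (m:ℝ) := by
  have h' : e j x ≤ ((k:ℝ)/(m:ℝ)) * x := by rw [div_mul_eq_mul_div]; exact h
  have := thresh_mono_lt hm hR₁ hp₁ hp₂ hl hc hc₁ he hrank hf hj hx hxy h'
  rw [div_mul_eq_mul_div] at this; exact this

lemma Qk_mono {i : Fin m} (hi : i ∈ R₁) {k : ℕ} {x y : ℝ} (hx : 0 < x) (hxy : x ≤ y)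
    (h : Qk R₁ e i k x) : Qk R₁ e i k y := by
  obtain ⟨h1, h2⟩ := h
  refine ⟨thresh_mono' hm hR₁ hp₁ hp₂ hl hc hc₁ he hrank hf hi hx hxy h1,
    le_trans h2 (Finset.card_le_card ?_)⟩
  intro j hj
  have hj' := Finset.mem_filter.1 hj
  exact Finset.mem_filter.2 ⟨hj'.1,
    thresh_mono' hm hR₁ hp₁ hp₂ hl hc hc₁ he hrank hf hj'.1 hx hxy hj'.2⟩

lemma P_mono {i : Fin m} (hi : i ∈ R₁) {x y : ℝ} (hx : 0 < x) (hxy : x ≤ y)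
    (h : Pv R₁ e i x) : Pv R₁ e i y := by
  obtain ⟨k, hk1, hkm, hQ⟩ := h
  exact ⟨k, hk1, hkm, Qk_mono hm hR₁ hp₁ hp₂ hl hc hc₁ he hrank hf hi hx hxy hQ⟩

lemma f_bound {i : Fin m} (hi : i ∈ R₁) {x t : ℝ} {k : ℕ} (hk : 1 ≤ k)
    (hcard : k ≤ (R₁.filter fun j => e j x ≤ t).card) (hit : e i x ≤ t) :
    ∃ j ∈ R₁, e i x ≤ e j x ∧ e j x ≤ t ∧ k ≤ rank j x ∧
      f i x ≤ e j x * (m:ℝ) / (rank j x : ℝ) := by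
  classical
  set T := R₁.filter fun j => e j x ≤ t with hT
  have hTne : T.Nonempty := Finset.card_pos.1 (lt_of_lt_of_le hk hcard)
  obtain ⟨j, hjT, hmax⟩ := T.exists_max_image (fun j => e j x) hTne
  have hjR : j ∈ R₁ := (Finset.mem_filter.1 hjT).1
  have hjt : e j x ≤ t := (Finset.mem_filter.1 hjT).2
  have hiT : i ∈ T := Finset.mem_filter.2 ⟨hi, hit⟩
  have hij : e i x ≤ e j x := hmax i hiT
  have hrk : k ≤ rank j x := by
    rw [hrank]
    refine le_trans hcard (Finset.card_le_card ?_)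
    intro a haT
    exact Finset.mem_filter.2 ⟨(Finset.mem_filter.1 haT).1, hmax a haT⟩
  refine ⟨j, hjR, hij, hjt, hrk, ?_⟩
  exact (hf i hi x).2
    (Finset.mem_coe.2 (Finset.mem_image_of_mem _ (Finset.mem_filter.2 ⟨hjR, hij⟩)))

lemma fle {i : Fin m} (hi : i ∈ R₁) {x t : ℝ} (hx : 0 < x) {k : ℕ} (hk : 1 ≤ k)
    (hcard : k ≤ (R₁.filter fun j => e j x ≤ t).card) (hit : e i x ≤ t)
    (htb : t * (m:ℝ) ≤ (k:ℝ) * x) : f i x ≤ x := by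
  obtain ⟨j, hjR, hij, hjt, hrk, hfb⟩ :=
    f_bound hm hR₁ hp₁ hp₂ hl hc hc₁ he hrank hf hi hk hcard hit
  have hrkpos : (0:ℝ) < (rank j x : ℝ) := by
    exact_mod_cast lt_of_lt_of_le hk hrk
  refine le_trans hfb ?_
  rw [div_le_iff₀ hrkpos]
  have h1 : e j x * (m:ℝ) ≤ t * (m:ℝ) :=
    mul_le_mul_of_nonneg_right hjt (mpos' hm hR₁ hp₁ hp₂ hl hc hc₁ he hrank hf).le
  have h2 : (k:ℝ) * x ≤ (rank j x : ℝ) * x :=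
    mul_le_mul_of_nonneg_right (by exact_mod_cast hrk) hx.le
  nlinarith

lemma flt {i : Fin m} (hi : i ∈ R₁) {x t : ℝ} (hx : 0 < x) {k : ℕ} (hk : 1 ≤ k)
    (hcard : k ≤ (R₁.filter fun j => e j x ≤ t).card) (hit : e i x ≤ t)
    (htb : t * (m:ℝ) < (k:ℝ) * x) : f i x < x := by
  obtain ⟨j, hjR, hij, hjt, hrk, hfb⟩ :=
    f_bound hm hR₁ hp₁ hp₂ hl hc hc₁ he hrank hf hi hk hcard hit
  have hrkpos : (0:ℝ) < (rank j x : ℝ) := by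
    exact_mod_cast lt_of_lt_of_le hk hrk
  refine lt_of_le_of_lt hfb ?_
  rw [div_lt_iff₀ hrkpos]
  have h1 : e j x * (m:ℝ) ≤ t * (m:ℝ) :=
    mul_le_mul_of_nonneg_right hjt (mpos' hm hR₁ hp₁ hp₂ hl hc hc₁ he hrank hf).le
  have h2 : (k:ℝ) * x ≤ (rank j x : ℝ) * x :=
    mul_le_mul_of_nonneg_right (by exact_mod_cast hrk) hx.le
  nlinarith

lemma f_mem {i : Fin m} (hi : i ∈ R₁) (x : ℝ) :
    ∃ j ∈ R₁, e i x ≤ e j x ∧ 1 ≤ rank j x ∧ rank j x ≤ m ∧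
      rank j x = (R₁.filter fun j' => e j' x ≤ e j x).card ∧
      f i x = e j x * (m:ℝ) / (rank j x : ℝ) := by
  obtain ⟨j, hjs, hje⟩ := Finset.mem_image.1 (Finset.mem_coe.1 (hf i hi x).1)
  have hjR : j ∈ R₁ := (Finset.mem_filter.1 hjs).1
  have hij : e i x ≤ e j x := (Finset.mem_filter.1 hjs).2
  have h1 : 1 ≤ rank j x := by
    rw [hrank]
    exact Finset.card_pos.2 ⟨j, Finset.mem_filter.2 ⟨hjR, le_refl _⟩⟩
  have h2 : rank j x ≤ m := by
    rw [hrank]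
    exact le_trans (Finset.card_le_card (Finset.filter_subset _ _)) card_le_m'
  exact ⟨j, hjR, hij, h1, h2, hrank j x, hje.symm⟩

lemma P_of_fle {i : Fin m} (hi : i ∈ R₁) {x : ℝ} (hx : 0 < x)
    (h : f i x ≤ x) : Pv R₁ e i x := by
  obtain ⟨j, hjR, hij, h1, h2, hrk, hfe⟩ := f_mem hm hR₁ hp₁ hp₂ hl hc hc₁ he hrank hf hi x
  have hkpos : (0:ℝ) < (rank j x : ℝ) := by exact_mod_cast h1
  have hejx : e j x ≤ (rank j x : ℝ) * x / (m:ℝ) := by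
    rw [le_div_iff₀ (mpos' hm hR₁ hp₁ hp₂ hl hc hc₁ he hrank hf)]
    have hh : e j x * (m:ℝ) / (rank j x : ℝ) ≤ x := hfe ▸ h
    rw [div_le_iff₀ hkpos] at hh
    nlinarith
  refine ⟨rank j x, h1, h2, le_trans hij hejx, ?_⟩
  calc rank j x = (R₁.filter fun j' => e j' x ≤ e j x).card := hrk
    _ ≤ _ := Finset.card_le_card (fun a ha => Finset.mem_filter.2
        ⟨(Finset.mem_filter.1 ha).1, le_trans (Finset.mem_filter.1 ha).2 hejx⟩)

lemma P_strict_up {i : Fin m} (hi : i ∈ R₁) {x y : ℝ} (hx : 0 < x) (hxy : x < y)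
    (h : Pv R₁ e i x) : f i y < y := by
  classical
  obtain ⟨k, hk1, hkm, hie, hcnt⟩ := h
  have hy : 0 < y := lt_trans hx hxy
  set T := R₁.filter (fun j => e j x ≤ (k:ℝ) * x / (m:ℝ)) with hT
  have hTne : T.Nonempty := Finset.card_pos.1 (lt_of_lt_of_le hk1 hcnt)
  obtain ⟨j₀, hj₀, hmax⟩ := T.exists_max_image (fun j => e j y) hTne
  have hstr : ∀ j ∈ T, e j y < (k:ℝ) * y / (m:ℝ) := by
    intro j hj
    have hj' := Finset.mem_filter.1 hj
    exact thresh_mono_lt' hm hR₁ hp₁ hp₂ hl hc hc₁ he hrank hf hj'.1 hx hxy hj'.2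
  have hiT : i ∈ T := Finset.mem_filter.2 ⟨hi, hie⟩
  apply flt hm hR₁ hp₁ hp₂ hl hc hc₁ he hrank hf hi hy hk1
    (t := e j₀ y) ?_ (hmax i hiT) ?_
  · refine le_trans hcnt (Finset.card_le_card ?_)
    intro a haT
    exact Finset.mem_filter.2 ⟨(Finset.mem_filter.1 haT).1, hmax a haT⟩
  · have := hstr j₀ hj₀
    rw [lt_div_iff₀ (mpos' hm hR₁ hp₁ hp₂ hl hc hc₁ he hrank hf)] at this
    nlinarith

lemma P_inf {i : Fin m} (hi : i ∈ R₁) {x₀ b : ℝ} (hx₀ : 0 < x₀) (hx₀b : x₀ < b)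
    (h : ∀ x, x₀ < x → x ≤ b → Pv R₁ e i x) : Pv R₁ e i x₀ := by
  classical
  have stepA : ∃ k : ℕ, 1 ≤ k ∧ k ≤ m ∧ ∀ x, x₀ < x → x ≤ b → Qk R₁ e i k x := by
    by_contra hcon
    push_neg at hcon
    have hch : ∀ k : ℕ, ∃ x, x₀ < x ∧ x ≤ b ∧ (1 ≤ k → k ≤ m → ¬ Qk R₁ e i k x) := by
      intro k
      by_cases hk : 1 ≤ k ∧ k ≤ m
      · obtain ⟨x, h1, h2, h3⟩ := hcon k hk.1 hk.2
        exact ⟨x, h1, h2, fun _ _ => h3⟩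
      · exact ⟨b, hx₀b, le_refl b, fun h1 h2 => absurd ⟨h1, h2⟩ hk⟩
    choose y hy1 hy2 hy3 using hch
    have hne : ((Finset.Icc 1 m).image y).Nonempty :=
      Finset.image_nonempty.2 ⟨1, Finset.mem_Icc.2 ⟨le_refl 1, hm⟩⟩
    set x := ((Finset.Icc 1 m).image y).min' hne with hxdef
    obtain ⟨k₀, hk₀, hx0eq⟩ := Finset.mem_image.1 (Finset.min'_mem _ hne)
    have hxgt : x₀ < x := by rw [hxdef, ← hx0eq]; exact hy1 k₀
    have hxle : x ≤ b := by rw [hxdef, ← hx0eq]; exact hy2 k₀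
    obtain ⟨k, hk1, hkm, hQ⟩ := h x hxgt hxle
    have hxyk : x ≤ y k :=
      Finset.min'_le _ _ (Finset.mem_image_of_mem y (Finset.mem_Icc.2 ⟨hk1, hkm⟩))
    exact hy3 k hk1 hkm
      (Qk_mono hm hR₁ hp₁ hp₂ hl hc hc₁ he hrank hf hi (lt_trans hx₀ hxgt) hxyk hQ)
  obtain ⟨k, hk1, hkm, hQall⟩ := stepA
  set cset : Set ℕ :=
    {c | ∃ x, x₀ < x ∧ x ≤ b ∧ (R₁.filter fun j => e j x ≤ (k:ℝ) * x / (m:ℝ)).card = c}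
    with hcset
  have hcne : cset.Nonempty := ⟨_, b, hx₀b, le_refl b, rfl⟩
  obtain ⟨x₁, hx₁gt, hx₁le, hx₁card⟩ := Nat.sInf_mem hcne
  set T := R₁.filter fun j => e j x₁ ≤ (k:ℝ) * x₁ / (m:ℝ) with hTdef
  have hTeq : ∀ x, x₀ < x → x ≤ x₁ →
      (R₁.filter fun j => e j x ≤ (k:ℝ) * x / (m:ℝ)) = T := by
    intro x hgt hle
    apply Finset.eq_of_subset_of_card_le
    · intro j hj
      have hj' := Finset.mem_filter.1 hj
      exact Finset.mem_filter.2 ⟨hj'.1,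
        thresh_mono' hm hR₁ hp₁ hp₂ hl hc hc₁ he hrank hf hj'.1
          (lt_trans hx₀ hgt) hle hj'.2⟩
    · rw [hx₁card]
      exact Nat.sInf_le ⟨x, hgt, le_trans hle hx₁le, rfl⟩
  have hkT : k ≤ T.card := (hQall x₁ hx₁gt hx₁le).2
  have hlim : ∀ j : Fin m, (∀ x, x₀ < x → x ≤ x₁ → e j x ≤ (k:ℝ) * x / (m:ℝ)) →
      e j x₀ ≤ (k:ℝ) * x₀ / (m:ℝ) := by
    intro j hjx
    have hcontg : Continuous (fun x => Ef R₁ p₁ p₂ l₀₀ c₂ j x - (k:ℝ) * x / (m:ℝ)) := by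
      apply Continuous.sub (Ef_cont j)
      fun_prop
    have htend : Filter.Tendsto (fun x => Ef R₁ p₁ p₂ l₀₀ c₂ j x - (k:ℝ) * x / (m:ℝ))
        (nhdsWithin x₀ (Ioi x₀))
        (nhds (Ef R₁ p₁ p₂ l₀₀ c₂ j x₀ - (k:ℝ) * x₀ / (m:ℝ))) :=
      (hcontg.tendsto x₀).mono_left nhdsWithin_le_nhds
    have hev : ∀ᶠ x in nhdsWithin x₀ (Ioi x₀),
        (fun x => Ef R₁ p₁ p₂ l₀₀ c₂ j x - (k:ℝ) * x / (m:ℝ)) x ≤ 0 := by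
      filter_upwards [Ioc_mem_nhdsGT_of_mem (left_mem_Ico.2 hx₁gt)] with x hx
      have h' := hjx x hx.1 hx.2
      rw [e_eq_Ef hc₁ he] at h'
      simpa using sub_nonpos.2 h'
    have hfin := le_of_tendsto htend hev
    have := sub_nonpos.1 hfin
    rw [e_eq_Ef hc₁ he]
    exact this
  refine ⟨k, hk1, hkm, hlim i (fun x hgt hle => (hQall x hgt (le_trans hle hx₁le)).1), ?_⟩
  refine le_trans hkT (Finset.card_le_card ?_)
  intro j hjT
  have hjR : j ∈ R₁ := (Finset.mem_filter.1 hjT).1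
  refine Finset.mem_filter.2 ⟨hjR, hlim j ?_⟩
  intro x hgt hle
  have hmem : j ∈ (R₁.filter fun j' => e j' x ≤ (k:ℝ) * x / (m:ℝ)) :=
    (hTeq x hgt hle).symm ▸ hjT
  exact (Finset.mem_filter.1 hmem).2

lemma exists_smaller {i : Fin m} (hi : i ∈ R₁) {x₀ : ℝ} (hx₀ : 0 < x₀)
    (hlt : f i x₀ < x₀) : ∃ x, 0 < x ∧ x < x₀ ∧ Pv R₁ e i x := by
  classical
  obtain ⟨j, hjR, hij, h1, h2, hrk, hfe⟩ := f_mem hm hR₁ hp₁ hp₂ hl hc hc₁ he hrank hf hi x₀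
  have hm2 : (0:ℝ) < (m:ℝ) := mpos' hm hR₁ hp₁ hp₂ hl hc hc₁ he hrank hf
  have hkpos : (0:ℝ) < (rank j x₀ : ℝ) := by exact_mod_cast h1
  have hej : e j x₀ < (rank j x₀ : ℝ) * x₀ / (m:ℝ) := by
    have hh : e j x₀ * (m:ℝ) / (rank j x₀ : ℝ) < x₀ := hfe ▸ hlt
    rw [div_lt_iff₀ hkpos] at hh
    rw [lt_div_iff₀ hm2]
    nlinarith
  set k := rank j x₀ with hkdef
  set T := R₁.filter fun j' => e j' x₀ ≤ e j x₀ with hTdef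
  have hiT : i ∈ T := Finset.mem_filter.2 ⟨hi, hij⟩
  set U : Set ℝ := Ioi (0:ℝ) ∩
    ⋂ j' ∈ T, {x | Ef R₁ p₁ p₂ l₀₀ c₂ j' x < (k:ℝ) * x / (m:ℝ)} with hUdef
  have hUopen : IsOpen U := by
    apply IsOpen.inter isOpen_Ioi
    apply isOpen_biInter_finset
    intro j' _
    exact isOpen_lt (Ef_cont j') (by fun_prop)
  have hx₀U : x₀ ∈ U := by
    refine ⟨hx₀, mem_iInter₂.2 fun j' hj' => ?_⟩
    have := (Finset.mem_filter.1 hj').2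
    show Ef R₁ p₁ p₂ l₀₀ c₂ j' x₀ < (k:ℝ) * x₀ / (m:ℝ)
    rw [← e_eq_Ef hc₁ he]
    exact lt_of_le_of_lt this hej
  obtain ⟨ε, hε, hball⟩ := Metric.isOpen_iff.1 hUopen x₀ hx₀U
  set d := min (ε/2) (x₀/2) with hddef
  have hdpos : 0 < d := lt_min (by linarith) (by linarith)
  set x := x₀ - d with hxdef
  have hxlt : x < x₀ := by rw [hxdef]; linarith
  have hxU : x ∈ U := by
    apply hball
    rw [Metric.mem_ball, Real.dist_eq, hxdef]
    rw [abs_of_nonpos (by linarith)]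
    have : d ≤ ε/2 := min_le_left _ _
    simp only [neg_sub]
    linarith
  obtain ⟨hxpos, hxI⟩ := hxU
  have hstr : ∀ j' ∈ T, e j' x < (k:ℝ) * x / (m:ℝ) := by
    intro j' hj'
    have := mem_iInter₂.1 hxI j' hj'
    rw [e_eq_Ef hc₁ he]
    exact this
  refine ⟨x, hxpos, hxlt, k, h1, h2, (hstr i hiT).le, ?_⟩
  calc k = T.card := hrk
    _ ≤ _ := Finset.card_le_card (fun a ha => Finset.mem_filter.2
        ⟨(Finset.mem_filter.1 ha).1, (hstr a ha).le⟩)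

end Main

end FDR


/-- Equivalence of the two forms of the FDR replicability procedure: thresholding the
FDR r-values `rᵢ` at level `q` selects exactly the features selected by the step-up
procedure determined by `R₂`, the largest `r ∈ {1,…,m}` such that exactly `r` features
`j ∈ R₁` satisfy `p₁ⱼ ≤ r·c₁(q)q/m` and `p₂ⱼ ≤ r·c₂q/|R₁|` (with `R₂ = 0` if no such
`r` exists). -/
theorem stmt4 (m : ℕ) (hm : 1 ≤ m) (R₁ : Finset (Fin m)) (hR₁ : R₁.Nonempty)
    (p₁ p₂ : Fin m → ℝ)
    (hp₁ : ∀ j ∈ R₁, p₁ j ∈ Ioc (0:ℝ) 1) (hp₂ : ∀ j ∈ R₁, p₂ j ∈ Ioc (0:ℝ) 1)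
    (l₀₀ c₂ : ℝ) (hl : l₀₀ ∈ Ico (0:ℝ) 1) (hc : c₂ ∈ Ioo (0:ℝ) 1)
    (q : ℝ) (hq : q ∈ Ioo (0:ℝ) 1)
    (c₁ : ℝ → ℝ) (hc₁ : ∀ x, c₁ x = (1 - c₂) / (1 - l₀₀ * (1 - c₂ * x)))
    (e : Fin m → ℝ → ℝ)
    (he : ∀ j x, e j x = max (p₁ j / c₁ x) ((R₁.card : ℝ) * p₂ j / ((m : ℝ) * c₂)))
    (rank : Fin m → ℝ → ℕ)
    (hrank : ∀ j x, rank j x = (R₁.filter (fun i => e i x ≤ e j x)).card)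
    (f : Fin m → ℝ → ℝ)
    (hf : ∀ i ∈ R₁, ∀ x : ℝ,
      IsLeast ((R₁.filter (fun j => e i x ≤ e j x)).image
        (fun j => e j x * (m : ℝ) / (rank j x : ℝ)) : Set ℝ) (f i x))
    (r : Fin m → ℝ)
    (hr : ∀ i ∈ R₁,
      (r i ∈ Ioo (0:ℝ) 1 ∧ f i (r i) = r i) ∨
      ((¬ ∃ x ∈ Ioo (0:ℝ) 1, f i x = x) ∧ r i = 1))
    (R₂ : ℕ)
    (hR₂ : (R₂ ∈ Finset.Icc 1 m ∧
        (R₁.filter (fun j => p₁ j ≤ (R₂ : ℝ) * c₁ q * q / (m : ℝ) ∧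
          p₂ j ≤ (R₂ : ℝ) * c₂ * q / (R₁.card : ℝ))).card = R₂ ∧
        (∀ s ∈ Finset.Icc 1 m,
          (R₁.filter (fun j => p₁ j ≤ (s : ℝ) * c₁ q * q / (m : ℝ) ∧
            p₂ j ≤ (s : ℝ) * c₂ * q / (R₁.card : ℝ))).card = s → s ≤ R₂)) ∨
      (R₂ = 0 ∧ ∀ s ∈ Finset.Icc 1 m,
        (R₁.filter (fun j => p₁ j ≤ (s : ℝ) * c₁ q * q / (m : ℝ) ∧
          p₂ j ≤ (s : ℝ) * c₂ * q / (R₁.card : ℝ))).card ≠ s)) :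
    R₁.filter (fun i => r i ≤ q) =
      R₁.filter (fun j => p₁ j ≤ (R₂ : ℝ) * c₁ q * q / (m : ℝ) ∧
        p₂ j ≤ (R₂ : ℝ) * c₂ * q / (R₁.card : ℝ)) := by
  classical
  have hm2 : (0:ℝ) < (m:ℝ) := by exact_mod_cast hm
  -- the threshold translation
  have hthresh : ∀ j ∈ R₁, ∀ t : ℝ,
      ((p₁ j ≤ t * c₁ q * q / (m:ℝ) ∧ p₂ j ≤ t * c₂ * q / (R₁.card:ℝ)) ↔
        e j q ≤ t * q / (m:ℝ)) := by
    intro j hj t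
    have hc₁q : 0 < c₁ q := by
      rw [hc₁]
      apply div_pos (by linarith [hc.2])
      nlinarith [mul_nonneg (mul_nonneg hl.1 hc.1.le) hq.1.le, hl.2]
    have hcardpos : (0:ℝ) < (R₁.card:ℝ) := by exact_mod_cast hR₁.card_pos
    have e1 : p₁ j / c₁ q ≤ t * q / (m:ℝ) ↔ p₁ j ≤ t * c₁ q * q / (m:ℝ) := by
      rw [div_le_iff₀ hc₁q,
        show t * q / (m:ℝ) * c₁ q = t * c₁ q * q / (m:ℝ) from by ring]
    have e2 : (R₁.card:ℝ) * p₂ j / ((m:ℝ) * c₂) ≤ t * q / (m:ℝ) ↔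
        p₂ j ≤ t * c₂ * q / (R₁.card:ℝ) := by
      rw [div_le_iff₀ (mul_pos hm2 hc.1), le_div_iff₀ hcardpos,
        show t * q / (m:ℝ) * ((m:ℝ) * c₂) = t * c₂ * q from by field_simp,
        mul_comm ((R₁.card:ℝ)) (p₂ j)]
    rw [he, max_le_iff]
    exact and_congr e1.symm e2.symm
  -- monotonicity of the step-up thresholds in `s`
  have hsmono : ∀ (j : Fin m), j ∈ R₁ → ∀ (s s' : ℕ), s ≤ s' →
      e j q ≤ (s:ℝ) * q / (m:ℝ) → e j q ≤ (s':ℝ) * q / (m:ℝ) := by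
    intro j hj s s' hss hle
    refine le_trans hle ?_
    have hss' : (s:ℝ) ≤ (s':ℝ) := by exact_mod_cast hss
    have : (s:ℝ) * q ≤ (s':ℝ) * q := mul_le_mul_of_nonneg_right hss' hq.1.le
    exact div_le_div_of_nonneg_right this hm2.le
  -- filters with p-conditions = filters with e-conditions
  have hfiltereq : ∀ s : ℕ,
      R₁.filter (fun j => p₁ j ≤ (s:ℝ) * c₁ q * q / (m:ℝ) ∧
        p₂ j ≤ (s:ℝ) * c₂ * q / (R₁.card:ℝ)) =
      R₁.filter (fun j => e j q ≤ (s:ℝ) * q / (m:ℝ)) := by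
    intro s
    apply Finset.filter_congr
    intro j hj
    exact hthresh j hj (s:ℝ)
  -- key equivalence 1 : r i ≤ q ↔ Pv i q
  have key : ∀ i ∈ R₁, (r i ≤ q ↔ FDR.Pv R₁ e i q) := by
    intro i hi
    rcases hr i hi with ⟨hio, hfix⟩ | ⟨hno, hone⟩
    · constructor
      · intro hle
        exact FDR.P_mono hm hR₁ hp₁ hp₂ hl hc hc₁ he hrank hf hi hio.1 hle
          (FDR.P_of_fle hm hR₁ hp₁ hp₂ hl hc hc₁ he hrank hf hi hio.1 (le_of_eq hfix))
      · intro hP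
        by_contra hgt
        push_neg at hgt
        have := FDR.P_strict_up hm hR₁ hp₁ hp₂ hl hc hc₁ he hrank hf hi hq.1 hgt hP
        exact absurd hfix this.ne
    · constructor
      · intro hle; rw [hone] at hle; linarith [hq.2]
      · intro hP
        exfalso
        set S : Set ℝ := {x | 0 < x ∧ x ≤ q ∧ FDR.Pv R₁ e i x} with hS
        have hqS : q ∈ S := ⟨hq.1, le_refl q, hP⟩
        have hSne : S.Nonempty := ⟨q, hqS⟩
        have hApos : 0 < (R₁.card:ℝ) * p₂ i / ((m:ℝ) * c₂) :=
          FDR.Apos hm hR₁ hp₁ hp₂ hl hc hc₁ he hrank hf hi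
        have hlb : ∀ x ∈ S, (R₁.card:ℝ) * p₂ i / ((m:ℝ) * c₂) ≤ x := by
          rintro x ⟨hx0, hxq, k, hk1, hkm, hie, -⟩
          have h1 : (R₁.card:ℝ) * p₂ i / ((m:ℝ) * c₂) ≤ e i x :=
            FDR.A_le_e hm hR₁ hp₁ hp₂ hl hc hc₁ he hrank hf x
          have h2 : (k:ℝ) * x / (m:ℝ) ≤ x := by
            rw [div_le_iff₀ hm2]
            have hk' : (k:ℝ) ≤ (m:ℝ) := by exact_mod_cast hkm
            nlinarith
          linarith
        have hbdd : BddBelow S := ⟨_, hlb⟩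
        set x₀ := sInf S with hx₀def
        have hx₀A : (R₁.card:ℝ) * p₂ i / ((m:ℝ) * c₂) ≤ x₀ := le_csInf hSne hlb
        have hx₀pos : 0 < x₀ := lt_of_lt_of_le hApos hx₀A
        have hx₀q : x₀ ≤ q := csInf_le hbdd hqS
        have hPx₀ : FDR.Pv R₁ e i x₀ := by
          rcases eq_or_lt_of_le hx₀q with heq | hlt
          · rw [heq]; exact hP
          · apply FDR.P_inf hm hR₁ hp₁ hp₂ hl hc hc₁ he hrank hf hi hx₀pos hlt
            intro x hgt hle
            obtain ⟨y, hyS, hylt⟩ := exists_lt_of_csInf_lt hSne hgt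
            exact FDR.P_mono hm hR₁ hp₁ hp₂ hl hc hc₁ he hrank hf hi hyS.1 hylt.le
              hyS.2.2
        have hfle : f i x₀ ≤ x₀ := by
          obtain ⟨k, hk1, hkm, hie, hcnt⟩ := hPx₀
          apply FDR.fle hm hR₁ hp₁ hp₂ hl hc hc₁ he hrank hf hi hx₀pos hk1 hcnt hie
          rw [div_mul_cancel₀ _ (ne_of_gt hm2)]
        have hfge : x₀ ≤ f i x₀ := by
          by_contra hge
          push_neg at hge
          obtain ⟨x, hx0, hxlt, hPx⟩ :=
            FDR.exists_smaller hm hR₁ hp₁ hp₂ hl hc hc₁ he hrank hf hi hx₀pos hge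
          have : x₀ ≤ x := csInf_le hbdd ⟨hx0, le_trans hxlt.le hx₀q, hPx⟩
          linarith
        exact hno ⟨x₀, ⟨hx₀pos, lt_of_le_of_lt hx₀q hq.2⟩, le_antisymm hfle hfge⟩
  -- key equivalence 2 : Pv i q ↔ step-up conditions with R₂
  have key2 : ∀ i ∈ R₁, (FDR.Pv R₁ e i q ↔
      (p₁ i ≤ (R₂:ℝ) * c₁ q * q / (m:ℝ) ∧ p₂ i ≤ (R₂:ℝ) * c₂ * q / (R₁.card:ℝ))) := by
    intro i hi
    rw [hthresh i hi (R₂:ℝ)]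
    constructor
    · rintro ⟨k, hk1, hkm, hie, hcnt⟩
      obtain ⟨K, hK1, hKm, hkK, hKeq⟩ := FDR.stepup hm hsmono hk1 hkm hcnt
      rcases hR₂ with ⟨hmem, hcardeq, hmax⟩ | ⟨h0, hnone⟩
      · have hKle : K ≤ R₂ := hmax K (Finset.mem_Icc.2 ⟨hK1, hKm⟩)
          (by rw [hfiltereq]; exact hKeq)
        have h1 : e i q ≤ (K:ℝ) * q / (m:ℝ) := hsmono i hi k K hkK hie
        exact le_trans h1 (by
          have : (K:ℝ) ≤ (R₂:ℝ) := by exact_mod_cast hKle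
          have h2 : (K:ℝ) * q ≤ (R₂:ℝ) * q := mul_le_mul_of_nonneg_right this hq.1.le
          exact div_le_div_of_nonneg_right h2 hm2.le)
      · exact absurd (by rw [hfiltereq]; exact hKeq)
          (hnone K (Finset.mem_Icc.2 ⟨hK1, hKm⟩))
    · intro hie
      rcases hR₂ with ⟨hmem, hcardeq, hmax⟩ | ⟨h0, hnone⟩
      · have hmemI := Finset.mem_Icc.1 hmem
        refine ⟨R₂, hmemI.1, hmemI.2, hie, ?_⟩
        rw [← hfiltereq, hcardeq]
      · exfalso
        rw [h0] at hie
        simp only [Nat.cast_zero, zero_mul, zero_div] at hie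
        have := FDR.epos hm hR₁ hp₁ hp₂ hl hc hc₁ he hrank hf hi q
        linarith
  -- conclude
  apply Finset.filter_congr
  intro i hi
  rw [key i hi, key2 i hi]
end

section
/- Fix an integer m ≥ 1, a nonempty set R₁ ⊆ {1,…,m}, values p₁ⱼ ∈ (0,1] and p₂ⱼ ∈ (0,1] for j ∈ R₁, parameters l₀₀ ∈ [0,1) and c₂ ∈ (0,1). Define c₁(x) = (1−c₂)/(1 − l₀₀(1 − c₂x)); for j ∈ R₁ let eⱼ(x) = max( p₁ⱼ/c₁(x), |R₁|·p₂ⱼ/(m·c₂) ); let rank[eⱼ(x)] be the rank of eⱼ(x) among {eᵢ(x) : i ∈ R₁} (with maximum rank for ties); and let fᵢ(x) = min over {j ∈ R₁ : eⱼ(x) ≥ eᵢ(x)} of eⱼ(x)·m / rank[eⱼ(x)]. Then for each i ∈ R₁ the equation fᵢ(x) = x has at most one solution x ∈ (0,1). -/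
open Set

/-- For each selected feature `i ∈ R₁`, the FDR r-value function
`fᵢ(x) = min_{j ∈ R₁ : eⱼ(x) ≥ eᵢ(x)} eⱼ(x)·m/rank[eⱼ(x)]` has at most one fixed point
in `(0,1)`, where `eⱼ(x) = max(p₁ⱼ/c₁(x), |R₁|p₂ⱼ/(mc₂))` and `rank[eⱼ(x)]` is the rank
of `eⱼ(x)` among `{eᵢ(x) : i ∈ R₁}` with maximum rank for ties. -/
theorem stmt5 (m : ℕ) (hm : 1 ≤ m) (R₁ : Finset (Fin m)) (hR₁ : R₁.Nonempty)
    (p₁ p₂ : Fin m → ℝ)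
    (hp₁ : ∀ j ∈ R₁, p₁ j ∈ Ioc (0:ℝ) 1) (hp₂ : ∀ j ∈ R₁, p₂ j ∈ Ioc (0:ℝ) 1)
    (l₀₀ c₂ : ℝ) (hl : l₀₀ ∈ Ico (0:ℝ) 1) (hc : c₂ ∈ Ioo (0:ℝ) 1)
    (c₁ : ℝ → ℝ) (hc₁ : ∀ x, c₁ x = (1 - c₂) / (1 - l₀₀ * (1 - c₂ * x)))
    (e : Fin m → ℝ → ℝ)
    (he : ∀ j x, e j x = max (p₁ j / c₁ x) ((R₁.card : ℝ) * p₂ j / ((m : ℝ) * c₂)))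
    (rank : Fin m → ℝ → ℕ)
    (hrank : ∀ j x, rank j x = (R₁.filter (fun i => e i x ≤ e j x)).card)
    (f : Fin m → ℝ → ℝ)
    (hf : ∀ i ∈ R₁, ∀ x : ℝ,
      IsLeast ((R₁.filter (fun j => e i x ≤ e j x)).image
        (fun j => e j x * (m : ℝ) / (rank j x : ℝ)) : Set ℝ) (f i x)) :
    ∀ i ∈ R₁, ∀ x ∈ Ioo (0:ℝ) 1, ∀ y ∈ Ioo (0:ℝ) 1, f i x = x → f i y = y → x = y := by
  have hm' : (0:ℝ) < m := by exact_mod_cast hm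
  have hc₂pos : (0:ℝ) < c₂ := hc.1
  -- positivity of denominators of c₁
  have hd : ∀ x ∈ Ioo (0:ℝ) 1, 0 < 1 - l₀₀ * (1 - c₂ * x) := by
    intro x hx
    nlinarith [mul_nonneg hl.1 (mul_pos hc.1 hx.1).le, hl.2]
  have hc₁pos : ∀ x ∈ Ioo (0:ℝ) 1, 0 < c₁ x := by
    intro x hx
    rw [hc₁]
    exact div_pos (by linarith [hc.2]) (hd x hx)
  -- strict monotonicity of x * c₁ x
  have hxc : ∀ x ∈ Ioo (0:ℝ) 1, ∀ y ∈ Ioo (0:ℝ) 1, x < y → x * c₁ x < y * c₁ y := by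
    intro x hx y hy hxy
    rw [hc₁, hc₁, ← mul_div_assoc, ← mul_div_assoc,
      div_lt_div_iff₀ (hd x hx) (hd y hy)]
    nlinarith [mul_pos (mul_pos (show (0:ℝ) < 1 - c₂ by linarith [hc.2])
      (show (0:ℝ) < 1 - l₀₀ by linarith [hl.2])) (sub_pos.2 hxy)]
  -- positivity of e
  have hCpos : ∀ k ∈ R₁, 0 < (R₁.card : ℝ) * p₂ k / ((m : ℝ) * c₂) := by
    intro k hk
    exact div_pos (mul_pos (by exact_mod_cast Finset.card_pos.mpr hR₁) (hp₂ k hk).1)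
      (mul_pos hm' hc₂pos)
  have hepos : ∀ k ∈ R₁, ∀ x, 0 < e k x := by
    intro k hk x
    rw [he]
    exact lt_of_lt_of_le (hCpos k hk) (le_max_right _ _)
  -- strict decrease of e k x / x, in product form
  have hecmp : ∀ k ∈ R₁, ∀ x ∈ Ioo (0:ℝ) 1, ∀ y ∈ Ioo (0:ℝ) 1, x < y →
      x * e k y < y * e k x := by
    intro k hk x hx y hy hxy
    rw [he, he, mul_max_of_nonneg _ _ hx.1.le, mul_max_of_nonneg _ _ (by linarith [hx.1] : (0:ℝ) ≤ y)]
    have h1 : x * (p₁ k / c₁ y) < y * (p₁ k / c₁ x) := by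
      rw [← mul_div_assoc, ← mul_div_assoc,
        div_lt_div_iff₀ (hc₁pos y hy) (hc₁pos x hx)]
      nlinarith [hxc x hx y hy hxy, (hp₁ k hk).1]
    have h2 : x * ((R₁.card : ℝ) * p₂ k / ((m : ℝ) * c₂)) <
        y * ((R₁.card : ℝ) * p₂ k / ((m : ℝ) * c₂)) :=
      mul_lt_mul_of_pos_right hxy (hCpos k hk)
    exact max_lt (lt_of_lt_of_le h1 (le_max_left _ _))
      (lt_of_lt_of_le h2 (le_max_right _ _))
  intro i hi
  -- key strict comparison of scaled values of f
  have key : ∀ x ∈ Ioo (0:ℝ) 1, ∀ y ∈ Ioo (0:ℝ) 1, x < y → x * f i y < y * f i x := by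
    intro x hx y hy hxy
    -- f i x is attained at some j
    obtain ⟨j, hjmem, hjeq⟩ := Finset.mem_image.mp (hf i hi x).1
    obtain ⟨hjR, hij⟩ := Finset.mem_filter.mp hjmem
    set T : Finset (Fin m) := R₁.filter (fun k => e k x ≤ e j x) with hT
    have hiT : i ∈ T := Finset.mem_filter.mpr ⟨hi, hij⟩
    have hjT : j ∈ T := Finset.mem_filter.mpr ⟨hjR, le_refl _⟩
    obtain ⟨j', hj'T, hmax⟩ := T.exists_max_image (fun k => e k y) ⟨i, hiT⟩
    obtain ⟨hj'R, hj'x⟩ := Finset.mem_filter.mp hj'T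
    -- j' is admissible at y
    have hadm : e i y ≤ e j' y := hmax i hiT
    -- rank bounds
    have hrjx : rank j x = T.card := hrank j x
    have hrle : rank j x ≤ rank j' y := by
      rw [hrjx, hrank]
      apply Finset.card_le_card
      intro k hk
      exact Finset.mem_filter.mpr ⟨(Finset.mem_filter.mp hk).1, hmax k hk⟩
    have hrpos : 0 < rank j x := by
      rw [hrjx]
      exact Finset.card_pos.mpr ⟨j, hjT⟩
    -- f i y ≤ term at j'
    have hfy : f i y ≤ e j' y * (m : ℝ) / (rank j' y : ℝ) :=
      (hf i hi y).2 (Finset.mem_image.mpr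
        ⟨j', Finset.mem_filter.mpr ⟨hj'R, hadm⟩, rfl⟩)
    -- main chain
    have hmain : x * (e j' y * (m : ℝ) / (rank j' y : ℝ)) <
        y * (e j x * (m : ℝ) / (rank j x : ℝ)) := by
      have h1 : x * e j' y < y * e j x := by
        calc x * e j' y < y * e j' x := hecmp j' hj'R x hx y hy hxy
          _ ≤ y * e j x := by
              apply mul_le_mul_of_nonneg_left hj'x (by linarith [hx.1])
      have hr'pos : (0:ℝ) < (rank j' y : ℝ) := by
        exact_mod_cast lt_of_lt_of_le hrpos hrle
      have hrpos' : (0:ℝ) < (rank j x : ℝ) := by exact_mod_cast hrpos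
      have hrle' : (rank j x : ℝ) ≤ (rank j' y : ℝ) := by exact_mod_cast hrle
      have e1 : x * (e j' y * (m : ℝ) / (rank j' y : ℝ)) =
          (x * e j' y) * (m : ℝ) / (rank j' y : ℝ) := by ring
      have e2 : y * (e j x * (m : ℝ) / (rank j x : ℝ)) =
          (y * e j x) * (m : ℝ) / (rank j x : ℝ) := by ring
      rw [e1, e2]
      have hnum : (x * e j' y) * (m : ℝ) < (y * e j x) * (m : ℝ) :=
        mul_lt_mul_of_pos_right h1 hm'
      have hxe : 0 < x * e j' y := mul_pos hx.1 (hepos j' hj'R y)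
      calc (x * e j' y) * (m : ℝ) / (rank j' y : ℝ)
          < (y * e j x) * (m : ℝ) / (rank j' y : ℝ) := by
            exact div_lt_div_of_pos_right hnum hr'pos
        _ ≤ (y * e j x) * (m : ℝ) / (rank j x : ℝ) := by
            exact div_le_div_of_nonneg_left
              (mul_nonneg (mul_nonneg hy.1.le (hepos j hjR x).le) hm'.le) hrpos' hrle'
    calc x * f i y ≤ x * (e j' y * (m : ℝ) / (rank j' y : ℝ)) :=
          mul_le_mul_of_nonneg_left hfy hx.1.le
      _ < y * (e j x * (m : ℝ) / (rank j x : ℝ)) := hmain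
      _ = y * f i x := by rw [hjeq]
  intro x hx y hy hfx hfy
  rcases lt_trichotomy x y with h | h | h
  · have := key x hx y hy h
    rw [hfx, hfy] at this
    nlinarith
  · exact h
  · have := key y hy x hx h
    rw [hfx, hfy] at this
    nlinarith
end

section
/- Under the replicability setup with the directional FWER replicability procedure at level α ∈ (0,1), assume that l₀₀ ≤ f₀₀ and that for every feature j with H_j ∉ {(1,1),(−1,−1)}, the follow-up p-value P_{2j}^L is independent of the vector of primary-study p-values (P_{11}^L,…,P_{1m}^L). Then the directional FWER for replicability analysis satisfies Pr(R − S > 0) ≤ α. -/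
open MeasureTheory ProbabilityTheory Set

section Replicability

variable {Ω : Type} {m : ℕ}

/-- `c₁(x) = (1−c₂)/(1 − l₀₀(1 − c₂x))`. -/
noncomputable def c1 (l00 c2 x : ℝ) : ℝ := (1 - c2) / (1 - l00 * (1 - c2 * x))

/-- The primary-study one-sided p-value in the direction favoured by the primary study:
`p'₁ⱼ = min(P₁ⱼᴸ, P₁ⱼᴿ)` where `P₁ⱼᴿ = 1 − P₁ⱼᴸ`. -/
noncomputable def p1' (P1L : Fin m → Ω → ℝ) (j : Fin m) (ω : Ω) : ℝ :=
  min (P1L j ω) (1 - P1L j ω)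

/-- The follow-up study one-sided p-value in the direction favoured by the primary study:
`p'₂ⱼ = P₂ⱼᴸ` if `P₁ⱼᴸ < P₁ⱼᴿ` and `p'₂ⱼ = P₂ⱼᴿ = 1 − P₂ⱼᴸ` otherwise. -/
noncomputable def p2' (P1L P2L : Fin m → Ω → ℝ) (j : Fin m) (ω : Ω) : ℝ :=
  if P1L j ω < 1 - P1L j ω then P2L j ω else 1 - P2L j ω

/-- The set `R₁` of features selected for follow-up, a function of the primary-study
left-sided p-values. -/
def R1set (sel : (Fin m → ℝ) → Finset (Fin m)) (P1L : Fin m → Ω → ℝ) (ω : Ω) :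
    Finset (Fin m) := sel (fun i => P1L i ω)

/-- A replicability claim is made for feature `j` if `j` is selected, `p'₁ⱼ ≤ a`
and `p'₂ⱼ ≤ b/|R₁|`. -/
def Claim (sel : (Fin m → ℝ) → Finset (Fin m)) (P1L P2L : Fin m → Ω → ℝ)
    (a b : ℝ) (j : Fin m) (ω : Ω) : Prop :=
  j ∈ R1set sel P1L ω ∧ p1' P1L j ω ≤ a ∧
    p2' P1L P2L j ω ≤ b / ((R1set sel P1L ω).card : ℝ)

open Classical in
/-- Indicator of a left-direction replicability claim for feature `j`. -/
noncomputable def RjL (sel : (Fin m → ℝ) → Finset (Fin m)) (P1L P2L : Fin m → Ω → ℝ)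
    (a b : ℝ) (j : Fin m) (ω : Ω) : ℕ :=
  if Claim sel P1L P2L a b j ω ∧ P1L j ω < 1 - P1L j ω then 1 else 0

open Classical in
/-- Indicator of a right-direction replicability claim for feature `j`. -/
noncomputable def RjR (sel : (Fin m → ℝ) → Finset (Fin m)) (P1L P2L : Fin m → Ω → ℝ)
    (a b : ℝ) (j : Fin m) (ω : Ω) : ℕ :=
  if Claim sel P1L P2L a b j ω ∧ ¬ (P1L j ω < 1 - P1L j ω) then 1 else 0

/-- `R`, the total number of replicability claims. -/
noncomputable def Rtot (sel : (Fin m → ℝ) → Finset (Fin m)) (P1L P2L : Fin m → Ω → ℝ)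
    (a b : ℝ) (ω : Ω) : ℕ :=
  ∑ j : Fin m, (RjL sel P1L P2L a b j ω + RjR sel P1L P2L a b j ω)

/-- `S`, the number of true directional replicability claims. -/
noncomputable def Stot (H1 H2 : Fin m → ℤ) (sel : (Fin m → ℝ) → Finset (Fin m))
    (P1L P2L : Fin m → Ω → ℝ) (a b : ℝ) (ω : Ω) : ℕ :=
  ∑ j ∈ Finset.univ.filter (fun j => H1 j = 1 ∧ H2 j = 1), RjR sel P1L P2L a b j ω +
  ∑ j ∈ Finset.univ.filter (fun j => H1 j = -1 ∧ H2 j = -1), RjL sel P1L P2L a b j ω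

end Replicability

/- ======================= auxiliary material ======================= -/

section Aux

variable {Ω : Type} {m : ℕ}

/-- Extend a sub-uniform tail bound beyond `t = 1`. -/
lemma probBound_ext [MeasureSpace Ω] [IsProbabilityMeasure (ℙ : Measure Ω)]
    (X : Ω → ℝ) (h : ∀ t ∈ Icc (0:ℝ) 1, ℙ {ω | X ω ≤ t} ≤ ENNReal.ofReal t)
    {t : ℝ} (ht : 0 ≤ t) : ℙ {ω | X ω ≤ t} ≤ ENNReal.ofReal t := by
  rcases le_or_gt t 1 with h1 | h1
  · exact h t ⟨ht, h1⟩
  · calc ℙ {ω | X ω ≤ t} ≤ 1 := prob_le_one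
      _ = ENNReal.ofReal 1 := by simp
      _ ≤ ENNReal.ofReal t := ENNReal.ofReal_le_ofReal h1.le

/-- If `X` is uniformly distributed on `[0,1]`, then `1 - X` is stochastically sub-uniform. -/
lemma unif_compl [MeasureSpace Ω] [IsProbabilityMeasure (ℙ : Measure Ω)]
    (X : Ω → ℝ) (hX : Measurable X)
    (h : ∀ t ∈ Icc (0:ℝ) 1, ℙ {ω | X ω ≤ t} = ENNReal.ofReal t)
    {t : ℝ} (ht : 0 ≤ t) : ℙ {ω | 1 - X ω ≤ t} ≤ ENNReal.ofReal t := by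
  refine ENNReal.le_of_forall_pos_le_add fun ε hε _ => ?_
  have hε' : (0:ℝ) < (ε : ℝ) := NNReal.coe_pos.mpr hε
  have hofadd : ENNReal.ofReal t + (ε : ENNReal) = ENNReal.ofReal (t + (ε:ℝ)) := by
    rw [ENNReal.ofReal_add ht hε'.le, ENNReal.ofReal_coe_nnreal]
  rw [hofadd]
  rcases lt_or_ge (1 - t - (ε:ℝ)) 0 with hneg | hpos
  · calc ℙ {ω | 1 - X ω ≤ t} ≤ 1 := prob_le_one
      _ ≤ ENNReal.ofReal (t + (ε:ℝ)) := by
          rw [show (1 : ENNReal) = ENNReal.ofReal 1 by simp]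
          exact ENNReal.ofReal_le_ofReal (by linarith)
  · have hmem : (1 - t - (ε:ℝ) : ℝ) ∈ Icc (0:ℝ) 1 := ⟨hpos, by linarith⟩
    have hsub : {ω | 1 - X ω ≤ t} ⊆ {ω | X ω ≤ 1 - t - (ε:ℝ)}ᶜ := by
      intro ω hω
      simp only [mem_setOf_eq, mem_compl_iff, not_le] at *
      linarith
    calc ℙ {ω | 1 - X ω ≤ t} ≤ ℙ {ω | X ω ≤ 1 - t - (ε:ℝ)}ᶜ := measure_mono hsub
      _ = 1 - ℙ {ω | X ω ≤ 1 - t - (ε:ℝ)} := prob_compl_eq_one_sub (hX measurableSet_Iic)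
      _ = 1 - ENNReal.ofReal (1 - t - (ε:ℝ)) := by rw [h _ hmem]
      _ ≤ ENNReal.ofReal (t + (ε:ℝ)) := by
          rw [tsub_le_iff_right, ← ENNReal.ofReal_add (by linarith) hpos]
          rw [show (1:ENNReal) = ENNReal.ofReal 1 by simp]
          exact ENNReal.ofReal_le_ofReal (by linarith)

/-- The event of a left-direction claim for feature `j`. -/
def ELset (sel : (Fin m → ℝ) → Finset (Fin m)) (P1L P2L : Fin m → Ω → ℝ)
    (a b : ℝ) (j : Fin m) : Set Ω :=
  {ω | Claim sel P1L P2L a b j ω ∧ P1L j ω < 1 - P1L j ω}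

/-- The event of a right-direction claim for feature `j`. -/
def ERset (sel : (Fin m → ℝ) → Finset (Fin m)) (P1L P2L : Fin m → Ω → ℝ)
    (a b : ℝ) (j : Fin m) : Set Ω :=
  {ω | Claim sel P1L P2L a b j ω ∧ ¬ (P1L j ω < 1 - P1L j ω)}

open Classical in
/-- Primary-study bounded part of the error event at feature `j`. -/
noncomputable def Xev (H1 H2 : Fin m → ℤ) (P1L : Fin m → Ω → ℝ) (a : ℝ) (j : Fin m) :
    Set Ω :=
  if H1 j = 0 ∧ H2 j = 0 then ∅
  else if H1 j = 1 ∨ (H1 j = 0 ∧ H2 j = -1) then {ω | P1L j ω ≤ a}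
  else {ω | 1 - P1L j ω ≤ a}

open Classical in
/-- Follow-up-study bounded part of the error event at feature `j`. -/
noncomputable def Yev (H1 H2 : Fin m → ℤ) (sel : (Fin m → ℝ) → Finset (Fin m))
    (P1L P2L : Fin m → Ω → ℝ) (a b : ℝ) (j : Fin m) : Set Ω :=
  if (H1 j = 1 ∧ H2 j = 1) ∨ (H1 j = -1 ∧ H2 j = -1) then ∅
  else ((if H2 j = -1 then ∅ else ELset sel P1L P2L a b j) ∪
        (if H2 j = 1 then ∅ else ERset sel P1L P2L a b j))

lemma ELset_p1 {sel : (Fin m → ℝ) → Finset (Fin m)} {P1L P2L : Fin m → Ω → ℝ}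
    {a b : ℝ} {j : Fin m} {ω : Ω} (h : ω ∈ ELset sel P1L P2L a b j) : P1L j ω ≤ a := by
  obtain ⟨⟨_, hp1, _⟩, hdir⟩ := h
  rw [p1', min_eq_left hdir.le] at hp1
  exact hp1

lemma ERset_p1 {sel : (Fin m → ℝ) → Finset (Fin m)} {P1L P2L : Fin m → Ω → ℝ}
    {a b : ℝ} {j : Fin m} {ω : Ω} (h : ω ∈ ERset sel P1L P2L a b j) : 1 - P1L j ω ≤ a := by
  obtain ⟨⟨_, hp1, _⟩, hdir⟩ := h
  rw [p1', min_eq_right (not_lt.mp hdir)] at hp1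
  exact hp1

/-- Inclusion of the error event into the union of the per-feature bounded parts. -/
lemma error_subset (H1 H2 : Fin m → ℤ) (sel : (Fin m → ℝ) → Finset (Fin m))
    (P1L P2L : Fin m → Ω → ℝ) (a b : ℝ)
    (hH1 : ∀ j, H1 j = -1 ∨ H1 j = 0 ∨ H1 j = 1)
    (hH2 : ∀ j, H2 j = -1 ∨ H2 j = 0 ∨ H2 j = 1) :
    {ω | Stot H1 H2 sel P1L P2L a b ω < Rtot sel P1L P2L a b ω} ⊆
      ⋃ j, (Xev H1 H2 P1L a j ∪ Yev H1 H2 sel P1L P2L a b j) := by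
  classical
  intro ω hω
  simp only [mem_setOf_eq] at hω
  -- there is a false claim
  have hfalse : ∃ j, (¬(H1 j = -1 ∧ H2 j = -1) ∧ ω ∈ ELset sel P1L P2L a b j) ∨
      (¬(H1 j = 1 ∧ H2 j = 1) ∧ ω ∈ ERset sel P1L P2L a b j) := by
    by_contra hc
    push_neg at hc
    refine absurd hω (not_lt.mpr (le_of_eq ?_))
    have hL : ∀ j, ¬(H1 j = -1 ∧ H2 j = -1) → RjL sel P1L P2L a b j ω = 0 := by
      intro j hj
      have := (hc j).1 (fun h1' h2' => hj ⟨h1', h2'⟩)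
      rw [RjL]; exact if_neg this
    have hR : ∀ j, ¬(H1 j = 1 ∧ H2 j = 1) → RjR sel P1L P2L a b j ω = 0 := by
      intro j hj
      have := (hc j).2 (fun h1' h2' => hj ⟨h1', h2'⟩)
      rw [RjR]; exact if_neg this
    rw [Rtot, Stot, Finset.sum_add_distrib]
    rw [← Finset.sum_filter_add_sum_filter_not Finset.univ
      (fun j => H1 j = -1 ∧ H2 j = -1) (fun j => RjL sel P1L P2L a b j ω)]
    rw [← Finset.sum_filter_add_sum_filter_not Finset.univ
      (fun j => H1 j = 1 ∧ H2 j = 1) (fun j => RjR sel P1L P2L a b j ω)]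
    rw [Finset.sum_eq_zero (fun j hj => hL j (Finset.mem_filter.mp hj).2),
        Finset.sum_eq_zero (fun j hj => hR j (Finset.mem_filter.mp hj).2)]
    ring
  obtain ⟨j, hj⟩ := hfalse
  refine mem_iUnion.mpr ⟨j, ?_⟩
  rcases hj with ⟨hne, hEL⟩ | ⟨hne, hER⟩
  · -- a false left claim
    rcases hH1 j with h1 | h1 | h1
    · -- H1 j = -1, so H2 j ≠ -1 : goes into Yev
      have h2 : H2 j ≠ -1 := fun h2 => hne ⟨h1, h2⟩
      refine Or.inr ?_
      rw [Yev, if_neg (by rintro (⟨ha, hb⟩ | ⟨ha, hb⟩) <;> omega)]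
      exact Or.inl (by rw [if_neg h2]; exact hEL)
    · -- H1 j = 0
      rcases hH2 j with h2 | h2 | h2
      · -- H2 j = -1 : goes into Xev
        refine Or.inl ?_
        rw [Xev, if_neg (by rintro ⟨_, hb⟩; omega), if_pos (Or.inr ⟨h1, h2⟩)]
        exact ELset_p1 hEL
      · -- H2 j = 0 : goes into Yev
        refine Or.inr ?_
        rw [Yev, if_neg (by rintro (⟨ha, _⟩ | ⟨hb, _⟩) <;> omega)]
        exact Or.inl (by rw [if_neg (by omega)]; exact hEL)
      · -- H2 j = 1 : goes into Yev
        refine Or.inr ?_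
        rw [Yev, if_neg (by rintro (⟨ha, _⟩ | ⟨hb, _⟩) <;> omega)]
        exact Or.inl (by rw [if_neg (by omega)]; exact hEL)
    · -- H1 j = 1 : goes into Xev
      refine Or.inl ?_
      rw [Xev, if_neg (by rintro ⟨ha, _⟩; omega), if_pos (Or.inl h1)]
      exact ELset_p1 hEL
  · -- a false right claim
    rcases hH1 j with h1 | h1 | h1
    · -- H1 j = -1 : goes into Xev
      refine Or.inl ?_
      rw [Xev, if_neg (by rintro ⟨ha, _⟩; omega),
        if_neg (by rintro (ha | ⟨hb, _⟩) <;> omega)]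
      exact ERset_p1 hER
    · -- H1 j = 0
      rcases hH2 j with h2 | h2 | h2
      · -- H2 j = -1 : goes into Yev
        refine Or.inr ?_
        rw [Yev, if_neg (by rintro (⟨ha, _⟩ | ⟨hb, _⟩) <;> omega)]
        exact Or.inr (by rw [if_neg (by omega)]; exact hER)
      · -- H2 j = 0 : goes into Yev
        refine Or.inr ?_
        rw [Yev, if_neg (by rintro (⟨ha, _⟩ | ⟨hb, _⟩) <;> omega)]
        exact Or.inr (by rw [if_neg (by omega)]; exact hER)
      · -- H2 j = 1 : goes into Xev
        refine Or.inl ?_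
        rw [Xev, if_neg (by rintro ⟨_, hb⟩; omega),
          if_neg (by rintro (ha | ⟨_, hb⟩) <;> omega)]
        exact ERset_p1 hER
    · -- H1 j = 1, so H2 j ≠ 1 : goes into Yev
      have h2 : H2 j ≠ 1 := fun h2 => hne ⟨h1, h2⟩
      refine Or.inr ?_
      rw [Yev, if_neg (by rintro (⟨ha, hb⟩ | ⟨ha, hb⟩) <;> omega)]
      exact Or.inr (by rw [if_neg h2]; exact hER)

section Aux2

variable {Ω : Type} {m : ℕ}

/-- Primary-study event: selected set equals `s` and the direction at `j` is left. -/
def primL (sel : (Fin m → ℝ) → Finset (Fin m)) (P1L : Fin m → Ω → ℝ)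
    (s : Finset (Fin m)) (j : Fin m) : Set Ω :=
  (fun ω (i : Fin m) => P1L i ω) ⁻¹' {v | sel v = s ∧ v j < 1 - v j}

/-- Primary-study event: selected set equals `s` and the direction at `j` is right. -/
def primR (sel : (Fin m → ℝ) → Finset (Fin m)) (P1L : Fin m → Ω → ℝ)
    (s : Finset (Fin m)) (j : Fin m) : Set Ω :=
  (fun ω (i : Fin m) => P1L i ω) ⁻¹' {v | sel v = s ∧ ¬ (v j < 1 - v j)}

lemma measurable_TL (sel : (Fin m → ℝ) → Finset (Fin m))
    (selMeas : @Measurable (Fin m → ℝ) (Finset (Fin m)) _ ⊤ sel) (s : Finset (Fin m))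
    (j : Fin m) : MeasurableSet {v : Fin m → ℝ | sel v = s ∧ v j < 1 - v j} := by
  have h1 : MeasurableSet {v : Fin m → ℝ | sel v = s} :=
    selMeas (show MeasurableSet[⊤] {s} from trivial)
  have h2 : MeasurableSet {v : Fin m → ℝ | v j < 1 - v j} :=
    measurableSet_lt (measurable_pi_apply j) (measurable_const.sub (measurable_pi_apply j))
  exact h1.inter h2

lemma measurable_TR (sel : (Fin m → ℝ) → Finset (Fin m))
    (selMeas : @Measurable (Fin m → ℝ) (Finset (Fin m)) _ ⊤ sel) (s : Finset (Fin m))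
    (j : Fin m) : MeasurableSet {v : Fin m → ℝ | sel v = s ∧ ¬ (v j < 1 - v j)} := by
  have h1 : MeasurableSet {v : Fin m → ℝ | sel v = s} :=
    selMeas (show MeasurableSet[⊤] {s} from trivial)
  have h2 : MeasurableSet {v : Fin m → ℝ | v j < 1 - v j} :=
    measurableSet_lt (measurable_pi_apply j) (measurable_const.sub (measurable_pi_apply j))
  exact h1.inter h2.compl

/-- The key "selection trick" bound: the total probability of the follow-up-bounded error
parts is at most `b`. -/
lemma Ysum_le [MeasureSpace Ω] [IsProbabilityMeasure (ℙ : Measure Ω)]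
    (H1 H2 : Fin m → ℤ) (hH2 : ∀ j, H2 j = -1 ∨ H2 j = 0 ∨ H2 j = 1)
    (sel : (Fin m → ℝ) → Finset (Fin m))
    (selMeas : @Measurable (Fin m → ℝ) (Finset (Fin m)) _ ⊤ sel)
    (P1L P2L : Fin m → Ω → ℝ)
    (measP1 : ∀ j, Measurable (P1L j)) (measP2 : ∀ j, Measurable (P2L j))
    (unif2 : ∀ j, H2 j = 0 → ∀ t ∈ Icc (0:ℝ) 1, ℙ {ω | P2L j ω ≤ t} = ENNReal.ofReal t)
    (stoch2R : ∀ j, H2 j = 1 → ∀ t ∈ Icc (0:ℝ) 1, ℙ {ω | P2L j ω ≤ t} ≤ ENNReal.ofReal t)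
    (stoch2L : ∀ j, H2 j = -1 →
      ∀ t ∈ Icc (0:ℝ) 1, ℙ {ω | 1 - P2L j ω ≤ t} ≤ ENNReal.ofReal t)
    (indep : ∀ j, ¬ ((H1 j = 1 ∧ H2 j = 1) ∨ (H1 j = -1 ∧ H2 j = -1)) →
      IndepFun (P2L j) (fun ω => fun i => P1L i ω) ℙ)
    (a b : ℝ) (hb0 : 0 ≤ b) (hb1 : b ≤ 1) :
    ∑ j : Fin m, ℙ (Yev H1 H2 sel P1L P2L a b j) ≤ ENNReal.ofReal b := by
  classical
  have measVec : Measurable (fun ω (i : Fin m) => P1L i ω) :=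
    measurable_pi_lambda _ measP1
  have measPrimL : ∀ s j, MeasurableSet (primL sel P1L s j) :=
    fun s j => measVec (measurable_TL sel selMeas s j)
  have measPrimR : ∀ s j, MeasurableSet (primR sel P1L s j) :=
    fun s j => measVec (measurable_TR sel selMeas s j)
  -- bound for an included left direction
  have hELb : ∀ j, ¬ ((H1 j = 1 ∧ H2 j = 1) ∨ (H1 j = -1 ∧ H2 j = -1)) → H2 j ≠ -1 →
      ℙ (ELset sel P1L P2L a b j) ≤ ∑ s : Finset (Fin m),
        (if j ∈ s then ℙ (primL sel P1L s j) * ENNReal.ofReal (b / (s.card : ℝ)) else 0) := by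
    intro j hsp h2
    have hsub : ELset sel P1L P2L a b j ⊆ ⋃ s ∈ (Finset.univ : Finset (Finset (Fin m))),
        (if j ∈ s then primL sel P1L s j ∩ (P2L j) ⁻¹' (Iic (b / (s.card : ℝ)))
         else (∅ : Set Ω)) := by
      intro ω hω
      obtain ⟨⟨hjR1, hp1, hp2⟩, hdir⟩ := hω
      refine mem_iUnion₂.mpr ⟨R1set sel P1L ω, Finset.mem_univ _, ?_⟩
      rw [if_pos hjR1]
      refine ⟨⟨rfl, hdir⟩, ?_⟩
      rw [p2', if_pos hdir] at hp2
      exact hp2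
    refine le_trans (measure_mono hsub) (le_trans (measure_biUnion_finset_le _ _)
      (Finset.sum_le_sum fun s _ => ?_))
    by_cases hjs : j ∈ s
    · rw [if_pos hjs, if_pos hjs]
      have hcard : 1 ≤ s.card := Finset.card_pos.mpr ⟨j, hjs⟩
      have ht : b / (s.card : ℝ) ∈ Icc (0:ℝ) 1 :=
        ⟨div_nonneg hb0 (Nat.cast_nonneg _),
          le_trans (div_le_self hb0 (by exact_mod_cast hcard)) hb1⟩
      have hind := (indepFun_iff_measure_inter_preimage_eq_mul.mp (indep j hsp))
        (Iic (b / (s.card : ℝ))) {v : Fin m → ℝ | sel v = s ∧ v j < 1 - v j}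
        measurableSet_Iic (measurable_TL sel selMeas s j)
      have hP2 : ℙ ((P2L j) ⁻¹' (Iic (b / (s.card : ℝ)))) ≤ ENNReal.ofReal (b / (s.card : ℝ)) := by
        rcases hH2 j with h | h | h
        · exact absurd h h2
        · exact le_of_eq (unif2 j h _ ht)
        · exact stoch2R j h _ ht
      calc ℙ (primL sel P1L s j ∩ (P2L j) ⁻¹' (Iic (b / (s.card : ℝ))))
          = ℙ ((P2L j) ⁻¹' (Iic (b / (s.card : ℝ))) ∩
              (fun ω (i : Fin m) => P1L i ω) ⁻¹' {v | sel v = s ∧ v j < 1 - v j}) := by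
            rw [inter_comm]; rfl
        _ = ℙ ((P2L j) ⁻¹' (Iic (b / (s.card : ℝ)))) *
              ℙ ((fun ω (i : Fin m) => P1L i ω) ⁻¹' {v | sel v = s ∧ v j < 1 - v j}) := hind
        _ ≤ ENNReal.ofReal (b / (s.card : ℝ)) * ℙ (primL sel P1L s j) :=
            mul_le_mul_left hP2 _
        _ = ℙ (primL sel P1L s j) * ENNReal.ofReal (b / (s.card : ℝ)) := mul_comm _ _
    · rw [if_neg hjs, if_neg hjs]
      simp
  -- bound for an included right direction
  have hERb : ∀ j, ¬ ((H1 j = 1 ∧ H2 j = 1) ∨ (H1 j = -1 ∧ H2 j = -1)) → H2 j ≠ 1 →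
      ℙ (ERset sel P1L P2L a b j) ≤ ∑ s : Finset (Fin m),
        (if j ∈ s then ℙ (primR sel P1L s j) * ENNReal.ofReal (b / (s.card : ℝ)) else 0) := by
    intro j hsp h2
    have hsub : ERset sel P1L P2L a b j ⊆ ⋃ s ∈ (Finset.univ : Finset (Finset (Fin m))),
        (if j ∈ s then primR sel P1L s j ∩
          (P2L j) ⁻¹' {x : ℝ | 1 - x ≤ b / (s.card : ℝ)} else (∅ : Set Ω)) := by
      intro ω hω
      obtain ⟨⟨hjR1, hp1, hp2⟩, hdir⟩ := hω
      refine mem_iUnion₂.mpr ⟨R1set sel P1L ω, Finset.mem_univ _, ?_⟩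
      rw [if_pos hjR1]
      refine ⟨⟨rfl, hdir⟩, ?_⟩
      rw [p2', if_neg hdir] at hp2
      exact hp2
    refine le_trans (measure_mono hsub) (le_trans (measure_biUnion_finset_le _ _)
      (Finset.sum_le_sum fun s _ => ?_))
    by_cases hjs : j ∈ s
    · rw [if_pos hjs, if_pos hjs]
      have hcard : 1 ≤ s.card := Finset.card_pos.mpr ⟨j, hjs⟩
      have ht : b / (s.card : ℝ) ∈ Icc (0:ℝ) 1 :=
        ⟨div_nonneg hb0 (Nat.cast_nonneg _),
          le_trans (div_le_self hb0 (by exact_mod_cast hcard)) hb1⟩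
      have hIci : {x : ℝ | 1 - x ≤ b / (s.card : ℝ)} = Ici (1 - b / (s.card : ℝ)) := by
        ext x
        simp only [mem_setOf_eq, mem_Ici]
        constructor <;> intro <;> linarith
      have hmeasIci : MeasurableSet {x : ℝ | 1 - x ≤ b / (s.card : ℝ)} := by
        rw [hIci]; exact measurableSet_Ici
      have hind := (indepFun_iff_measure_inter_preimage_eq_mul.mp (indep j hsp))
        {x : ℝ | 1 - x ≤ b / (s.card : ℝ)} {v : Fin m → ℝ | sel v = s ∧ ¬ (v j < 1 - v j)}
        hmeasIci (measurable_TR sel selMeas s j)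
      have hP2 : ℙ ((P2L j) ⁻¹' {x : ℝ | 1 - x ≤ b / (s.card : ℝ)}) ≤
          ENNReal.ofReal (b / (s.card : ℝ)) := by
        rcases hH2 j with h | h | h
        · exact stoch2L j h _ ht
        · exact unif_compl (P2L j) (measP2 j) (unif2 j h) ht.1
        · exact absurd h h2
      calc ℙ (primR sel P1L s j ∩ (P2L j) ⁻¹' {x : ℝ | 1 - x ≤ b / (s.card : ℝ)})
          = ℙ ((P2L j) ⁻¹' {x : ℝ | 1 - x ≤ b / (s.card : ℝ)} ∩
              (fun ω (i : Fin m) => P1L i ω) ⁻¹' {v | sel v = s ∧ ¬ (v j < 1 - v j)}) := by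
            rw [inter_comm]; rfl
        _ = ℙ ((P2L j) ⁻¹' {x : ℝ | 1 - x ≤ b / (s.card : ℝ)}) *
              ℙ ((fun ω (i : Fin m) => P1L i ω) ⁻¹' {v | sel v = s ∧ ¬ (v j < 1 - v j)}) := hind
        _ ≤ ENNReal.ofReal (b / (s.card : ℝ)) * ℙ (primR sel P1L s j) :=
            mul_le_mul_left hP2 _
        _ = ℙ (primR sel P1L s j) * ENNReal.ofReal (b / (s.card : ℝ)) := mul_comm _ _
    · rw [if_neg hjs, if_neg hjs]
      simp
  -- per-feature combined bound
  have hY : ∀ j : Fin m, ℙ (Yev H1 H2 sel P1L P2L a b j) ≤ ∑ s : Finset (Fin m),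
      (if j ∈ s then (ℙ (primL sel P1L s j) + ℙ (primR sel P1L s j)) *
        ENNReal.ofReal (b / (s.card : ℝ)) else 0) := by
    intro j
    by_cases hsp : (H1 j = 1 ∧ H2 j = 1) ∨ (H1 j = -1 ∧ H2 j = -1)
    · rw [Yev, if_pos hsp]
      simp
    · rw [Yev, if_neg hsp]
      have hL : ℙ (if H2 j = -1 then (∅ : Set Ω) else ELset sel P1L P2L a b j) ≤
          ∑ s : Finset (Fin m), (if j ∈ s then
            ℙ (primL sel P1L s j) * ENNReal.ofReal (b / (s.card : ℝ)) else 0) := by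
        by_cases h2 : H2 j = -1
        · rw [if_pos h2]; simp
        · rw [if_neg h2]; exact hELb j hsp h2
      have hR : ℙ (if H2 j = 1 then (∅ : Set Ω) else ERset sel P1L P2L a b j) ≤
          ∑ s : Finset (Fin m), (if j ∈ s then
            ℙ (primR sel P1L s j) * ENNReal.ofReal (b / (s.card : ℝ)) else 0) := by
        by_cases h2 : H2 j = 1
        · rw [if_pos h2]; simp
        · rw [if_neg h2]; exact hERb j hsp h2
      refine le_trans (measure_union_le _ _) (le_trans (add_le_add hL hR) (le_of_eq ?_))
      rw [← Finset.sum_add_distrib]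
      refine Finset.sum_congr rfl fun s _ => ?_
      by_cases hjs : j ∈ s
      · rw [if_pos hjs, if_pos hjs, if_pos hjs, add_mul]
      · rw [if_neg hjs, if_neg hjs, if_neg hjs, add_zero]
  -- sum over features, swap sums
  calc ∑ j : Fin m, ℙ (Yev H1 H2 sel P1L P2L a b j)
      ≤ ∑ j : Fin m, ∑ s : Finset (Fin m),
          (if j ∈ s then (ℙ (primL sel P1L s j) + ℙ (primR sel P1L s j)) *
            ENNReal.ofReal (b / (s.card : ℝ)) else 0) := Finset.sum_le_sum fun j _ => hY j
    _ = ∑ s : Finset (Fin m), ∑ j : Fin m,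
          (if j ∈ s then (ℙ (primL sel P1L s j) + ℙ (primR sel P1L s j)) *
            ENNReal.ofReal (b / (s.card : ℝ)) else 0) := Finset.sum_comm
    _ ≤ ∑ s : Finset (Fin m),
          ℙ ((fun ω (i : Fin m) => P1L i ω) ⁻¹' {v | sel v = s}) * ENNReal.ofReal b := by
        refine Finset.sum_le_sum fun s _ => ?_
        have hq : ∀ j : Fin m, ℙ (primL sel P1L s j) + ℙ (primR sel P1L s j) =
            ℙ ((fun ω (i : Fin m) => P1L i ω) ⁻¹' {v | sel v = s}) := by
          intro j
          rw [← measure_union ?_ (measPrimR s j)]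
          · congr 1
            ext ω
            simp only [primL, primR, mem_union, mem_preimage, mem_setOf_eq]
            tauto
          · exact Disjoint.preimage _ (disjoint_left.mpr (by rintro v ⟨_, h⟩ ⟨_, h'⟩; exact h' h))
        rw [Finset.sum_ite_mem, Finset.univ_inter]
        calc ∑ j ∈ s, (ℙ (primL sel P1L s j) + ℙ (primR sel P1L s j)) *
              ENNReal.ofReal (b / (s.card : ℝ))
            = ∑ j ∈ s, ℙ ((fun ω (i : Fin m) => P1L i ω) ⁻¹' {v | sel v = s}) *
              ENNReal.ofReal (b / (s.card : ℝ)) := by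
              refine Finset.sum_congr rfl fun j _ => by rw [hq j]
          _ = s.card • (ℙ ((fun ω (i : Fin m) => P1L i ω) ⁻¹' {v | sel v = s}) *
              ENNReal.ofReal (b / (s.card : ℝ))) := Finset.sum_const _
          _ ≤ ℙ ((fun ω (i : Fin m) => P1L i ω) ⁻¹' {v | sel v = s}) * ENNReal.ofReal b := by
              rcases Nat.eq_zero_or_pos s.card with h0 | hpos
              · rw [h0, zero_smul]; exact zero_le
              · have hne : (s.card : ℝ) ≠ 0 := by positivity
                rw [nsmul_eq_mul, ← mul_assoc, mul_comm ((s.card : ℕ) : ENNReal), mul_assoc]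
                refine mul_le_mul_right ?_ _
                rw [← ENNReal.ofReal_natCast, ← ENNReal.ofReal_mul (Nat.cast_nonneg _)]
                refine ENNReal.ofReal_le_ofReal (le_of_eq ?_)
                field_simp
    _ ≤ ENNReal.ofReal b := by
        rw [← Finset.sum_mul]
        refine le_trans (mul_le_mul_left ?_ _) (one_mul _).le
        have hdisj : (((Finset.univ : Finset (Finset (Fin m))) : Set (Finset (Fin m)))).PairwiseDisjoint
            (fun s => (fun ω (i : Fin m) => P1L i ω) ⁻¹' {v | sel v = s}) := by
          intro s _ t _ hst
          refine Disjoint.preimage _ (disjoint_left.mpr ?_)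
          rintro v hv hv'
          exact hst (hv ▸ hv'.symm ▸ rfl)
        have hmeas : ∀ s ∈ (Finset.univ : Finset (Finset (Fin m))),
            MeasurableSet ((fun ω (i : Fin m) => P1L i ω) ⁻¹' {v | sel v = s}) :=
          fun s _ => measVec (selMeas (show MeasurableSet[⊤] {s} from trivial))
        rw [← measure_biUnion_finset hdisj hmeas]
        exact prob_le_one

end Aux2


/-- Theorem 2 of the paper: the directional FWER replicability procedure at level `α`
controls the directional FWER for replicability analysis at level `α`, provided
`l₀₀ ≤ f₀₀` and, for features `j` with `H_j ∉ {(1,1),(−1,−1)}`, the follow-up p-value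
is independent of the primary-study p-values. -/
theorem stmt7
    {Ω : Type} [MeasureSpace Ω] [IsProbabilityMeasure (ℙ : Measure Ω)]
    -- the number of features
    (m : ℕ) (hm : 1 ≤ m)
    -- the hypothesis configuration H_j = (H1 j, H2 j) ∈ {-1,0,1}²
    (H1 H2 : Fin m → ℤ)
    (hH1 : ∀ j, H1 j = -1 ∨ H1 j = 0 ∨ H1 j = 1)
    (hH2 : ∀ j, H2 j = -1 ∨ H2 j = 0 ∨ H2 j = 1)
    -- the left-sided p-values of the two studies (the right-sided ones are 1 - P1L, 1 - P2L)
    (P1L P2L : Fin m → Ω → ℝ)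
    (measP1 : ∀ j, Measurable (P1L j)) (measP2 : ∀ j, Measurable (P2L j))
    (range1 : ∀ j ω, P1L j ω ∈ Icc (0:ℝ) 1) (range2 : ∀ j ω, P2L j ω ∈ Icc (0:ℝ) 1)
    (neHalf : ∀ j, ∀ᵐ ω ∂ℙ, P1L j ω ≠ 1/2)
    -- null p-values are uniform
    (unif1 : ∀ j, H1 j = 0 → ∀ t ∈ Icc (0:ℝ) 1, ℙ {ω | P1L j ω ≤ t} = ENNReal.ofReal t)
    (unif2 : ∀ j, H2 j = 0 → ∀ t ∈ Icc (0:ℝ) 1, ℙ {ω | P2L j ω ≤ t} = ENNReal.ofReal t)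
    -- under a true right-sided (resp. left-sided) alternative, the left-sided (resp.
    -- right-sided) p-value is stochastically larger than or equal to uniform
    (stoch1R : ∀ j, H1 j = 1 → ∀ t ∈ Icc (0:ℝ) 1, ℙ {ω | P1L j ω ≤ t} ≤ ENNReal.ofReal t)
    (stoch2R : ∀ j, H2 j = 1 → ∀ t ∈ Icc (0:ℝ) 1, ℙ {ω | P2L j ω ≤ t} ≤ ENNReal.ofReal t)
    (stoch1L : ∀ j, H1 j = -1 →
      ∀ t ∈ Icc (0:ℝ) 1, ℙ {ω | 1 - P1L j ω ≤ t} ≤ ENNReal.ofReal t)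
    (stoch2L : ∀ j, H2 j = -1 →
      ∀ t ∈ Icc (0:ℝ) 1, ℙ {ω | 1 - P2L j ω ≤ t} ≤ ENNReal.ofReal t)
    -- the selection rule: a measurable, nonempty-set-valued function of the primary p-values
    (sel : (Fin m → ℝ) → Finset (Fin m))
    (selMeas : @Measurable (Fin m → ℝ) (Finset (Fin m)) _ ⊤ sel)
    (selNonempty : ∀ p, (sel p).Nonempty)
    -- the parameters l₀₀ ∈ [0,1) and c₂ ∈ (0,1)
    (l00 c2 : ℝ) (hl00 : l00 ∈ Ico (0:ℝ) 1) (hc2 : c2 ∈ Ioo (0:ℝ) 1)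
    -- the level of the procedure
    (α : ℝ) (hα : α ∈ Ioo (0:ℝ) 1)
    -- l₀₀ ≤ f₀₀
    (hf00 : l00 ≤ ((Finset.univ.filter (fun j => H1 j = 0 ∧ H2 j = 0)).card : ℝ) / (m : ℝ))
    -- for features with H_j ∉ {(1,1),(−1,−1)}, the follow-up p-value is independent of
    -- the vector of primary-study p-values
    (indep : ∀ j, ¬ ((H1 j = 1 ∧ H2 j = 1) ∨ (H1 j = -1 ∧ H2 j = -1)) →
      IndepFun (P2L j) (fun ω => fun i => P1L i ω) ℙ) :
    ℙ {ω | Stot H1 H2 sel P1L P2L (c1 l00 c2 α * α / (m : ℝ)) (c2 * α) ω <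
        Rtot sel P1L P2L (c1 l00 c2 α * α / (m : ℝ)) (c2 * α) ω} ≤ ENNReal.ofReal α := by
  classical
  obtain ⟨hl0, hl1⟩ := hl00
  obtain ⟨hc20, hc21⟩ := hc2
  obtain ⟨hα0, hα1⟩ := hα
  set a := c1 l00 c2 α * α / (m : ℝ) with ha_def
  set b := c2 * α with hb_def
  have hmR : (0:ℝ) < m := by exact_mod_cast Nat.lt_of_lt_of_le Nat.zero_lt_one hm
  have hb0 : (0:ℝ) ≤ b := le_of_lt (mul_pos hc20 hα0)
  have hbα : b < 1 := by nlinarith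
  have hD : 0 < 1 - l00 * (1 - c2 * α) := by nlinarith
  have hc1nn : 0 ≤ c1 l00 c2 α := div_nonneg (by linarith) hD.le
  have ha0 : 0 ≤ a := div_nonneg (mul_nonneg hc1nn hα0.le) hmR.le
  -- per-feature bound for the primary-study parts
  have hX : ∀ j, ℙ (Xev H1 H2 P1L a j) ≤
      (if H1 j = 0 ∧ H2 j = 0 then 0 else ENNReal.ofReal a) := by
    intro j
    by_cases h00 : H1 j = 0 ∧ H2 j = 0
    · rw [Xev, if_pos h00, if_pos h00]; simp
    · rw [Xev, if_neg h00, if_neg h00]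
      by_cases hg : H1 j = 1 ∨ (H1 j = 0 ∧ H2 j = -1)
      · rw [if_pos hg]
        have hb' : ∀ t ∈ Icc (0:ℝ) 1, ℙ {ω | P1L j ω ≤ t} ≤ ENNReal.ofReal t := by
          rcases hg with h | ⟨h, _⟩
          · exact stoch1R j h
          · exact fun t ht => (unif1 j h t ht).le
        exact probBound_ext (fun ω => P1L j ω) hb' ha0
      · rw [if_neg hg]
        rcases hH1 j with h | h | h
        · exact probBound_ext (fun ω => 1 - P1L j ω) (fun t ht => stoch1L j h t ht) ha0
        · exact unif_compl (P1L j) (measP1 j) (unif1 j h) ha0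
        · exact absurd (Or.inl h) hg
  set N := (Finset.univ.filter (fun j => ¬(H1 j = 0 ∧ H2 j = 0))).card with hN_def
  set M0 := (Finset.univ.filter (fun j => H1 j = 0 ∧ H2 j = 0)).card with hM0_def
  have hXsum : ∑ j : Fin m, ℙ (Xev H1 H2 P1L a j) ≤ (N : ENNReal) * ENNReal.ofReal a := by
    calc ∑ j : Fin m, ℙ (Xev H1 H2 P1L a j)
        ≤ ∑ j : Fin m, (if H1 j = 0 ∧ H2 j = 0 then 0 else ENNReal.ofReal a) :=
          Finset.sum_le_sum fun j _ => hX j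
      _ = (N : ENNReal) * ENNReal.ofReal a := by
          rw [Finset.sum_ite, Finset.sum_const_zero, zero_add, Finset.sum_const,
            nsmul_eq_mul]
  have hYsum := Ysum_le H1 H2 hH2 sel selMeas P1L P2L measP1 measP2 unif2 stoch2R stoch2L
    indep a b hb0 hbα.le
  -- combine
  have hNM : M0 + N = m := by
    rw [hM0_def, hN_def]
    rw [Finset.card_filter_add_card_filter_not]
    simp
  have hreal : (N:ℝ) * a + b ≤ α := by
    have hM0R : l00 * m ≤ (M0:ℝ) := (le_div_iff₀ hmR).mp hf00
    have hcast : (N:ℝ) = (m:ℝ) - (M0:ℝ) := by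
      have : ((M0 + N : ℕ) : ℝ) = (m:ℝ) := by rw [hNM]
      push_cast at this
      linarith
    have hNle : (N:ℝ) ≤ (1 - l00 * (1 - c2*α)) * m := by
      nlinarith [mul_nonneg (mul_nonneg (mul_nonneg hl0 hc20.le) hα0.le) hmR.le]
    have hc1D : c1 l00 c2 α * (1 - l00 * (1 - c2 * α)) = 1 - c2 :=
      div_mul_cancel₀ _ hD.ne'
    have hNa : (N:ℝ) * a ≤ (1 - c2) * α := by
      rw [ha_def]
      have h1 : (N:ℝ) * (c1 l00 c2 α * α / m) = ((N:ℝ) * c1 l00 c2 α) * α / m := by ring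
      rw [h1]
      have h2 : (N:ℝ) * c1 l00 c2 α ≤ (1-c2) * m := by
        calc (N:ℝ) * c1 l00 c2 α
            ≤ ((1 - l00*(1-c2*α)) * m) * c1 l00 c2 α :=
              mul_le_mul_of_nonneg_right hNle hc1nn
          _ = (c1 l00 c2 α * (1 - l00*(1-c2*α))) * m := by ring
          _ = (1-c2)*m := by rw [hc1D]
      calc ((N:ℝ) * c1 l00 c2 α) * α / m ≤ ((1-c2)*m)*α/m := by
            gcongr
        _ = (1-c2)*α := by field_simp
    rw [hb_def]
    linarith
  have hfinal : (N : ENNReal) * ENNReal.ofReal a + ENNReal.ofReal b ≤ ENNReal.ofReal α := by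
    rw [← ENNReal.ofReal_natCast N, ← ENNReal.ofReal_mul (Nat.cast_nonneg N),
      ← ENNReal.ofReal_add (mul_nonneg (Nat.cast_nonneg _) ha0) hb0]
    exact ENNReal.ofReal_le_ofReal hreal
  calc ℙ {ω | Stot H1 H2 sel P1L P2L a b ω < Rtot sel P1L P2L a b ω}
      ≤ ℙ (⋃ j, (Xev H1 H2 P1L a j ∪ Yev H1 H2 sel P1L P2L a b j)) :=
        measure_mono (error_subset H1 H2 sel P1L P2L a b hH1 hH2)
    _ ≤ ∑' j, ℙ (Xev H1 H2 P1L a j ∪ Yev H1 H2 sel P1L P2L a b j) := measure_iUnion_le _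
    _ = ∑ j : Fin m, ℙ (Xev H1 H2 P1L a j ∪ Yev H1 H2 sel P1L P2L a b j) := tsum_fintype _
    _ ≤ ∑ j : Fin m, (ℙ (Xev H1 H2 P1L a j) + ℙ (Yev H1 H2 sel P1L P2L a b j)) :=
        Finset.sum_le_sum fun j _ => measure_union_le _ _
    _ = ∑ j : Fin m, ℙ (Xev H1 H2 P1L a j) + ∑ j : Fin m, ℙ (Yev H1 H2 sel P1L P2L a b j) :=
        Finset.sum_add_distrib
    _ ≤ (N : ENNReal) * ENNReal.ofReal a + ENNReal.ofReal b := add_le_add hXsum hYsum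
    _ ≤ ENNReal.ofReal α := hfinal
end Aux
end

section
/- Under the replicability setup with the directional FWER replicability procedure at level α ∈ (0,1), assume that for every feature j with H_j ∉ {(1,1),(−1,−1)}, the follow-up p-value P_{2j}^L is independent of the vector of primary-study p-values (P_{11}^L,…,P_{1m}^L). Then Pr(R − S > 0) ≤ c₁(α)c₂α²·#{j : H_j ∈ {(−1,0),(1,0),(0,0)}}/m + c₁(α)α·#{j : H_j ∈ {(0,1),(0,−1),(−1,−1),(1,1),(−1,1),(1,−1)}}/m + c₂α·E[ |R₁ ∩ {j : H_j ∈ {(−1,0),(1,0),(−1,1),(1,−1),(0,1),(0,−1),(0,0)}}| / |R₁| ]. -/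
open MeasureTheory ProbabilityTheory Set

section Aux
variable {Ω : Type} [MeasureSpace Ω] [IsProbabilityMeasure (ℙ : Measure Ω)]

omit [IsProbabilityMeasure (ℙ : Measure Ω)] in
lemma aux_stoch (Q : Ω → ℝ) (hQ1 : ∀ ω, Q ω ≤ 1)
    (hst : ∀ t ∈ Icc (0:ℝ) 1, ℙ {ω | Q ω ≤ t} ≤ ENNReal.ofReal t)
    {c : ℝ} (hc : 0 ≤ c) : ℙ {ω | Q ω ≤ c} ≤ ENNReal.ofReal c := by
  have h1 : {ω | Q ω ≤ c} ⊆ {ω | Q ω ≤ min c 1} := fun ω h => le_min h (hQ1 ω)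
  calc ℙ {ω | Q ω ≤ c} ≤ ℙ {ω | Q ω ≤ min c 1} := measure_mono h1
    _ ≤ ENNReal.ofReal (min c 1) := hst _ ⟨le_min hc zero_le_one, min_le_right _ _⟩
    _ ≤ ENNReal.ofReal c := ENNReal.ofReal_le_ofReal (min_le_left _ _)

lemma aux_unif_compl (X : Ω → ℝ) (hX : Measurable X)
    (hu : ∀ t ∈ Icc (0:ℝ) 1, ℙ {ω | X ω ≤ t} = ENNReal.ofReal t) :
    ∀ t ∈ Icc (0:ℝ) 1, ℙ {ω | 1 - X ω ≤ t} ≤ ENNReal.ofReal t := by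
  intro t ht
  rcases eq_or_lt_of_le ht.2 with h1 | h1
  · calc ℙ {ω | 1 - X ω ≤ t} ≤ 1 := prob_le_one
      _ = ENNReal.ofReal t := by rw [h1]; simp
  · apply ENNReal.le_of_forall_pos_le_add
    intro ε hε _
    set δ : ℝ := min (1 - t) ε with hδdef
    have hδpos : 0 < δ := lt_min (by linarith) (by exact_mod_cast hε)
    have hsub : {ω | 1 - X ω ≤ t} ⊆ {ω | X ω ≤ 1 - t - δ}ᶜ := by
      intro ω h hc
      simp only [mem_setOf_eq] at h hc
      linarith
    have hms : MeasurableSet {ω | X ω ≤ 1 - t - δ} := hX measurableSet_Iic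
    have hmem : (1 - t - δ) ∈ Icc (0:ℝ) 1 := by
      constructor
      · have : δ ≤ 1 - t := min_le_left _ _
        linarith
      · linarith [ht.1, hδpos]
    calc ℙ {ω | 1 - X ω ≤ t} ≤ ℙ ({ω | X ω ≤ 1 - t - δ}ᶜ) := measure_mono hsub
      _ = 1 - ℙ {ω | X ω ≤ 1 - t - δ} := by
          rw [measure_compl hms (measure_ne_top _ _), measure_univ]
      _ = 1 - ENNReal.ofReal (1 - t - δ) := by rw [hu _ hmem]
      _ = ENNReal.ofReal (1 - (1 - t - δ)) := by
          rw [ENNReal.ofReal_sub _ hmem.1, ENNReal.ofReal_one]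
      _ = ENNReal.ofReal (t + δ) := by ring_nf
      _ ≤ ENNReal.ofReal t + ENNReal.ofReal δ := ENNReal.ofReal_add_le
      _ ≤ ENNReal.ofReal t + ε := by
          gcongr
          calc ENNReal.ofReal δ ≤ ENNReal.ofReal ε := ENNReal.ofReal_le_ofReal (min_le_right _ _)
            _ = ε := ENNReal.ofReal_coe_nnreal

omit [IsProbabilityMeasure (ℙ : Measure Ω)] in
lemma aux_followup {m : ℕ} (sel : (Fin m → ℝ) → Finset (Fin m))
    (selMeas : @Measurable (Fin m → ℝ) (Finset (Fin m)) _ ⊤ sel)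
    (V : Ω → (Fin m → ℝ))
    (Q : Ω → ℝ) (hQ1 : ∀ ω, Q ω ≤ 1)
    (hst : ∀ t ∈ Icc (0:ℝ) 1, ℙ {ω | Q ω ≤ t} ≤ ENNReal.ofReal t)
    (indep : IndepFun Q V ℙ)
    (D : Set (Fin m → ℝ)) (hD : MeasurableSet D)
    (b : ℝ) (hb : 0 ≤ b) (j : Fin m) :
    ℙ {ω | j ∈ sel (V ω) ∧ V ω ∈ D ∧ Q ω ≤ b / ((sel (V ω)).card : ℝ)} ≤
    ∑ r : Finset (Fin m), (if j ∈ r then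
      ℙ (V ⁻¹' (D ∩ sel ⁻¹' {r})) * ENNReal.ofReal (b / (r.card : ℝ))
      else 0) := by
  classical
  set E : Set Ω := {ω | j ∈ sel (V ω) ∧ V ω ∈ D ∧ Q ω ≤ b / ((sel (V ω)).card : ℝ)} with hE
  have hcover : E ⊆ ⋃ r : Finset (Fin m), E ∩ {ω | sel (V ω) = r} := by
    intro ω hω
    exact mem_iUnion.mpr ⟨sel (V ω), hω, rfl⟩
  calc ℙ E ≤ ℙ (⋃ r : Finset (Fin m), E ∩ {ω | sel (V ω) = r}) := measure_mono hcover
    _ ≤ ∑ r : Finset (Fin m), ℙ (E ∩ {ω | sel (V ω) = r}) := measure_iUnion_fintype_le _ _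
    _ ≤ _ := by
        apply Finset.sum_le_sum
        intro r _
        by_cases hjr : j ∈ r
        · simp only [hjr, if_true]
          have hsub : E ∩ {ω | sel (V ω) = r} ⊆
              Q ⁻¹' (Iic (b / (r.card : ℝ))) ∩ V ⁻¹' (D ∩ sel ⁻¹' {r}) := by
            rintro ω ⟨⟨_, hD', hQ'⟩, hr⟩
            simp only [mem_setOf_eq] at hr
            refine ⟨?_, hD', ?_⟩
            · simp only [mem_preimage, mem_Iic]
              rw [hr] at hQ'; exact hQ'
            · simp only [mem_preimage, mem_singleton_iff]
              exact hr
          have hmeasB : MeasurableSet (D ∩ sel ⁻¹' {r}) :=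
            hD.inter (selMeas (MeasurableSpace.measurableSet_top))
          have hprod := indep.measure_inter_preimage_eq_mul (Iic (b / (r.card : ℝ)))
            (D ∩ sel ⁻¹' {r}) measurableSet_Iic hmeasB
          calc ℙ (E ∩ {ω | sel (V ω) = r}) ≤
              ℙ (Q ⁻¹' (Iic (b / (r.card : ℝ))) ∩ V ⁻¹' (D ∩ sel ⁻¹' {r})) := measure_mono hsub
            _ = ℙ (Q ⁻¹' (Iic (b / (r.card : ℝ)))) * ℙ (V ⁻¹' (D ∩ sel ⁻¹' {r})) := hprod
            _ ≤ ENNReal.ofReal (b / (r.card : ℝ)) * ℙ (V ⁻¹' (D ∩ sel ⁻¹' {r})) := by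
                gcongr
                exact aux_stoch Q hQ1 hst (div_nonneg hb (Nat.cast_nonneg _))
            _ = ℙ (V ⁻¹' (D ∩ sel ⁻¹' {r})) * ENNReal.ofReal (b / (r.card : ℝ)) := mul_comm _ _
        · simp only [hjr, if_false]
          have : E ∩ {ω | sel (V ω) = r} = ∅ := by
            ext ω
            simp only [mem_inter_iff, mem_empty_iff_false, iff_false, not_and, hE,
              mem_setOf_eq]
            rintro ⟨hj, -, -⟩ hr
            exact hjr (hr ▸ hj)
          simp [this]

end Aux


/-- The upper bound (expression (1) of the paper, with `q` replaced by `α`) on the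
directional FWER of the level-`α` directional FWER replicability procedure. -/
theorem stmt8
    {Ω : Type} [MeasureSpace Ω] [IsProbabilityMeasure (ℙ : Measure Ω)]
    -- the number of features
    (m : ℕ) (hm : 1 ≤ m)
    -- the hypothesis configuration H_j = (H1 j, H2 j) ∈ {-1,0,1}²
    (H1 H2 : Fin m → ℤ)
    (hH1 : ∀ j, H1 j = -1 ∨ H1 j = 0 ∨ H1 j = 1)
    (hH2 : ∀ j, H2 j = -1 ∨ H2 j = 0 ∨ H2 j = 1)
    -- the left-sided p-values of the two studies (the right-sided ones are 1 - P1L, 1 - P2L)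
    (P1L P2L : Fin m → Ω → ℝ)
    (measP1 : ∀ j, Measurable (P1L j)) (measP2 : ∀ j, Measurable (P2L j))
    (range1 : ∀ j ω, P1L j ω ∈ Icc (0:ℝ) 1) (range2 : ∀ j ω, P2L j ω ∈ Icc (0:ℝ) 1)
    (neHalf : ∀ j, ∀ᵐ ω ∂ℙ, P1L j ω ≠ 1/2)
    -- null p-values are uniform
    (unif1 : ∀ j, H1 j = 0 → ∀ t ∈ Icc (0:ℝ) 1, ℙ {ω | P1L j ω ≤ t} = ENNReal.ofReal t)
    (unif2 : ∀ j, H2 j = 0 → ∀ t ∈ Icc (0:ℝ) 1, ℙ {ω | P2L j ω ≤ t} = ENNReal.ofReal t)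
    -- under a true right-sided (resp. left-sided) alternative, the left-sided (resp.
    -- right-sided) p-value is stochastically larger than or equal to uniform
    (stoch1R : ∀ j, H1 j = 1 → ∀ t ∈ Icc (0:ℝ) 1, ℙ {ω | P1L j ω ≤ t} ≤ ENNReal.ofReal t)
    (stoch2R : ∀ j, H2 j = 1 → ∀ t ∈ Icc (0:ℝ) 1, ℙ {ω | P2L j ω ≤ t} ≤ ENNReal.ofReal t)
    (stoch1L : ∀ j, H1 j = -1 →
      ∀ t ∈ Icc (0:ℝ) 1, ℙ {ω | 1 - P1L j ω ≤ t} ≤ ENNReal.ofReal t)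
    (stoch2L : ∀ j, H2 j = -1 →
      ∀ t ∈ Icc (0:ℝ) 1, ℙ {ω | 1 - P2L j ω ≤ t} ≤ ENNReal.ofReal t)
    -- the selection rule: a measurable, nonempty-set-valued function of the primary p-values
    (sel : (Fin m → ℝ) → Finset (Fin m))
    (selMeas : @Measurable (Fin m → ℝ) (Finset (Fin m)) _ ⊤ sel)
    (selNonempty : ∀ p, (sel p).Nonempty)
    -- the parameters l₀₀ ∈ [0,1) and c₂ ∈ (0,1)
    (l00 c2 : ℝ) (hl00 : l00 ∈ Ico (0:ℝ) 1) (hc2 : c2 ∈ Ioo (0:ℝ) 1)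
    -- the level of the procedure
    (α : ℝ) (hα : α ∈ Ioo (0:ℝ) 1)
    -- for features with H_j ∉ {(1,1),(−1,−1)}, the follow-up p-value is independent of
    -- the vector of primary-study p-values
    (indep : ∀ j, ¬ ((H1 j = 1 ∧ H2 j = 1) ∨ (H1 j = -1 ∧ H2 j = -1)) →
      IndepFun (P2L j) (fun ω => fun i => P1L i ω) ℙ) :
    (ℙ {ω | Stot H1 H2 sel P1L P2L (c1 l00 c2 α * α / (m : ℝ)) (c2 * α) ω <
        Rtot sel P1L P2L (c1 l00 c2 α * α / (m : ℝ)) (c2 * α) ω}).toReal ≤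
      c1 l00 c2 α * c2 * α ^ 2 *
        ((Finset.univ.filter
          (fun j => (H1 j, H2 j) ∈ ({(-1,0),(1,0),(0,0)} : Finset (ℤ × ℤ)))).card : ℝ) /
          (m : ℝ) +
      c1 l00 c2 α * α *
        ((Finset.univ.filter
          (fun j => (H1 j, H2 j) ∈
            ({(0,1),(0,-1),(-1,-1),(1,1),(-1,1),(1,-1)} : Finset (ℤ × ℤ)))).card : ℝ) /
          (m : ℝ) +
      c2 * α * ∫ ω, (((R1set sel P1L ω ∩ Finset.univ.filter
          (fun j => (H1 j, H2 j) ∈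
            ({(-1,0),(1,0),(-1,1),(1,-1),(0,1),(0,-1),(0,0)} : Finset (ℤ × ℤ)))).card : ℝ) /
          ((R1set sel P1L ω).card : ℝ)) ∂ℙ := by
    classical
  set a : ℝ := c1 l00 c2 α * α / (m : ℝ) with ha_def
  set b : ℝ := c2 * α with hb_def
  set Bf : Finset (Fin m) := Finset.univ.filter
    (fun j => (H1 j, H2 j) ∈ ({(0,1),(0,-1),(-1,-1),(1,1),(-1,1),(1,-1)} : Finset (ℤ × ℤ)))
    with hBf
  set Cf : Finset (Fin m) := Finset.univ.filter
    (fun j => (H1 j, H2 j) ∈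
      ({(-1,0),(1,0),(-1,1),(1,-1),(0,1),(0,-1),(0,0)} : Finset (ℤ × ℤ))) with hCf
  set V : Ω → (Fin m → ℝ) := fun ω => fun i => P1L i ω with hV
  have hVmeas : Measurable V := measurable_pi_lambda _ (fun i => measP1 i)
  set T : Finset (Fin m) → Set Ω := fun r => V ⁻¹' (sel ⁻¹' {r}) with hT
  have hTmeas : ∀ r, MeasurableSet (T r) :=
    fun r => hVmeas (selMeas MeasurableSpace.measurableSet_top)
  -- basic positivity facts
  have hc2α : 0 < c2 * α := mul_pos hc2.1 hα.1
  have hc2α1 : c2 * α < 1 := by nlinarith [hc2.2, hα.2, hc2.1, hα.1]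
  have hdenom : 0 < 1 - l00 * (1 - c2 * α) := by nlinarith [hl00.1, hl00.2]
  have hc1pos : 0 < c1 l00 c2 α := div_pos (by linarith [hc2.2]) hdenom
  have ha : 0 ≤ a := by
    rw [ha_def]
    exact div_nonneg (mul_nonneg hc1pos.le hα.1.le) (Nat.cast_nonneg m)
  have hb : 0 ≤ b := le_of_lt hc2α
  -- the per-feature error events
  set Err : Fin m → Set Ω := fun j => {ω |
    (RjL sel P1L P2L a b j ω = 1 ∧ ¬(H1 j = -1 ∧ H2 j = -1)) ∨
    (RjR sel P1L P2L a b j ω = 1 ∧ ¬(H1 j = 1 ∧ H2 j = 1))} with hErr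
  set βC : Fin m → ENNReal := fun j => ∑ r : Finset (Fin m),
    (if j ∈ r then ℙ (T r) * ENNReal.ofReal (b / (r.card : ℝ)) else 0) with hβC
  -- Step 1 : event inclusion
  have hincl : {ω | Stot H1 H2 sel P1L P2L a b ω < Rtot sel P1L P2L a b ω} ⊆
      ⋃ j, Err j := by
    intro ω hω
    by_contra hc
    simp only [mem_iUnion, not_exists] at hc
    have hR : Rtot sel P1L P2L a b ω ≤ Stot H1 H2 sel P1L P2L a b ω := by
      unfold Rtot Stot
      rw [Finset.sum_filter, Finset.sum_filter, ← Finset.sum_add_distrib]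
      apply Finset.sum_le_sum
      intro j _
      have h1 : RjL sel P1L P2L a b j ω = 1 → (H1 j = -1 ∧ H2 j = -1) := by
        intro h; by_contra hB
        exact hc j (Or.inl ⟨h, hB⟩)
      have h2 : RjR sel P1L P2L a b j ω = 1 → (H1 j = 1 ∧ H2 j = 1) := by
        intro h; by_contra hB
        exact hc j (Or.inr ⟨h, hB⟩)
      have hL01 : RjL sel P1L P2L a b j ω = 0 ∨ RjL sel P1L P2L a b j ω = 1 := by
        unfold RjL; split <;> simp
      have hR01 : RjR sel P1L P2L a b j ω = 0 ∨ RjR sel P1L P2L a b j ω = 1 := by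
        unfold RjR; split <;> simp
      have hA : RjL sel P1L P2L a b j ω ≤
          (if H1 j = -1 ∧ H2 j = -1 then RjL sel P1L P2L a b j ω else 0) := by
        rcases hL01 with h | h
        · simp [h]
        · rw [if_pos (h1 h)]
      have hB : RjR sel P1L P2L a b j ω ≤
          (if H1 j = 1 ∧ H2 j = 1 then RjR sel P1L P2L a b j ω else 0) := by
        rcases hR01 with h | h
        · simp [h]
        · rw [if_pos (h2 h)]
      calc RjL sel P1L P2L a b j ω + RjR sel P1L P2L a b j ω ≤
          (if H1 j = -1 ∧ H2 j = -1 then RjL sel P1L P2L a b j ω else 0) +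
          (if H1 j = 1 ∧ H2 j = 1 then RjR sel P1L P2L a b j ω else 0) := add_le_add hA hB
        _ = _ := add_comm _ _
    simp only [mem_setOf_eq] at hω
    omega
  -- Step 2 : the key per-feature bound
  have key : ∀ j, ℙ (Err j) ≤
      (if (H1 j, H2 j) ∈ ({(0,1),(0,-1),(-1,-1),(1,1),(-1,1),(1,-1)} : Finset (ℤ × ℤ))
        then ENNReal.ofReal a else 0) +
      (if (H1 j, H2 j) ∈ ({(-1,0),(1,0),(-1,1),(1,-1),(0,1),(0,-1),(0,0)} : Finset (ℤ × ℤ))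
        then βC j else 0) := by
    intro j
    set DL : Set (Fin m → ℝ) := {x | x j < 1 - x j} with hDL
    have hDLmeas : MeasurableSet DL :=
      measurableSet_lt (measurable_pi_apply j) (measurable_const.sub (measurable_pi_apply j))
    -- extraction of the claim conditions
    have hcondL : ∀ ω, RjL sel P1L P2L a b j ω = 1 →
        Claim sel P1L P2L a b j ω ∧ P1L j ω < 1 - P1L j ω := by
      intro ω h
      by_contra hcc
      rw [RjL, if_neg hcc] at h
      exact one_ne_zero h.symm
    have hcondR : ∀ ω, RjR sel P1L P2L a b j ω = 1 →
        Claim sel P1L P2L a b j ω ∧ ¬ (P1L j ω < 1 - P1L j ω) := by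
      intro ω h
      by_contra hcc
      rw [RjR, if_neg hcc] at h
      exact one_ne_zero h.symm
    -- primary-study inclusions
    have hEL_P : {ω | RjL sel P1L P2L a b j ω = 1} ⊆ {ω | P1L j ω ≤ a} := by
      intro ω h
      obtain ⟨⟨_, hp1, _⟩, hdir⟩ := hcondL ω h
      have hmin : min (P1L j ω) (1 - P1L j ω) = P1L j ω := min_eq_left hdir.le
      simp only [p1', hmin] at hp1
      exact hp1
    have hER_P : {ω | RjR sel P1L P2L a b j ω = 1} ⊆ {ω | 1 - P1L j ω ≤ a} := by
      intro ω h
      obtain ⟨⟨_, hp1, _⟩, hdir⟩ := hcondR ω h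
      have hmin : min (P1L j ω) (1 - P1L j ω) = 1 - P1L j ω := min_eq_right (not_lt.mp hdir)
      simp only [p1', hmin] at hp1
      exact hp1
    -- follow-up-study inclusions
    have hEL_F : {ω | RjL sel P1L P2L a b j ω = 1} ⊆
        {ω | j ∈ sel (V ω) ∧ V ω ∈ DL ∧ P2L j ω ≤ b / ((sel (V ω)).card : ℝ)} := by
      intro ω h
      obtain ⟨⟨hj, _, hp2⟩, hdir⟩ := hcondL ω h
      refine ⟨hj, hdir, ?_⟩
      simp only [p2', if_pos hdir] at hp2
      exact hp2
    have hER_F : {ω | RjR sel P1L P2L a b j ω = 1} ⊆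
        {ω | j ∈ sel (V ω) ∧ V ω ∈ DLᶜ ∧ 1 - P2L j ω ≤ b / ((sel (V ω)).card : ℝ)} := by
      intro ω h
      obtain ⟨⟨hj, _, hp2⟩, hdir⟩ := hcondR ω h
      refine ⟨hj, hdir, ?_⟩
      simp only [p2', if_neg hdir] at hp2
      exact hp2
    -- primary-study probability bounds
    have hPL : (∀ t ∈ Icc (0:ℝ) 1, ℙ {ω | P1L j ω ≤ t} ≤ ENNReal.ofReal t) →
        ℙ {ω | RjL sel P1L P2L a b j ω = 1} ≤ ENNReal.ofReal a :=
      fun hst => le_trans (measure_mono hEL_P)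
        (aux_stoch (P1L j) (fun ω => (range1 j ω).2) hst ha)
    have hPR : (∀ t ∈ Icc (0:ℝ) 1, ℙ {ω | 1 - P1L j ω ≤ t} ≤ ENNReal.ofReal t) →
        ℙ {ω | RjR sel P1L P2L a b j ω = 1} ≤ ENNReal.ofReal a :=
      fun hst => le_trans (measure_mono hER_P)
        (aux_stoch (fun ω => 1 - P1L j ω) (fun ω => by show (1:ℝ) - P1L j ω ≤ 1; linarith [(range1 j ω).1]) hst ha)
    -- follow-up probability bounds
    have hFL : (∀ t ∈ Icc (0:ℝ) 1, ℙ {ω | P2L j ω ≤ t} ≤ ENNReal.ofReal t) →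
        IndepFun (P2L j) V ℙ →
        ℙ {ω | RjL sel P1L P2L a b j ω = 1} ≤
        ∑ r : Finset (Fin m), (if j ∈ r then
          ℙ (V ⁻¹' (DL ∩ sel ⁻¹' {r})) * ENNReal.ofReal (b / (r.card : ℝ)) else 0) :=
      fun hst hind => le_trans (measure_mono hEL_F)
        (aux_followup sel selMeas V (P2L j) (fun ω => (range2 j ω).2) hst hind DL hDLmeas b hb j)
    have hFR : (∀ t ∈ Icc (0:ℝ) 1, ℙ {ω | 1 - P2L j ω ≤ t} ≤ ENNReal.ofReal t) →
        IndepFun (P2L j) V ℙ →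
        ℙ {ω | RjR sel P1L P2L a b j ω = 1} ≤
        ∑ r : Finset (Fin m), (if j ∈ r then
          ℙ (V ⁻¹' (DLᶜ ∩ sel ⁻¹' {r})) * ENNReal.ofReal (b / (r.card : ℝ)) else 0) := by
      intro hst hind
      have hind' : IndepFun (fun ω => 1 - P2L j ω) V ℙ :=
        hind.comp (φ := fun y : ℝ => 1 - y) (ψ := id)
          (measurable_const.sub measurable_id) measurable_id
      refine le_trans (measure_mono hER_F) ?_
      exact aux_followup sel selMeas V (fun ω => 1 - P2L j ω)
        (fun ω => by show (1:ℝ) - P2L j ω ≤ 1; linarith [(range2 j ω).1]) hst hind' DLᶜ hDLmeas.compl b hb j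
    -- dropping the direction event
    have hdrop : ∀ D' : Set (Fin m → ℝ),
        (∑ r : Finset (Fin m), (if j ∈ r then
          ℙ (V ⁻¹' (D' ∩ sel ⁻¹' {r})) * ENNReal.ofReal (b / (r.card : ℝ)) else 0)) ≤ βC j := by
      intro D'
      rw [hβC]
      apply Finset.sum_le_sum
      intro r _
      by_cases hjr : j ∈ r
      · simp only [hjr, if_true]
        exact mul_le_mul_left (measure_mono (preimage_mono inter_subset_right)) _
      · simp [hjr]
    -- combining the two directions for null follow-up hypotheses
    have hsplit : ∀ r : Finset (Fin m),
        ℙ (V ⁻¹' (DL ∩ sel ⁻¹' {r})) + ℙ (V ⁻¹' (DLᶜ ∩ sel ⁻¹' {r})) = ℙ (T r) := by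
      intro r
      have hdisj : Disjoint (V ⁻¹' (DL ∩ sel ⁻¹' {r})) (V ⁻¹' (DLᶜ ∩ sel ⁻¹' {r})) :=
        Disjoint.preimage V
          (Disjoint.mono inter_subset_left inter_subset_left disjoint_compl_right)
      have hmeas2 : MeasurableSet (V ⁻¹' (DLᶜ ∩ sel ⁻¹' {r})) :=
        hVmeas (hDLmeas.compl.inter (selMeas MeasurableSpace.measurableSet_top))
      rw [← measure_union hdisj hmeas2, ← preimage_union, ← union_inter_distrib_right,
        union_compl_self, univ_inter]
    have hLR : (∑ r : Finset (Fin m), (if j ∈ r then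
          ℙ (V ⁻¹' (DL ∩ sel ⁻¹' {r})) * ENNReal.ofReal (b / (r.card : ℝ)) else 0)) +
        (∑ r : Finset (Fin m), (if j ∈ r then
          ℙ (V ⁻¹' (DLᶜ ∩ sel ⁻¹' {r})) * ENNReal.ofReal (b / (r.card : ℝ)) else 0)) = βC j := by
      rw [hβC, ← Finset.sum_add_distrib]
      apply Finset.sum_congr rfl
      intro r _
      by_cases hjr : j ∈ r
      · simp only [hjr, if_true]
        rw [← add_mul, hsplit r]
      · simp [hjr]
    -- the union bound for the error event
    have hErr_sub : Err j ⊆ {ω | RjL sel P1L P2L a b j ω = 1} ∪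
        {ω | RjR sel P1L P2L a b j ω = 1} :=
      fun ω h => h.elim (fun h' => Or.inl h'.1) (fun h' => Or.inr h'.1)
    have hErr2 : ℙ (Err j) ≤ ℙ {ω | RjL sel P1L P2L a b j ω = 1} +
        ℙ {ω | RjR sel P1L P2L a b j ω = 1} :=
      le_trans (measure_mono hErr_sub) (measure_union_le _ _)
    -- now the case analysis
    rcases hH1 j with h1 | h1 | h1 <;> rcases hH2 j with h2 | h2 | h2
    -- case (-1,-1)
    · rw [if_pos (by rw [h1, h2]; decide), if_neg (by rw [h1, h2]; decide)]
      have hsub : Err j ⊆ {ω | RjR sel P1L P2L a b j ω = 1} := by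
        intro ω h
        rcases h with ⟨_, hne⟩ | ⟨h, _⟩
        · exact absurd ⟨h1, h2⟩ hne
        · exact h
      calc ℙ (Err j) ≤ ℙ {ω | RjR sel P1L P2L a b j ω = 1} := measure_mono hsub
        _ ≤ ENNReal.ofReal a := hPR (fun t ht => stoch1L j h1 t ht)
        _ ≤ ENNReal.ofReal a + 0 := le_add_of_nonneg_right zero_le
    -- case (-1,0) : follow-up null
    · rw [if_neg (by rw [h1, h2]; decide), if_pos (by rw [h1, h2]; decide)]
      have hind : IndepFun (P2L j) V ℙ := by
        rw [hV]
        exact indep j (by rintro (⟨e1, e2⟩ | ⟨e1, e2⟩) <;> rw [h1] at e1 <;> rw [h2] at e2 <;> omega)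
      have hstL : ∀ t ∈ Icc (0:ℝ) 1, ℙ {ω | P2L j ω ≤ t} ≤ ENNReal.ofReal t :=
        fun t ht => le_of_eq (unif2 j h2 t ht)
      have hstR := aux_unif_compl (P2L j) (measP2 j) (unif2 j h2)
      calc ℙ (Err j) ≤ _ + _ := hErr2
        _ ≤ _ := add_le_add (hFL hstL hind) (hFR hstR hind)
        _ = βC j := hLR
        _ = 0 + βC j := (zero_add _).symm
    -- case (-1,1)
    · rw [if_pos (by rw [h1, h2]; decide), if_pos (by rw [h1, h2]; decide)]
      have hind : IndepFun (P2L j) V ℙ := by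
        rw [hV]
        exact indep j (by rintro (⟨e1, e2⟩ | ⟨e1, e2⟩) <;> rw [h1] at e1 <;> rw [h2] at e2 <;> omega)
      have hstL : ∀ t ∈ Icc (0:ℝ) 1, ℙ {ω | P2L j ω ≤ t} ≤ ENNReal.ofReal t := stoch2R j h2
      calc ℙ (Err j) ≤ _ + _ := hErr2
        _ ≤ βC j + ENNReal.ofReal a :=
            add_le_add (le_trans (hFL hstL hind) (hdrop DL)) (hPR (stoch1L j h1))
        _ = ENNReal.ofReal a + βC j := add_comm _ _
    -- case (0,-1)
    · rw [if_pos (by rw [h1, h2]; decide), if_pos (by rw [h1, h2]; decide)]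
      have hind : IndepFun (P2L j) V ℙ := by
        rw [hV]
        exact indep j (by rintro (⟨e1, e2⟩ | ⟨e1, e2⟩) <;> rw [h1] at e1 <;> rw [h2] at e2 <;> omega)
      calc ℙ (Err j) ≤ _ + _ := hErr2
        _ ≤ ENNReal.ofReal a + βC j :=
            add_le_add (hPL (fun t ht => le_of_eq (unif1 j h1 t ht)))
              (le_trans (hFR (stoch2L j h2) hind) (hdrop DLᶜ))
    -- case (0,0) : both null
    · rw [if_neg (by rw [h1, h2]; decide), if_pos (by rw [h1, h2]; decide)]
      have hind : IndepFun (P2L j) V ℙ := by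
        rw [hV]
        exact indep j (by rintro (⟨e1, e2⟩ | ⟨e1, e2⟩) <;> rw [h1] at e1 <;> rw [h2] at e2 <;> omega)
      have hstL : ∀ t ∈ Icc (0:ℝ) 1, ℙ {ω | P2L j ω ≤ t} ≤ ENNReal.ofReal t :=
        fun t ht => le_of_eq (unif2 j h2 t ht)
      have hstR := aux_unif_compl (P2L j) (measP2 j) (unif2 j h2)
      calc ℙ (Err j) ≤ _ + _ := hErr2
        _ ≤ _ := add_le_add (hFL hstL hind) (hFR hstR hind)
        _ = βC j := hLR
        _ = 0 + βC j := (zero_add _).symm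
    -- case (0,1)
    · rw [if_pos (by rw [h1, h2]; decide), if_pos (by rw [h1, h2]; decide)]
      have hind : IndepFun (P2L j) V ℙ := by
        rw [hV]
        exact indep j (by rintro (⟨e1, e2⟩ | ⟨e1, e2⟩) <;> rw [h1] at e1 <;> rw [h2] at e2 <;> omega)
      have hstR := aux_unif_compl (P1L j) (measP1 j) (unif1 j h1)
      calc ℙ (Err j) ≤ _ + _ := hErr2
        _ ≤ βC j + ENNReal.ofReal a :=
            add_le_add (le_trans (hFL (stoch2R j h2) hind) (hdrop DL)) (hPR hstR)
        _ = ENNReal.ofReal a + βC j := add_comm _ _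
    -- case (1,-1)
    · rw [if_pos (by rw [h1, h2]; decide), if_pos (by rw [h1, h2]; decide)]
      have hind : IndepFun (P2L j) V ℙ := by
        rw [hV]
        exact indep j (by rintro (⟨e1, e2⟩ | ⟨e1, e2⟩) <;> rw [h1] at e1 <;> rw [h2] at e2 <;> omega)
      calc ℙ (Err j) ≤ _ + _ := hErr2
        _ ≤ ENNReal.ofReal a + βC j :=
            add_le_add (hPL (stoch1R j h1))
              (le_trans (hFR (stoch2L j h2) hind) (hdrop DLᶜ))
    -- case (1,0)
    · rw [if_neg (by rw [h1, h2]; decide), if_pos (by rw [h1, h2]; decide)]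
      have hind : IndepFun (P2L j) V ℙ := by
        rw [hV]
        exact indep j (by rintro (⟨e1, e2⟩ | ⟨e1, e2⟩) <;> rw [h1] at e1 <;> rw [h2] at e2 <;> omega)
      have hstL : ∀ t ∈ Icc (0:ℝ) 1, ℙ {ω | P2L j ω ≤ t} ≤ ENNReal.ofReal t :=
        fun t ht => le_of_eq (unif2 j h2 t ht)
      have hstR := aux_unif_compl (P2L j) (measP2 j) (unif2 j h2)
      calc ℙ (Err j) ≤ _ + _ := hErr2
        _ ≤ _ := add_le_add (hFL hstL hind) (hFR hstR hind)
        _ = βC j := hLR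
        _ = 0 + βC j := (zero_add _).symm
    -- case (1,1)
    · rw [if_pos (by rw [h1, h2]; decide), if_neg (by rw [h1, h2]; decide)]
      have hsub : Err j ⊆ {ω | RjL sel P1L P2L a b j ω = 1} := by
        intro ω h
        rcases h with ⟨h, _⟩ | ⟨_, hne⟩
        · exact h
        · exact absurd ⟨h1, h2⟩ hne
      calc ℙ (Err j) ≤ ℙ {ω | RjL sel P1L P2L a b j ω = 1} := measure_mono hsub
        _ ≤ ENNReal.ofReal a := hPL (stoch1R j h1)
        _ ≤ ENNReal.ofReal a + 0 := le_add_of_nonneg_right zero_le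
    -- Step 3 : summing up
  have hub : ℙ {ω | Stot H1 H2 sel P1L P2L a b ω < Rtot sel P1L P2L a b ω} ≤
      (Bf.card : ENNReal) * ENNReal.ofReal a +
      ∑ r : Finset (Fin m), ((r ∩ Cf).card : ENNReal) *
        (ℙ (T r) * ENNReal.ofReal (b / (r.card : ℝ))) := by
    calc ℙ {ω | Stot H1 H2 sel P1L P2L a b ω < Rtot sel P1L P2L a b ω}
        ≤ ℙ (⋃ j, Err j) := measure_mono hincl
      _ ≤ ∑ j, ℙ (Err j) := measure_iUnion_fintype_le _ _
      _ ≤ ∑ j : Fin m,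
          ((if (H1 j, H2 j) ∈ ({(0,1),(0,-1),(-1,-1),(1,1),(-1,1),(1,-1)} : Finset (ℤ × ℤ))
            then ENNReal.ofReal a else 0) +
          (if (H1 j, H2 j) ∈
              ({(-1,0),(1,0),(-1,1),(1,-1),(0,1),(0,-1),(0,0)} : Finset (ℤ × ℤ))
            then βC j else 0)) := Finset.sum_le_sum (fun j _ => key j)
      _ = (∑ j : Fin m,
          (if (H1 j, H2 j) ∈ ({(0,1),(0,-1),(-1,-1),(1,1),(-1,1),(1,-1)} : Finset (ℤ × ℤ))
            then ENNReal.ofReal a else 0)) +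
          ∑ j : Fin m, (if (H1 j, H2 j) ∈
              ({(-1,0),(1,0),(-1,1),(1,-1),(0,1),(0,-1),(0,0)} : Finset (ℤ × ℤ))
            then βC j else 0) := Finset.sum_add_distrib
      _ = (Bf.card : ENNReal) * ENNReal.ofReal a + ∑ j ∈ Cf, βC j := by
          rw [← Finset.sum_filter, ← Finset.sum_filter, Finset.sum_const, nsmul_eq_mul, ← hBf,
            ← hCf]
      _ = _ := by
          congr 1
          simp only [hβC]
          calc ∑ j ∈ Cf, ∑ r : Finset (Fin m),
              (if j ∈ r then ℙ (T r) * ENNReal.ofReal (b / (r.card : ℝ)) else 0)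
              = ∑ r : Finset (Fin m), ∑ j ∈ Cf,
                (if j ∈ r then ℙ (T r) * ENNReal.ofReal (b / (r.card : ℝ)) else 0) :=
                Finset.sum_comm
            _ = ∑ r : Finset (Fin m), ((r ∩ Cf).card : ENNReal) *
                (ℙ (T r) * ENNReal.ofReal (b / (r.card : ℝ))) := by
                apply Finset.sum_congr rfl
                intro r _
                rw [← Finset.sum_filter, Finset.sum_const, Finset.filter_mem_eq_inter,
                  nsmul_eq_mul, Finset.inter_comm]
  have hW_ne : (∑ r : Finset (Fin m), ((r ∩ Cf).card : ENNReal) *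
      (ℙ (T r) * ENNReal.ofReal (b / (r.card : ℝ)))) ≠ ⊤ := by
    refine ENNReal.sum_ne_top.mpr (fun r _ => ?_)
    exact ENNReal.mul_ne_top (ENNReal.natCast_ne_top _)
      (ENNReal.mul_ne_top (measure_ne_top _ _) ENNReal.ofReal_ne_top)
  have hB_ne : ((Bf.card : ENNReal) * ENNReal.ofReal a) ≠ ⊤ :=
    ENNReal.mul_ne_top (ENNReal.natCast_ne_top _) ENNReal.ofReal_ne_top
  have htot_ne : ((Bf.card : ENNReal) * ENNReal.ofReal a +
      ∑ r : Finset (Fin m), ((r ∩ Cf).card : ENNReal) *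
        (ℙ (T r) * ENNReal.ofReal (b / (r.card : ℝ)))) ≠ ⊤ :=
    ENNReal.add_ne_top.mpr ⟨hB_ne, hW_ne⟩
  have htoReal : ((Bf.card : ENNReal) * ENNReal.ofReal a +
      ∑ r : Finset (Fin m), ((r ∩ Cf).card : ENNReal) *
        (ℙ (T r) * ENNReal.ofReal (b / (r.card : ℝ)))).toReal =
      (Bf.card : ℝ) * a + ∑ r : Finset (Fin m), ((r ∩ Cf).card : ℝ) *
        ((ℙ (T r)).toReal * (b / (r.card : ℝ))) := by
    rw [ENNReal.toReal_add hB_ne hW_ne, ENNReal.toReal_mul, ENNReal.toReal_natCast,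
      ENNReal.toReal_ofReal ha,
      ENNReal.toReal_sum (fun r _ => ENNReal.mul_ne_top (ENNReal.natCast_ne_top _)
        (ENNReal.mul_ne_top (measure_ne_top _ _) ENNReal.ofReal_ne_top))]
    congr 1
    apply Finset.sum_congr rfl
    intro r _
    rw [ENNReal.toReal_mul, ENNReal.toReal_mul, ENNReal.toReal_natCast,
      ENNReal.toReal_ofReal (div_nonneg hb (Nat.cast_nonneg _))]
  have hI : (∫ ω, (((R1set sel P1L ω ∩ Cf).card : ℝ) / ((R1set sel P1L ω).card : ℝ)) ∂ℙ) =
      ∑ r : Finset (Fin m), (ℙ (T r)).toReal * (((r ∩ Cf).card : ℝ) / (r.card : ℝ)) := by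
    have hfun : (fun ω => (((R1set sel P1L ω ∩ Cf).card : ℝ) / ((R1set sel P1L ω).card : ℝ))) =
        fun ω => ∑ r : Finset (Fin m),
          Set.indicator (T r) (fun _ => (((r ∩ Cf).card : ℝ) / (r.card : ℝ))) ω := by
      funext ω
      have hone : (∑ r : Finset (Fin m),
          Set.indicator (T r) (fun _ => (((r ∩ Cf).card : ℝ) / (r.card : ℝ))) ω) =
          Set.indicator (T (sel (V ω)))
            (fun _ => ((((sel (V ω)) ∩ Cf).card : ℝ) / ((sel (V ω)).card : ℝ))) ω :=
        Finset.sum_eq_single_of_mem _ (Finset.mem_univ _) (fun r _ hr => by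
          apply Set.indicator_of_notMem
          intro hmem
          exact hr (Eq.symm (show sel (V ω) = r from hmem)))
      rw [hone, Set.indicator_of_mem (show ω ∈ T (sel (V ω)) from rfl)]
      rfl
    rw [hfun, integral_finset_sum _ (fun r _ => (integrable_const _).indicator (hTmeas r))]
    apply Finset.sum_congr rfl
    intro r _
    rw [integral_indicator_const _ (hTmeas r), smul_eq_mul, measureReal_def]
  have h0 : 0 ≤ c1 l00 c2 α * c2 * α ^ 2 *
      ((Finset.univ.filter
        (fun j => (H1 j, H2 j) ∈ ({(-1,0),(1,0),(0,0)} : Finset (ℤ × ℤ)))).card : ℝ) /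
      (m : ℝ) :=
    div_nonneg (mul_nonneg (mul_nonneg (mul_nonneg hc1pos.le hc2.1.le) (sq_nonneg α))
      (Nat.cast_nonneg _)) (Nat.cast_nonneg _)
  have hmain : (ℙ {ω | Stot H1 H2 sel P1L P2L a b ω < Rtot sel P1L P2L a b ω}).toReal ≤
      c1 l00 c2 α * α * (Bf.card : ℝ) / (m : ℝ) +
      b * ∫ ω, (((R1set sel P1L ω ∩ Cf).card : ℝ) / ((R1set sel P1L ω).card : ℝ)) ∂ℙ := by
    calc (ℙ {ω | Stot H1 H2 sel P1L P2L a b ω < Rtot sel P1L P2L a b ω}).toReal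
        ≤ ((Bf.card : ENNReal) * ENNReal.ofReal a +
          ∑ r : Finset (Fin m), ((r ∩ Cf).card : ENNReal) *
            (ℙ (T r) * ENNReal.ofReal (b / (r.card : ℝ)))).toReal :=
          ENNReal.toReal_mono htot_ne hub
      _ = (Bf.card : ℝ) * a + ∑ r : Finset (Fin m), ((r ∩ Cf).card : ℝ) *
          ((ℙ (T r)).toReal * (b / (r.card : ℝ))) := htoReal
      _ = c1 l00 c2 α * α * (Bf.card : ℝ) / (m : ℝ) +
          b * ∫ ω, (((R1set sel P1L ω ∩ Cf).card : ℝ) / ((R1set sel P1L ω).card : ℝ)) ∂ℙ := by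
          rw [hI, Finset.mul_sum, ha_def]
          congr 1
          · ring
          · apply Finset.sum_congr rfl
            intro r _
            ring
  linarith [hmain, h0]
end

section
/- Under the replicability setup with the directional FWER replicability procedure at level α ∈ (0,1), for every feature j with H_j = (0,0) such that P_{2j}^L is independent of the vector of primary-study p-values (P_{11}^L,…,P_{1m}^L), it holds that E(R_j^L + R_j^R) ≤ c₂α·E[ 1{j ∈ R₁}/|R₁| ] + (c₁(α)α/m)·c₂α. -/
open MeasureTheory ProbabilityTheory Set

/-- For a feature `j` with `H_j = (0,0)` whose follow-up p-value is independent of the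
primary-study p-values, the expected number of replicability claims of the level-`α`
directional FWER replicability procedure is at most
`c₂α·E[1{j ∈ R₁}/|R₁|] + (c₁(α)α/m)·c₂α`. -/
theorem stmt10
    {Ω : Type} [MeasureSpace Ω] [IsProbabilityMeasure (ℙ : Measure Ω)]
    -- the number of features
    (m : ℕ) (hm : 1 ≤ m)
    -- the hypothesis configuration H_j = (H1 j, H2 j) ∈ {-1,0,1}²
    (H1 H2 : Fin m → ℤ)
    (hH1 : ∀ j, H1 j = -1 ∨ H1 j = 0 ∨ H1 j = 1)
    (hH2 : ∀ j, H2 j = -1 ∨ H2 j = 0 ∨ H2 j = 1)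
    -- the left-sided p-values of the two studies (the right-sided ones are 1 - P1L, 1 - P2L)
    (P1L P2L : Fin m → Ω → ℝ)
    (measP1 : ∀ j, Measurable (P1L j)) (measP2 : ∀ j, Measurable (P2L j))
    (range1 : ∀ j ω, P1L j ω ∈ Icc (0:ℝ) 1) (range2 : ∀ j ω, P2L j ω ∈ Icc (0:ℝ) 1)
    (neHalf : ∀ j, ∀ᵐ ω ∂ℙ, P1L j ω ≠ 1/2)
    -- null p-values are uniform
    (unif1 : ∀ j, H1 j = 0 → ∀ t ∈ Icc (0:ℝ) 1, ℙ {ω | P1L j ω ≤ t} = ENNReal.ofReal t)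
    (unif2 : ∀ j, H2 j = 0 → ∀ t ∈ Icc (0:ℝ) 1, ℙ {ω | P2L j ω ≤ t} = ENNReal.ofReal t)
    -- under a true right-sided (resp. left-sided) alternative, the left-sided (resp.
    -- right-sided) p-value is stochastically larger than or equal to uniform
    (stoch1R : ∀ j, H1 j = 1 → ∀ t ∈ Icc (0:ℝ) 1, ℙ {ω | P1L j ω ≤ t} ≤ ENNReal.ofReal t)
    (stoch2R : ∀ j, H2 j = 1 → ∀ t ∈ Icc (0:ℝ) 1, ℙ {ω | P2L j ω ≤ t} ≤ ENNReal.ofReal t)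
    (stoch1L : ∀ j, H1 j = -1 →
      ∀ t ∈ Icc (0:ℝ) 1, ℙ {ω | 1 - P1L j ω ≤ t} ≤ ENNReal.ofReal t)
    (stoch2L : ∀ j, H2 j = -1 →
      ∀ t ∈ Icc (0:ℝ) 1, ℙ {ω | 1 - P2L j ω ≤ t} ≤ ENNReal.ofReal t)
    -- the selection rule: a measurable, nonempty-set-valued function of the primary p-values
    (sel : (Fin m → ℝ) → Finset (Fin m))
    (selMeas : @Measurable (Fin m → ℝ) (Finset (Fin m)) _ ⊤ sel)
    (selNonempty : ∀ p, (sel p).Nonempty)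
    -- the parameters l₀₀ ∈ [0,1) and c₂ ∈ (0,1)
    (l00 c2 : ℝ) (hl00 : l00 ∈ Ico (0:ℝ) 1) (hc2 : c2 ∈ Ioo (0:ℝ) 1)
    -- the level of the procedure
    (α : ℝ) (hα : α ∈ Ioo (0:ℝ) 1)
    -- a feature with H_j = (0,0) whose follow-up p-value is independent of the
    -- vector of primary-study p-values
    (j : Fin m) (hj : H1 j = 0 ∧ H2 j = 0)
    (indep : IndepFun (P2L j) (fun ω => fun i => P1L i ω) ℙ) :
    ∫ ω, ((RjL sel P1L P2L (c1 l00 c2 α * α / (m : ℝ)) (c2 * α) j ω : ℝ) +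
        (RjR sel P1L P2L (c1 l00 c2 α * α / (m : ℝ)) (c2 * α) j ω : ℝ)) ∂ℙ ≤
      c2 * α * ∫ ω, ({ω' | j ∈ R1set sel P1L ω'}.indicator
          (fun ω' => 1 / ((R1set sel P1L ω').card : ℝ)) ω) ∂ℙ +
        (c1 l00 c2 α * α / (m : ℝ)) * (c2 * α) := by

  classical
  obtain ⟨hj1, hj2⟩ := hj
  set a : ℝ := c1 l00 c2 α * α / (m : ℝ) with ha_def
  set b : ℝ := c2 * α with hb_def
  have hm0 : (0:ℝ) < (m:ℝ) := by exact_mod_cast Nat.lt_of_lt_of_le Nat.zero_lt_one hm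
  have hb_pos : 0 < b := mul_pos hc2.1 hα.1
  have ha_pos : 0 < a := by
    have hden : 0 < 1 - l00 * (1 - c2 * α) := by
      nlinarith [hl00.1, hl00.2, hc2.1, hc2.2, hα.1, hα.2]
    have hc1pos : 0 < c1 l00 c2 α := div_pos (by linarith [hc2.2]) hden
    exact div_pos (mul_pos hc1pos hα.1) hm0
  set X : Ω → ℝ := P2L j with hX_def
  set Y : Ω → (Fin m → ℝ) := fun ω i => P1L i ω with hY_def
  have hXmeas : Measurable X := measP2 j
  have hYmeas : Measurable Y := measurable_pi_lambda _ measP1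
  -- tail bounds for X
  have hXle : ∀ t : ℝ, 0 ≤ t → ℙ (X ⁻¹' Iic t) ≤ ENNReal.ofReal t := by
    intro t ht
    by_cases h1 : t ≤ 1
    · exact le_of_eq (unif2 j hj2 t ⟨ht, h1⟩)
    · calc ℙ (X ⁻¹' Iic t) ≤ 1 := prob_le_one
        _ = ENNReal.ofReal 1 := by simp
        _ ≤ ENNReal.ofReal t := ENNReal.ofReal_le_ofReal (le_of_not_ge h1)
  have hXge : ∀ t : ℝ, 0 ≤ t → ℙ (X ⁻¹' Ici (1 - t)) ≤ ENNReal.ofReal t := by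
    intro t ht
    by_cases h1 : 1 ≤ t
    · calc ℙ (X ⁻¹' Ici (1 - t)) ≤ 1 := prob_le_one
        _ = ENNReal.ofReal 1 := by simp
        _ ≤ ENNReal.ofReal t := ENNReal.ofReal_le_ofReal h1
    push_neg at h1
    apply ENNReal.le_of_forall_pos_le_add
    intro ε hε _
    set e : ℝ := min (ε : ℝ) (1 - t) with he_def
    have heε : e ≤ (ε : ℝ) := min_le_left _ _
    have het : e ≤ 1 - t := min_le_right _ _
    have he_pos : 0 < e := lt_min (by exact_mod_cast hε) (by linarith)
    have hse0 : (0:ℝ) ≤ 1 - t - e := by linarith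
    have hse1 : 1 - t - e ≤ 1 := by linarith
    have hdisj : Disjoint (X ⁻¹' Ici (1 - t)) (X ⁻¹' Iic (1 - t - e)) := by
      rw [Set.disjoint_left]
      intro ω h1' h2'
      simp only [Set.mem_preimage, Set.mem_Ici, Set.mem_Iic] at h1' h2'
      linarith
    have hfin2 : ℙ (X ⁻¹' Ici (1 - t)) + ℙ (X ⁻¹' Iic (1 - t - e)) ≤ 1 := by
      rw [← measure_union hdisj (hXmeas measurableSet_Iic)]
      exact prob_le_one
    have hB : ℙ (X ⁻¹' Iic (1 - t - e)) = ENNReal.ofReal (1 - t - e) :=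
      unif2 j hj2 _ ⟨hse0, hse1⟩
    rw [hB] at hfin2
    have hone : ENNReal.ofReal (t + e) + ENNReal.ofReal (1 - t - e) = 1 := by
      rw [← ENNReal.ofReal_add (by linarith) hse0]
      norm_num
    rw [← hone] at hfin2
    have h2 := (ENNReal.add_le_add_iff_right ENNReal.ofReal_ne_top).mp hfin2
    calc ℙ (X ⁻¹' Ici (1 - t)) ≤ ENNReal.ofReal (t + e) := h2
      _ = ENNReal.ofReal t + ENNReal.ofReal e := ENNReal.ofReal_add ht he_pos.le
      _ ≤ ENNReal.ofReal t + ε := by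
          refine add_le_add le_rfl ?_
          calc ENNReal.ofReal e ≤ ENNReal.ofReal (ε : ℝ) := ENNReal.ofReal_le_ofReal heε
            _ = (ε : ENNReal) := ENNReal.ofReal_coe_nnreal
  -- events on the primary side
  set Bset : ℕ → Set (Fin m → ℝ) := fun k => {p | j ∈ sel p ∧ (sel p).card = k} with hBset_def
  set SL : Set (Fin m → ℝ) := {p | p j < 1 - p j} with hSL_def
  have hBmeas : ∀ k, MeasurableSet (Bset k) := fun k =>
    selMeas (show MeasurableSet[⊤] {s : Finset (Fin m) | j ∈ s ∧ s.card = k} from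
      MeasurableSpace.measurableSet_top)
  have hSLmeas : MeasurableSet SL :=
    measurableSet_lt (measurable_pi_apply j) (measurable_const.sub (measurable_pi_apply j))
  have hBmeasΩ : ∀ k, MeasurableSet (Y ⁻¹' Bset k) := fun k => hYmeas (hBmeas k)
  -- the claim event
  set C : Set Ω := {ω | Claim sel P1L P2L a b j ω} with hC_def
  have hcardmeas : Measurable fun ω => ((sel (Y ω)).card : ℝ) :=
    (measurable_from_top (f := fun s : Finset (Fin m) => ((s.card : ℝ)))).comp
      (selMeas.comp hYmeas)
  have hp1meas : Measurable (p1' P1L j) := (measP1 j).min (measurable_const.sub (measP1 j))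
  have hp2meas : Measurable (p2' P1L P2L j) := by
    have hs : MeasurableSet {ω | P1L j ω < 1 - P1L j ω} :=
      measurableSet_lt (measP1 j) (measurable_const.sub (measP1 j))
    exact Measurable.ite hs (measP2 j) (measurable_const.sub (measP2 j))
  have hCmeas : MeasurableSet C := by
    have hCeq : C = (Y ⁻¹' (sel ⁻¹' {s | j ∈ s})) ∩
        ({ω | p1' P1L j ω ≤ a} ∩ {ω | p2' P1L P2L j ω ≤ b / ((sel (Y ω)).card : ℝ)}) := rfl
    rw [hCeq]
    exact (hYmeas (selMeas MeasurableSpace.measurableSet_top)).inter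
      ((measurableSet_le hp1meas measurable_const).inter
        (measurableSet_le hp2meas (measurable_const.div hcardmeas)))
  have hpt : (fun ω => ((RjL sel P1L P2L a b j ω : ℝ) + (RjR sel P1L P2L a b j ω : ℝ)))
      = C.indicator 1 := by
    funext ω
    by_cases hc : Claim sel P1L P2L a b j ω
    · by_cases hs : P1L j ω < 1 - P1L j ω <;>
        simp [RjL, RjR, hc, hs, hC_def, Set.indicator_apply, Set.mem_setOf_eq]
    · simp [RjL, RjR, hc, hC_def, Set.indicator_apply, Set.mem_setOf_eq]
  have hLHS : ∫ ω, ((RjL sel P1L P2L a b j ω : ℝ) + (RjR sel P1L P2L a b j ω : ℝ)) ∂ℙ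
      = (ℙ C).toReal := by
    rw [hpt]
    exact integral_indicator_one hCmeas
  have hcard_le : ∀ ω, (sel (Y ω)).card ≤ m := fun ω => by
    simpa using Finset.card_le_univ (sel (Y ω))
  -- covering of C
  set U : ℕ → Set Ω := fun k =>
    (Y ⁻¹' (Bset k ∩ SL) ∩ X ⁻¹' Iic (b / (k : ℝ))) ∪
      (Y ⁻¹' (Bset k ∩ SLᶜ) ∩ X ⁻¹' Ici (1 - b / (k : ℝ))) with hU_def
  have hCsub : C ⊆ ⋃ k ∈ Finset.Icc 1 m, U k := by
    intro ω hω
    obtain ⟨hmem, -, hp2⟩ := hω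
    have hp2' : p2' P1L P2L j ω ≤ b / ((sel (Y ω)).card : ℝ) := hp2
    have hk1 : 1 ≤ (sel (Y ω)).card := Finset.card_pos.mpr ⟨j, hmem⟩
    refine Set.mem_biUnion (Finset.mem_Icc.mpr ⟨hk1, hcard_le ω⟩) ?_
    by_cases hs : P1L j ω < 1 - P1L j ω
    · left
      refine ⟨⟨⟨hmem, rfl⟩, hs⟩, ?_⟩
      have h2 : p2' P1L P2L j ω = P2L j ω := if_pos hs
      rw [h2] at hp2'
      exact hp2'
    · right
      refine ⟨⟨⟨hmem, rfl⟩, hs⟩, ?_⟩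
      have h2 : p2' P1L P2L j ω = 1 - P2L j ω := if_neg hs
      rw [h2] at hp2'
      simp only [Set.mem_preimage, Set.mem_Ici]
      linarith
  have hUbound : ∀ k ∈ Finset.Icc 1 m,
      ℙ (U k) ≤ ENNReal.ofReal (b / (k : ℝ)) * ℙ (Y ⁻¹' Bset k) := by
    intro k hk
    have hbk : 0 ≤ b / (k : ℝ) := div_nonneg hb_pos.le (Nat.cast_nonneg k)
    have e1 : ℙ (Y ⁻¹' (Bset k ∩ SL) ∩ X ⁻¹' Iic (b / (k : ℝ)))
        = ℙ (X ⁻¹' Iic (b / (k : ℝ))) * ℙ (Y ⁻¹' (Bset k ∩ SL)) := by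
      rw [Set.inter_comm]
      exact indep.measure_inter_preimage_eq_mul _ _ measurableSet_Iic
        ((hBmeas k).inter hSLmeas)
    have e2 : ℙ (Y ⁻¹' (Bset k ∩ SLᶜ) ∩ X ⁻¹' Ici (1 - b / (k : ℝ)))
        = ℙ (X ⁻¹' Ici (1 - b / (k : ℝ))) * ℙ (Y ⁻¹' (Bset k ∩ SLᶜ)) := by
      rw [Set.inter_comm]
      exact indep.measure_inter_preimage_eq_mul _ _ measurableSet_Ici
        ((hBmeas k).inter hSLmeas.compl)
    have hsplit : ℙ (Y ⁻¹' (Bset k ∩ SL)) + ℙ (Y ⁻¹' (Bset k ∩ SLᶜ)) = ℙ (Y ⁻¹' Bset k) := by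
      have hcompl : Y ⁻¹' (Bset k ∩ SLᶜ) = Y ⁻¹' (Bset k) \ Y ⁻¹' SL := by
        ext ω
        simp [Set.mem_preimage, Set.mem_diff]
      rw [Set.preimage_inter, hcompl]
      exact measure_inter_add_diff _ (hYmeas hSLmeas)
    calc ℙ (U k) ≤ ℙ (Y ⁻¹' (Bset k ∩ SL) ∩ X ⁻¹' Iic (b / (k : ℝ)))
          + ℙ (Y ⁻¹' (Bset k ∩ SLᶜ) ∩ X ⁻¹' Ici (1 - b / (k : ℝ))) := measure_union_le _ _
      _ = ℙ (X ⁻¹' Iic (b / (k : ℝ))) * ℙ (Y ⁻¹' (Bset k ∩ SL))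
          + ℙ (X ⁻¹' Ici (1 - b / (k : ℝ))) * ℙ (Y ⁻¹' (Bset k ∩ SLᶜ)) := by rw [e1, e2]
      _ ≤ ENNReal.ofReal (b / (k : ℝ)) * ℙ (Y ⁻¹' (Bset k ∩ SL))
          + ENNReal.ofReal (b / (k : ℝ)) * ℙ (Y ⁻¹' (Bset k ∩ SLᶜ)) := by
            gcongr
            exacts [hXle _ hbk, hXge _ hbk]
      _ = ENNReal.ofReal (b / (k : ℝ)) * ℙ (Y ⁻¹' Bset k) := by rw [← mul_add, hsplit]
  have hCbound : ℙ C ≤ ∑ k ∈ Finset.Icc 1 m,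
      ENNReal.ofReal (b / (k : ℝ)) * ℙ (Y ⁻¹' Bset k) :=
    calc ℙ C ≤ ℙ (⋃ k ∈ Finset.Icc 1 m, U k) := measure_mono hCsub
      _ ≤ ∑ k ∈ Finset.Icc 1 m, ℙ (U k) := measure_biUnion_finset_le _ _
      _ ≤ ∑ k ∈ Finset.Icc 1 m, ENNReal.ofReal (b / (k : ℝ)) * ℙ (Y ⁻¹' Bset k) :=
          Finset.sum_le_sum hUbound
  -- the integral on the right-hand side
  have hindic : (fun ω => ({ω' | j ∈ R1set sel P1L ω'}.indicator
        (fun ω' => 1 / ((R1set sel P1L ω').card : ℝ)) ω))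
      = fun ω => ∑ k ∈ Finset.Icc 1 m, (Y ⁻¹' Bset k).indicator (fun _ => 1 / (k : ℝ)) ω := by
    funext ω
    by_cases hmem : j ∈ sel (Y ω)
    · have hk1 : 1 ≤ (sel (Y ω)).card := Finset.card_pos.mpr ⟨j, hmem⟩
      rw [Set.indicator_of_mem (show ω ∈ {ω' | j ∈ R1set sel P1L ω'} from hmem)]
      rw [Finset.sum_eq_single ((sel (Y ω)).card)]
      · rw [Set.indicator_of_mem (show ω ∈ Y ⁻¹' Bset ((sel (Y ω)).card) from ⟨hmem, rfl⟩)]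
        rfl
      · intro k _ hkne
        exact Set.indicator_of_notMem (fun hmem' => hkne hmem'.2.symm) _
      · intro hnot
        exact absurd (Finset.mem_Icc.mpr ⟨hk1, hcard_le ω⟩) hnot
    · rw [Set.indicator_of_notMem (show ω ∉ {ω' | j ∈ R1set sel P1L ω'} from hmem)]
      symm
      exact Finset.sum_eq_zero fun k _ =>
        Set.indicator_of_notMem (fun hmem' => hmem hmem'.1) _
  have hI : ∫ ω, ({ω' | j ∈ R1set sel P1L ω'}.indicator
        (fun ω' => 1 / ((R1set sel P1L ω').card : ℝ)) ω) ∂ℙ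
      = ∑ k ∈ Finset.Icc 1 m, (ℙ (Y ⁻¹' Bset k)).toReal * (1 / (k : ℝ)) := by
    rw [hindic, integral_finset_sum]
    · exact Finset.sum_congr rfl fun k _ => by
        rw [integral_indicator_const _ (hBmeasΩ k)]
        simp [smul_eq_mul, Measure.real]
    · exact fun k _ => (integrable_const _).indicator (hBmeasΩ k)
  -- put everything together
  have hfinB : ∀ k ∈ Finset.Icc 1 m,
      ENNReal.ofReal (b / (k : ℝ)) * ℙ (Y ⁻¹' Bset k) ≠ (⊤ : ENNReal) :=
    fun k _ => ENNReal.mul_ne_top ENNReal.ofReal_ne_top (measure_ne_top _ _)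
  have hsum_ne : (∑ k ∈ Finset.Icc 1 m,
      ENNReal.ofReal (b / (k : ℝ)) * ℙ (Y ⁻¹' Bset k)) ≠ (⊤ : ENNReal) := by
    rw [ENNReal.sum_ne_top]
    exact hfinB
  have key : (ℙ C).toReal ≤ b * ∑ k ∈ Finset.Icc 1 m,
      (ℙ (Y ⁻¹' Bset k)).toReal * (1 / (k : ℝ)) := by
    calc (ℙ C).toReal
        ≤ (∑ k ∈ Finset.Icc 1 m,
            ENNReal.ofReal (b / (k : ℝ)) * ℙ (Y ⁻¹' Bset k)).toReal :=
          ENNReal.toReal_mono hsum_ne hCbound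
      _ = ∑ k ∈ Finset.Icc 1 m, (b / (k : ℝ)) * (ℙ (Y ⁻¹' Bset k)).toReal := by
          rw [ENNReal.toReal_sum hfinB]
          exact Finset.sum_congr rfl fun k _ => by
            rw [ENNReal.toReal_mul,
              ENNReal.toReal_ofReal (div_nonneg hb_pos.le (Nat.cast_nonneg k))]
      _ = b * ∑ k ∈ Finset.Icc 1 m, (ℙ (Y ⁻¹' Bset k)).toReal * (1 / (k : ℝ)) := by
          rw [Finset.mul_sum]
          exact Finset.sum_congr rfl fun k _ => by ring
  rw [hLHS, hI]
  have hab : 0 ≤ a * b := mul_nonneg ha_pos.le hb_pos.le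
  linarith
end

section
/- Under the replicability setup with the directional FWER replicability procedure at level α ∈ (0,1), for every feature j with H_j ∈ {(0,1),(0,−1)} such that P_{2j}^L is independent of the vector of primary-study p-values (P_{11}^L,…,P_{1m}^L), it holds that E(R_j^L + R_j^R) ≤ c₁(α)α/m + c₂α·E[ 1{j ∈ R₁}/|R₁| ]. -/
open MeasureTheory ProbabilityTheory Set

section Aux
variable {Ω : Type} [MeasureSpace Ω] [IsProbabilityMeasure (ℙ : Measure Ω)]

lemma head_bound (X : Ω → ℝ) (a : ℝ) (ha : 0 ≤ a)
    (unif : ∀ t ∈ Icc (0:ℝ) 1, ℙ {ω | X ω ≤ t} = ENNReal.ofReal t) :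
    ℙ {ω | X ω ≤ a} ≤ ENNReal.ofReal a := by
  rcases le_or_gt a 1 with h | h
  · exact (unif a ⟨ha, h⟩).le
  · calc ℙ {ω | X ω ≤ a} ≤ 1 := prob_le_one
      _ = ENNReal.ofReal 1 := by simp
      _ ≤ ENNReal.ofReal a := ENNReal.ofReal_le_ofReal h.le

lemma tail_bound (X : Ω → ℝ) (measX : Measurable X) (a : ℝ) (ha : 0 ≤ a)
    (unif : ∀ t ∈ Icc (0:ℝ) 1, ℙ {ω | X ω ≤ t} = ENNReal.ofReal t) :
    ℙ {ω | 1 - X ω ≤ a} ≤ ENNReal.ofReal a := by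
  rcases le_or_gt 1 a with h | h
  · calc ℙ {ω | 1 - X ω ≤ a} ≤ 1 := prob_le_one
      _ = ENNReal.ofReal 1 := by simp
      _ ≤ ENNReal.ofReal a := ENNReal.ofReal_le_ofReal h
  · refine ENNReal.le_of_forall_pos_le_add fun ε hε _ => ?_
    set ε' : ℝ := min (ε:ℝ) ((1 - a)/2) with hε'def
    have hεR : (0:ℝ) < (ε:ℝ) := by exact_mod_cast hε
    have hε'pos : 0 < ε' := lt_min hεR (by linarith)
    have hε'lt : ε' < 1 - a := lt_of_le_of_lt (min_le_right _ _) (by linarith)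
    have ht : (1 - a - ε') ∈ Icc (0:ℝ) 1 := ⟨by linarith, by linarith⟩
    have hset : {ω | X ω ≤ 1 - a - ε'} ⊆ {ω | 1 - X ω ≤ a}ᶜ := by
      intro ω hω
      simp only [mem_compl_iff, mem_setOf_eq] at *
      linarith
    have hmeas : MeasurableSet {ω | 1 - X ω ≤ a} :=
      measurableSet_le (measurable_const.sub measX) measurable_const
    have h1 : ℙ {ω | 1 - X ω ≤ a} + ENNReal.ofReal (1 - a - ε') ≤ 1 := by
      calc ℙ {ω | 1 - X ω ≤ a} + ENNReal.ofReal (1 - a - ε')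
          = ℙ {ω | 1 - X ω ≤ a} + ℙ {ω | X ω ≤ 1 - a - ε'} := by rw [unif _ ht]
        _ ≤ ℙ {ω | 1 - X ω ≤ a} + ℙ {ω | 1 - X ω ≤ a}ᶜ :=
            add_le_add le_rfl (measure_mono hset)
        _ = 1 := prob_add_prob_compl hmeas
    have h2 : ℙ {ω | 1 - X ω ≤ a} ≤ 1 - ENNReal.ofReal (1 - a - ε') :=
      ENNReal.le_sub_of_add_le_right ENNReal.ofReal_ne_top h1
    have h3 : (1:ENNReal) - ENNReal.ofReal (1 - a - ε') ≤ ENNReal.ofReal (a + ε') := by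
      rw [tsub_le_iff_right, ← ENNReal.ofReal_add (by linarith) (by linarith)]
      have : a + ε' + (1 - a - ε') = 1 := by ring
      rw [this, ENNReal.ofReal_one]
    calc ℙ {ω | 1 - X ω ≤ a} ≤ ENNReal.ofReal (a + ε') := h2.trans h3
      _ ≤ ENNReal.ofReal a + ε := by
          rw [ENNReal.ofReal_add ha hε'pos.le]
          gcongr
          calc ENNReal.ofReal ε' ≤ ENNReal.ofReal ε := ENNReal.ofReal_le_ofReal (min_le_left _ _)
            _ = ε := ENNReal.ofReal_coe_nnreal

end Aux

/-- For a feature `j` with `H_j ∈ {(0,1),(0,−1)}` whose follow-up p-value is independent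
of the primary-study p-values, the expected number of replicability claims of the
level-`α` directional FWER replicability procedure is at most
`c₁(α)α/m + c₂α·E[1{j ∈ R₁}/|R₁|]`. -/
theorem stmt11
    {Ω : Type} [MeasureSpace Ω] [IsProbabilityMeasure (ℙ : Measure Ω)]
    -- the number of features
    (m : ℕ) (hm : 1 ≤ m)
    -- the hypothesis configuration H_j = (H1 j, H2 j) ∈ {-1,0,1}²
    (H1 H2 : Fin m → ℤ)
    (hH1 : ∀ j, H1 j = -1 ∨ H1 j = 0 ∨ H1 j = 1)
    (hH2 : ∀ j, H2 j = -1 ∨ H2 j = 0 ∨ H2 j = 1)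
    -- the left-sided p-values of the two studies (the right-sided ones are 1 - P1L, 1 - P2L)
    (P1L P2L : Fin m → Ω → ℝ)
    (measP1 : ∀ j, Measurable (P1L j)) (measP2 : ∀ j, Measurable (P2L j))
    (range1 : ∀ j ω, P1L j ω ∈ Icc (0:ℝ) 1) (range2 : ∀ j ω, P2L j ω ∈ Icc (0:ℝ) 1)
    (neHalf : ∀ j, ∀ᵐ ω ∂ℙ, P1L j ω ≠ 1/2)
    -- null p-values are uniform
    (unif1 : ∀ j, H1 j = 0 → ∀ t ∈ Icc (0:ℝ) 1, ℙ {ω | P1L j ω ≤ t} = ENNReal.ofReal t)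
    (unif2 : ∀ j, H2 j = 0 → ∀ t ∈ Icc (0:ℝ) 1, ℙ {ω | P2L j ω ≤ t} = ENNReal.ofReal t)
    -- under a true right-sided (resp. left-sided) alternative, the left-sided (resp.
    -- right-sided) p-value is stochastically larger than or equal to uniform
    (stoch1R : ∀ j, H1 j = 1 → ∀ t ∈ Icc (0:ℝ) 1, ℙ {ω | P1L j ω ≤ t} ≤ ENNReal.ofReal t)
    (stoch2R : ∀ j, H2 j = 1 → ∀ t ∈ Icc (0:ℝ) 1, ℙ {ω | P2L j ω ≤ t} ≤ ENNReal.ofReal t)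
    (stoch1L : ∀ j, H1 j = -1 →
      ∀ t ∈ Icc (0:ℝ) 1, ℙ {ω | 1 - P1L j ω ≤ t} ≤ ENNReal.ofReal t)
    (stoch2L : ∀ j, H2 j = -1 →
      ∀ t ∈ Icc (0:ℝ) 1, ℙ {ω | 1 - P2L j ω ≤ t} ≤ ENNReal.ofReal t)
    -- the selection rule: a measurable, nonempty-set-valued function of the primary p-values
    (sel : (Fin m → ℝ) → Finset (Fin m))
    (selMeas : @Measurable (Fin m → ℝ) (Finset (Fin m)) _ ⊤ sel)
    (selNonempty : ∀ p, (sel p).Nonempty)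
    -- the parameters l₀₀ ∈ [0,1) and c₂ ∈ (0,1)
    (l00 c2 : ℝ) (hl00 : l00 ∈ Ico (0:ℝ) 1) (hc2 : c2 ∈ Ioo (0:ℝ) 1)
    -- the level of the procedure
    (α : ℝ) (hα : α ∈ Ioo (0:ℝ) 1)
    -- a feature with H_j ∈ {(0,1),(0,−1)} whose follow-up p-value is independent of the
    -- vector of primary-study p-values
    (j : Fin m) (hj : H1 j = 0 ∧ (H2 j = 1 ∨ H2 j = -1))
    (indep : IndepFun (P2L j) (fun ω => fun i => P1L i ω) ℙ) :
    ∫ ω, ((RjL sel P1L P2L (c1 l00 c2 α * α / (m : ℝ)) (c2 * α) j ω : ℝ) +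
        (RjR sel P1L P2L (c1 l00 c2 α * α / (m : ℝ)) (c2 * α) j ω : ℝ)) ∂ℙ ≤
      c1 l00 c2 α * α / (m : ℝ) +
        c2 * α * ∫ ω, ({ω' | j ∈ R1set sel P1L ω'}.indicator
          (fun ω' => 1 / ((R1set sel P1L ω').card : ℝ)) ω) ∂ℙ := by
    classical
  obtain ⟨hj0, hj2⟩ := hj
  obtain ⟨hc2p, hc2l⟩ := hc2
  obtain ⟨hαp, hαl⟩ := hα
  obtain ⟨hl0, hl1⟩ := hl00
  set a : ℝ := c1 l00 c2 α * α / (m:ℝ) with ha_def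
  set b : ℝ := c2 * α with hb_def
  have hm1 : (1:ℝ) ≤ (m:ℝ) := by exact_mod_cast hm
  have hmpos : (0:ℝ) < m := by linarith
  have hc1pos : 0 < c1 l00 c2 α := by
    have h1 : 0 < c2 * α := mul_pos hc2p hαp
    have h2 : c2 * α < 1 := by nlinarith
    have h3 : l00 * (1 - c2 * α) ≤ l00 := mul_le_of_le_one_right hl0 (by linarith)
    have hden : 0 < 1 - l00 * (1 - c2 * α) := by linarith
    show 0 < (1 - c2) / (1 - l00 * (1 - c2 * α))
    exact div_pos (by linarith) hden
  have hapos : 0 < a := div_pos (mul_pos hc1pos hαp) hmpos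
  have hb0 : 0 < b := mul_pos hc2p hαp
  have hb1 : b ≤ 1 := by nlinarith
  set V : Ω → (Fin m → ℝ) := fun ω => fun i => P1L i ω with hVdef
  have measV : Measurable V := measurable_pi_lambda _ fun i => measP1 i
  have measCardR : Measurable (fun ω => ((R1set sel P1L ω).card : ℝ)) := by
    have h1 : @Measurable (Finset (Fin m)) ℝ ⊤ _ (fun s => ((s.card : ℝ))) :=
      fun t _ => MeasurableSpace.measurableSet_top
    exact h1.comp (selMeas.comp measV)
  have measMem : MeasurableSet {ω | j ∈ R1set sel P1L ω} :=
    (selMeas.comp measV) (MeasurableSpace.measurableSet_top (s := {s | j ∈ s}))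
  have measp1' : Measurable (p1' P1L j) := (measP1 j).min (measurable_const.sub (measP1 j))
  have measDset : MeasurableSet {ω | P1L j ω < 1 - P1L j ω} :=
    measurableSet_lt (measP1 j) (measurable_const.sub (measP1 j))
  have measp2' : Measurable (p2' P1L P2L j) :=
    Measurable.ite measDset (measP2 j) (measurable_const.sub (measP2 j))
  set C : Set Ω := {ω | Claim sel P1L P2L a b j ω} with hCdef
  have measC : MeasurableSet C := by
    have hCeq : C = {ω | j ∈ R1set sel P1L ω} ∩ ({ω | p1' P1L j ω ≤ a} ∩
        {ω | p2' P1L P2L j ω ≤ b / ((R1set sel P1L ω).card : ℝ)}) := by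
      ext ω
      simp [hCdef, Claim, mem_setOf_eq, mem_inter_iff, and_assoc]
    rw [hCeq]
    exact measMem.inter ((measurableSet_le measp1' measurable_const).inter
      (measurableSet_le measp2' (measurable_const.div measCardR)))
  set D : Set Ω := {ω | P1L j ω < 1 - P1L j ω} with hDdef
  have hLHS : ∫ ω, ((RjL sel P1L P2L a b j ω : ℝ) + (RjR sel P1L P2L a b j ω : ℝ)) ∂ℙ
      = (ℙ C).toReal := by
    have hfun : (fun ω => ((RjL sel P1L P2L a b j ω : ℝ) + (RjR sel P1L P2L a b j ω : ℝ)))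
        = C.indicator (fun _ => (1:ℝ)) := by
      funext ω
      by_cases hc : Claim sel P1L P2L a b j ω
      · by_cases hd : P1L j ω < 1 - P1L j ω <;>
          simp [RjL, RjR, hc, hd, hCdef, Set.indicator_apply]
      · simp [RjL, RjR, hc, hCdef, Set.indicator_apply]
    rw [hfun]
    rw [← measureReal_def]
    exact integral_indicator_one measC
  set S : ℕ → Set (Fin m → ℝ) := fun k => {p | j ∈ sel p ∧ (sel p).card = k} with hSdef
  have measS : ∀ k : ℕ, MeasurableSet (S k) := by
    intro k
    show MeasurableSet (sel ⁻¹' {s | j ∈ s ∧ s.card = k})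
    exact selMeas MeasurableSpace.measurableSet_top
  set A : ℕ → Set Ω := fun k => V ⁻¹' (S k) with hAdef
  have measA : ∀ k, MeasurableSet (A k) := fun k => measV (measS k)
  have hcardmem : ∀ ω, j ∈ R1set sel P1L ω → (R1set sel P1L ω).card ∈ Finset.Icc 1 m :=
    fun ω hmem => Finset.mem_Icc.2 ⟨Finset.card_pos.2 ⟨j, hmem⟩,
      le_trans (Finset.card_le_univ _) (by simp)⟩
  have hIg : ∫ ω, ({ω' | j ∈ R1set sel P1L ω'}.indicator
      (fun ω' => 1 / ((R1set sel P1L ω').card : ℝ)) ω) ∂ℙ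
      = ∑ k ∈ Finset.Icc 1 m, (ℙ (A k)).toReal * (1 / (k:ℝ)) := by
    have hgfun : (fun ω => ({ω' | j ∈ R1set sel P1L ω'}.indicator
        (fun ω' => 1 / ((R1set sel P1L ω').card : ℝ)) ω))
        = fun ω => ∑ k ∈ Finset.Icc 1 m, (A k).indicator (fun _ => 1/(k:ℝ)) ω := by
      funext ω
      by_cases hmem : j ∈ R1set sel P1L ω
      · have hzero : ∀ k ∈ Finset.Icc 1 m, k ≠ (R1set sel P1L ω).card →
            (A k).indicator (fun _ => 1/(k:ℝ)) ω = 0 := by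
          intro k _ hne
          refine Set.indicator_of_notMem ?_ _
          intro hA
          exact hne ((show j ∈ sel (V ω) ∧ (sel (V ω)).card = k from hA).2.symm)
        rw [Set.indicator_of_mem (show ω ∈ {ω' | j ∈ R1set sel P1L ω'} from hmem),
          Finset.sum_eq_single_of_mem ((R1set sel P1L ω).card) (hcardmem ω hmem) hzero]
        have hAm : j ∈ sel (V ω) ∧ (sel (V ω)).card = (R1set sel P1L ω).card :=
          ⟨hmem, rfl⟩
        exact (Set.indicator_of_mem (show ω ∈ A ((R1set sel P1L ω).card) from hAm)
          (fun _ => 1/(((R1set sel P1L ω).card : ℕ):ℝ))).symm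
      · rw [Set.indicator_of_notMem (show ω ∉ {ω' | j ∈ R1set sel P1L ω'} from hmem)]
        symm
        apply Finset.sum_eq_zero
        intro k _
        exact Set.indicator_of_notMem (fun hA => hmem hA.1) _
    rw [hgfun, integral_finset_sum _ (fun k _ => (integrable_const _).indicator (measA k))]
    refine Finset.sum_congr rfl fun k hk => ?_
    rw [integral_indicator_const _ (measA k), smul_eq_mul, measureReal_def]
  have keyB : ∀ T : ℕ → Set ℝ, (∀ k, MeasurableSet (T k)) →
      (∀ k, k ∈ Finset.Icc 1 m → ℙ ((P2L j) ⁻¹' (T k)) ≤ ENNReal.ofReal (b / (k:ℝ))) →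
      ∀ E : Set Ω, (∀ ω ∈ E, j ∈ R1set sel P1L ω ∧
        P2L j ω ∈ T ((R1set sel P1L ω).card)) →
      (ℙ E).toReal ≤ b * ∑ k ∈ Finset.Icc 1 m, (ℙ (A k)).toReal * (1 / (k:ℝ)) := by
    intro T hT hTb E hE
    have hsub : E ⊆ ⋃ k ∈ Finset.Icc 1 m, ((P2L j) ⁻¹' (T k) ∩ A k) := by
      intro ω hω
      obtain ⟨h1, h2⟩ := hE ω hω
      exact mem_biUnion (hcardmem ω h1) ⟨h2, h1, rfl⟩
    have hEbound : ℙ E ≤ ∑ k ∈ Finset.Icc 1 m, ENNReal.ofReal (b / (k:ℝ)) * ℙ (A k) := by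
      calc ℙ E ≤ ℙ (⋃ k ∈ Finset.Icc 1 m, ((P2L j) ⁻¹' (T k) ∩ A k)) := measure_mono hsub
        _ ≤ ∑ k ∈ Finset.Icc 1 m, ℙ ((P2L j) ⁻¹' (T k) ∩ A k) :=
            measure_biUnion_finset_le _ _
        _ = ∑ k ∈ Finset.Icc 1 m, ℙ ((P2L j) ⁻¹' (T k)) * ℙ (A k) :=
            Finset.sum_congr rfl fun k _ =>
              indep.measure_inter_preimage_eq_mul (T k) (S k) (hT k) (measS k)
        _ ≤ ∑ k ∈ Finset.Icc 1 m, ENNReal.ofReal (b / (k:ℝ)) * ℙ (A k) :=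
            Finset.sum_le_sum fun k hk => mul_le_mul_left (hTb k hk) _
    have hterm : ∀ k ∈ Finset.Icc 1 m,
        ENNReal.ofReal (b / (k:ℝ)) * ℙ (A k) ≠ ⊤ :=
      fun k _ => ENNReal.mul_ne_top ENNReal.ofReal_ne_top (measure_ne_top _ _)
    have hfin : (∑ k ∈ Finset.Icc 1 m, ENNReal.ofReal (b / (k:ℝ)) * ℙ (A k)) ≠ ⊤ :=
      (ENNReal.sum_lt_top.2 fun k hk => lt_top_iff_ne_top.2 (hterm k hk)).ne
    calc (ℙ E).toReal
        ≤ (∑ k ∈ Finset.Icc 1 m, ENNReal.ofReal (b / (k:ℝ)) * ℙ (A k)).toReal :=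
          ENNReal.toReal_mono hfin hEbound
      _ = ∑ k ∈ Finset.Icc 1 m, (b / (k:ℝ)) * (ℙ (A k)).toReal := by
          rw [ENNReal.toReal_sum hterm]
          refine Finset.sum_congr rfl fun k hk => ?_
          have hk1 : (1:ℝ) ≤ (k:ℝ) := by exact_mod_cast (Finset.mem_Icc.1 hk).1
          rw [ENNReal.toReal_mul, ENNReal.toReal_ofReal (div_nonneg hb0.le (by linarith))]
      _ ≤ b * ∑ k ∈ Finset.Icc 1 m, (ℙ (A k)).toReal * (1 / (k:ℝ)) := by
          rw [Finset.mul_sum]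
          exact Finset.sum_le_sum fun k hk => le_of_eq (by ring)
  have hsplit : (ℙ C).toReal ≤ (ℙ (C ∩ D)).toReal + (ℙ (C ∩ Dᶜ)).toReal := by
    have h1 : ℙ C ≤ ℙ (C ∩ D) + ℙ (C ∩ Dᶜ) := by
      calc ℙ C = ℙ ((C ∩ D) ∪ (C ∩ Dᶜ)) := by rw [inter_union_compl]
        _ ≤ ℙ (C ∩ D) + ℙ (C ∩ Dᶜ) := measure_union_le _ _
    calc (ℙ C).toReal ≤ (ℙ (C ∩ D) + ℙ (C ∩ Dᶜ)).toReal :=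
        ENNReal.toReal_mono (ENNReal.add_ne_top.2 ⟨measure_ne_top _ _, measure_ne_top _ _⟩) h1
      _ = _ := ENNReal.toReal_add (measure_ne_top _ _) (measure_ne_top _ _)
  rw [hLHS, hIg]
  have hbk01 : ∀ k, k ∈ Finset.Icc 1 m → b / (k:ℝ) ∈ Icc (0:ℝ) 1 := by
    intro k hk
    have hk1 : (1:ℝ) ≤ (k:ℝ) := by exact_mod_cast (Finset.mem_Icc.1 hk).1
    exact ⟨div_nonneg hb0.le (by linarith), le_trans (div_le_self hb0.le hk1) hb1⟩
  rcases hj2 with h2R | h2L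
  · -- H2 j = 1 : b-side on D, a-side on Dᶜ
    have hbs : (ℙ (C ∩ D)).toReal
        ≤ b * ∑ k ∈ Finset.Icc 1 m, (ℙ (A k)).toReal * (1/(k:ℝ)) := by
      apply keyB (fun k => Iic (b / (k:ℝ))) (fun k => measurableSet_Iic)
      · intro k hk
        exact stoch2R j h2R _ (hbk01 k hk)
      · intro ω hω
        obtain ⟨hωC, hωD⟩ := hω
        obtain ⟨hmem, -, hp2⟩ := hωC
        refine ⟨hmem, ?_⟩
        have hps : p2' P1L P2L j ω = P2L j ω := if_pos hωD
        rw [mem_Iic, ← hps]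
        exact hp2
    have has : (ℙ (C ∩ Dᶜ)).toReal ≤ a := by
      have hsub : C ∩ Dᶜ ⊆ {ω | 1 - P1L j ω ≤ a} := by
        intro ω hω
        obtain ⟨hωC, hωD⟩ := hω
        obtain ⟨-, hp1, -⟩ := hωC
        have hnd : ¬ (P1L j ω < 1 - P1L j ω) := hωD
        have hmin : p1' P1L j ω = 1 - P1L j ω := min_eq_right (not_lt.1 hnd)
        rw [hmin] at hp1
        exact hp1
      calc (ℙ (C ∩ Dᶜ)).toReal ≤ (ENNReal.ofReal a).toReal :=
          ENNReal.toReal_mono ENNReal.ofReal_ne_top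
            (le_trans (measure_mono hsub)
              (tail_bound (P1L j) (measP1 j) a hapos.le (unif1 j hj0)))
        _ = a := ENNReal.toReal_ofReal hapos.le
    linarith
  · -- H2 j = -1 : b-side on Dᶜ, a-side on D
    have hbs : (ℙ (C ∩ Dᶜ)).toReal
        ≤ b * ∑ k ∈ Finset.Icc 1 m, (ℙ (A k)).toReal * (1/(k:ℝ)) := by
      apply keyB (fun k => Ici (1 - b / (k:ℝ))) (fun k => measurableSet_Ici)
      · intro k hk
        have hset : (P2L j) ⁻¹' (Ici (1 - b / (k:ℝ))) = {ω | 1 - P2L j ω ≤ b / (k:ℝ)} := by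
          ext ω
          simp only [mem_preimage, mem_Ici, mem_setOf_eq]
          constructor <;> intro h <;> linarith
        rw [hset]
        exact stoch2L j h2L _ (hbk01 k hk)
      · intro ω hω
        obtain ⟨hωC, hωD⟩ := hω
        obtain ⟨hmem, -, hp2⟩ := hωC
        refine ⟨hmem, ?_⟩
        have hnd : ¬ (P1L j ω < 1 - P1L j ω) := hωD
        have hps : p2' P1L P2L j ω = 1 - P2L j ω := if_neg hnd
        rw [hps] at hp2
        simp only [mem_Ici]
        linarith
    have has : (ℙ (C ∩ D)).toReal ≤ a := by
      have hsub : C ∩ D ⊆ {ω | P1L j ω ≤ a} := by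
        intro ω hω
        obtain ⟨hωC, hωD⟩ := hω
        obtain ⟨-, hp1, -⟩ := hωC
        have hmin : p1' P1L j ω = P1L j ω := min_eq_left (le_of_lt hωD)
        rw [hmin] at hp1
        exact hp1
      calc (ℙ (C ∩ D)).toReal ≤ (ENNReal.ofReal a).toReal :=
          ENNReal.toReal_mono ENNReal.ofReal_ne_top
            (le_trans (measure_mono hsub)
              (head_bound (P1L j) a hapos.le (unif1 j hj0)))
        _ = a := ENNReal.toReal_ofReal hapos.le
    linarith
end
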